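/- arXiv:2511.06504 — 4 statements merged into one kernel-verified Lean document; each statement's English description precedes it below -/
import Mathlib

section
/- If α ∈ [0,1] is a lower bound for the approximation ratio of the Ranking greedy matching algorithm on all graphs admitting a perfect matching, then α is also a lower bound for the approximation ratio of Ranking on arbitrary graphs. -/
open List

variable {V : Type*}

/-- Whether vertex `u` is an endpoint of some edge in the partial matching `M`. -/
def isMatchedL [DecidableEq V] (M : List (V × V)) (u : V) : Bool :=
  M.any (fun p => p.1 = u || p.2 = u)

/-- One step of the Ranking algorithm: process vertex `u`.  If `u` is not forbidden and
not yet matched, it is matched to the first available neighbor in the order `order`. -/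
def rankingStepF [DecidableEq V] (G : SimpleGraph V) [DecidableRel G.Adj]
    (forbidden : List V) (order : List V) (M : List (V × V)) (u : V) : List (V × V) :=
  if u ∈ forbidden ∨ isMatchedL M u = true then M
  else
    match order.find? (fun w =>
        decide (G.Adj u w) && !(decide (w ∈ forbidden)) && !isMatchedL M w) with
    | some w => (u, w) :: M
    | none => M

/-- Partial matching of Ranking after processing the first `t` vertices of `order`. -/
def rankingPartialF [DecidableEq V] (G : SimpleGraph V) [DecidableRel G.Adj]
    (forbidden order : List V) (t : ℕ) : List (V × V) :=
  (order.take t).foldl (rankingStepF G forbidden order) []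

/-- The matching output by Ranking on the permutation given by the list `order`. -/
def rankingList [DecidableEq V] (G : SimpleGraph V) [DecidableRel G.Adj]
    (order : List V) : List (V × V) :=
  order.foldl (rankingStepF G [] order) []

/-- `u` is matched to `v` in the output of Ranking on `order`. -/
def matchedTo [DecidableEq V] (G : SimpleGraph V) [DecidableRel G.Adj]
    (order : List V) (u v : V) : Prop :=
  (u, v) ∈ rankingList G order ∨ (v, u) ∈ rankingList G order

/-- `u` is matched in the output of Ranking on `order`. -/
def isMatchedInRanking [DecidableEq V] (G : SimpleGraph V) [DecidableRel G.Adj]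
    (order : List V) (u : V) : Prop :=
  ∃ v, matchedTo G order u v

/-- The set of (unordered) edges of a list of matched pairs. -/
def matchEdges (L : List (V × V)) : Set (Sym2 V) := {e | ∃ p ∈ L, e = s(p.1, p.2)}
/-- `M` is a matching on the graph `G`. -/
def IsMatchingOn {V : Type*} (G : SimpleGraph V) (M : Set (Sym2 V)) : Prop :=
  M ⊆ G.edgeSet ∧ ∀ e₁ ∈ M, ∀ e₂ ∈ M, e₁ ≠ e₂ → ∀ v : V, v ∈ e₁ → v ∉ e₂

/-- `M` is a perfect matching on `G`: a matching covering every vertex. -/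
def IsPerfectMatchingOn {V : Type*} (G : SimpleGraph V) (M : Set (Sym2 V)) : Prop :=
  IsMatchingOn G M ∧ ∀ v : V, ∃ e ∈ M, v ∈ e

/-- The list of vertices in increasing rank order given by the bijection `e`. -/
def orderOfEquiv {V : Type*} [Fintype V] (e : V ≃ Fin (Fintype.card V)) : List V :=
  (List.finRange (Fintype.card V)).map e.symm

/-- The expected size of the matching output by Ranking on a uniformly random
permutation of the vertices of `G`. -/
noncomputable def expectedRankingSize {V : Type*} [Fintype V] [DecidableEq V]
    (G : SimpleGraph V) [DecidableRel G.Adj] : ℝ :=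
  (∑ e : V ≃ Fin (Fintype.card V), ((rankingList G (orderOfEquiv e)).length : ℝ)) /
    (Fintype.card (V ≃ Fin (Fintype.card V)) : ℝ)

set_option linter.unusedSectionVars false
set_option linter.unusedVariables false
set_option maxHeartbeats 1000000


section Basics
variable [DecidableEq V] (G : SimpleGraph V) [DecidableRel G.Adj]

lemma isMatchedL_cons_eq (u w x : V) (M : List (V × V)) :
    isMatchedL ((u, w) :: M) x = (decide (u = x) || decide (w = x) || isMatchedL M x) := by
  simp [isMatchedL, List.any_cons, Bool.or_assoc]

lemma stepF_skip {F ord : List V} {M : List (V × V)} {u : V}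
    (h : u ∈ F ∨ isMatchedL M u = true) :
    rankingStepF G F ord M u = M := by
  rw [rankingStepF, if_pos h]

lemma stepF_match {F ord : List V} {M : List (V × V)} {u w : V}
    (h : ¬(u ∈ F ∨ isMatchedL M u = true))
    (hf : ord.find? (fun w =>
        decide (G.Adj u w) && !(decide (w ∈ F)) && !isMatchedL M w) = some w) :
    rankingStepF G F ord M u = (u, w) :: M := by
  rw [rankingStepF, if_neg h, hf]

lemma stepF_nomatch {F ord : List V} {M : List (V × V)} {u : V}
    (h : ¬(u ∈ F ∨ isMatchedL M u = true))
    (hf : ord.find? (fun w =>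
        decide (G.Adj u w) && !(decide (w ∈ F)) && !isMatchedL M w) = none) :
    rankingStepF G F ord M u = M := by
  rw [rankingStepF, if_neg h, hf]

lemma find?_props {F ord : List V} {M : List (V × V)} {u w : V}
    (hf : ord.find? (fun w =>
        decide (G.Adj u w) && !(decide (w ∈ F)) && !isMatchedL M w) = some w) :
    G.Adj u w ∧ w ∉ F ∧ isMatchedL M w = false := by
  have := List.find?_some hf
  simpa [and_assoc] using this

lemma find?_or_point {l : List V} {pA pB : V → Bool} {d : V}
    (hd : pB d = false) (h : ∀ w, w ≠ d → pA w = pB w) :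
    l.find? pA = l.find? pB ∨ l.find? pA = some d := by
  induction l with
  | nil => left; rfl
  | cons a t ih =>
    by_cases had : a = d
    · subst had
      cases hpa : pA a with
      | true => right; simp [List.find?_cons, hpa]
      | false =>
        rw [List.find?_cons, hpa, List.find?_cons, hd]
        exact ih
    · have hab := h a had
      rw [List.find?_cons, List.find?_cons, ← hab]
      cases hpa : pA a with
      | true => left; rfl
      | false => exact ih

def RInv (F : List V) (v : V) (A B : List (V × V)) : Prop :=
  (A.length = B.length ∧ isMatchedL B v = false ∧
      ∀ u, isMatchedL A u = isMatchedL B u)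
  ∨ (∃ d, d ≠ v ∧ d ∉ F ∧ A.length = B.length + 1 ∧
      isMatchedL A v = true ∧ isMatchedL A d = true ∧
      isMatchedL B v = false ∧ isMatchedL B d = false ∧
      ∀ u, u ≠ v → u ≠ d → isMatchedL A u = isMatchedL B u)
  ∨ (∃ d, d ≠ v ∧ d ∉ F ∧ A.length = B.length ∧
      isMatchedL A v = true ∧ isMatchedL A d = false ∧
      isMatchedL B v = false ∧ isMatchedL B d = true ∧
      ∀ u, u ≠ v → u ≠ d → isMatchedL A u = isMatchedL B u)

end Basics
section StepLemma
variable [DecidableEq V] (G : SimpleGraph V) [DecidableRel G.Adj]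

lemma RInv_step (F : List V) (v : V) (ord : List V) (u : V) {A B : List (V × V)}
    (h : RInv F v A B) :
    RInv F v (rankingStepF G F ord A u) (rankingStepF G (v :: F) ord B u) := by
  rcases h with ⟨hlen, hBv, hAB⟩ | ⟨d, hdv, hdF, hlen, hAv, hAd, hBv, hBd, hAB⟩ |
    ⟨d, hdv, hdF, hlen, hAv, hAd, hBv, hBd, hAB⟩
  · -- Eq case
    have hAv : isMatchedL A v = false := (hAB v).trans hBv
    by_cases huv : u = v
    · subst huv
      rw [stepF_skip G (Or.inl (List.mem_cons_self (a := u) (l := F)))]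
      by_cases hvF : u ∈ F
      · rw [stepF_skip G (Or.inl hvF)]; exact Or.inl ⟨hlen, hBv, hAB⟩
      · have hguard : ¬(u ∈ F ∨ isMatchedL A u = true) :=
          not_or.mpr ⟨hvF, by simp [hAv]⟩
        cases hfind : ord.find? (fun w =>
            decide (G.Adj u w) && !(decide (w ∈ F)) && !isMatchedL A w) with
        | some w =>
          rw [stepF_match G hguard hfind]
          obtain ⟨hadj, hwF, hmw⟩ := find?_props G hfind
          refine Or.inr (Or.inl ⟨w, hadj.ne', hwF, by simp [hlen], ?_, ?_, hBv, ?_, ?_⟩)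
          · simp [isMatchedL_cons_eq]
          · simp [isMatchedL_cons_eq]
          · rw [← hAB w]; exact hmw
          · intro x hxv hxw
            rw [isMatchedL_cons_eq]
            simp [Ne.symm hxv, Ne.symm hxw, hAB x]
        | none =>
          rw [stepF_nomatch G hguard hfind]; exact Or.inl ⟨hlen, hBv, hAB⟩
    · by_cases huF : u ∈ F
      · rw [stepF_skip G (Or.inl huF),
          stepF_skip G (Or.inl (List.mem_cons_of_mem v huF))]
        exact Or.inl ⟨hlen, hBv, hAB⟩
      · by_cases hmau : isMatchedL A u = true
        · rw [stepF_skip G (Or.inr hmau), stepF_skip G (Or.inr ((hAB u) ▸ hmau))]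
          exact Or.inl ⟨hlen, hBv, hAB⟩
        · have hmau' : isMatchedL A u = false := Bool.eq_false_iff.mpr hmau
          have hmbu : isMatchedL B u = false := (hAB u) ▸ hmau'
          have hguardA : ¬(u ∈ F ∨ isMatchedL A u = true) :=
            not_or.mpr ⟨huF, hmau⟩
          have huvF : u ∉ v :: F := by
            rw [List.mem_cons, not_or]; exact ⟨huv, huF⟩
          have hguardB : ¬(u ∈ v :: F ∨ isMatchedL B u = true) :=
            not_or.mpr ⟨huvF, by simp [hmbu]⟩
          have hdvpt : (fun w => decide (G.Adj u w) && !(decide (w ∈ v :: F)) &&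
              !isMatchedL B w) v = false := by simp
          have hpoint : ∀ w, w ≠ v →
              (fun w => decide (G.Adj u w) && !(decide (w ∈ F)) && !isMatchedL A w) w =
              (fun w => decide (G.Adj u w) && !(decide (w ∈ v :: F)) &&
                !isMatchedL B w) w := by
            intro w hw
            simp [List.mem_cons, hw, hAB w]
          rcases find?_or_point (l := ord)
              (pA := fun w => decide (G.Adj u w) && !(decide (w ∈ F)) && !isMatchedL A w)
              (pB := fun w => decide (G.Adj u w) && !(decide (w ∈ v :: F)) &&
                !isMatchedL B w) (d := v) hdvpt hpoint with hEq | hv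
          · cases hfb : ord.find? (fun w =>
                decide (G.Adj u w) && !(decide (w ∈ v :: F)) && !isMatchedL B w) with
            | some w =>
              rw [stepF_match G hguardB hfb, stepF_match G hguardA (hEq.trans hfb)]
              obtain ⟨hadj, hwF', hmbw⟩ := find?_props G hfb
              rw [List.mem_cons, not_or] at hwF'
              obtain ⟨hwv, hwF⟩ := hwF'
              refine Or.inl ⟨by simp [hlen], ?_, ?_⟩
              · rw [isMatchedL_cons_eq]
                simp [Ne.symm huv, Ne.symm hwv, hBv, huv, hwv]
              · intro x
                rw [isMatchedL_cons_eq, isMatchedL_cons_eq, hAB x]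
            | none =>
              rw [stepF_nomatch G hguardB hfb, stepF_nomatch G hguardA (hEq.trans hfb)]
              exact Or.inl ⟨hlen, hBv, hAB⟩
          · rw [stepF_match G hguardA hv]
            obtain ⟨hadjv, hvF, _⟩ := find?_props G hv
            cases hfb : ord.find? (fun w =>
                decide (G.Adj u w) && !(decide (w ∈ v :: F)) && !isMatchedL B w) with
            | some w' =>
              rw [stepF_match G hguardB hfb]
              obtain ⟨hadj', hwF', hmbw'⟩ := find?_props G hfb
              rw [List.mem_cons, not_or] at hwF'
              obtain ⟨hw'v, hw'F⟩ := hwF'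
              refine Or.inr (Or.inr ⟨w', hw'v, hw'F, by simp [hlen], ?_, ?_, ?_, ?_, ?_⟩)
              · rw [isMatchedL_cons_eq]; simp
              · rw [isMatchedL_cons_eq]
                simp [hadj'.ne, Ne.symm hw'v, (hAB w') ▸ hmbw']
              · rw [isMatchedL_cons_eq]
                simp [Ne.symm huv, Ne.symm hw'v, hBv, huv, hw'v]
              · rw [isMatchedL_cons_eq]; simp
              · intro x hxv hxw
                rw [isMatchedL_cons_eq, isMatchedL_cons_eq]
                simp [Ne.symm hxv, Ne.symm hxw, hAB x]
            | none =>
              rw [stepF_nomatch G hguardB hfb]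
              refine Or.inr (Or.inl ⟨u, huv, huF, by simp [hlen], ?_, ?_, hBv, hmbu, ?_⟩)
              · rw [isMatchedL_cons_eq]; simp
              · rw [isMatchedL_cons_eq]; simp
              · intro x hxv hxu
                rw [isMatchedL_cons_eq]
                simp [Ne.symm hxv, Ne.symm hxu, hAB x]
  · -- P case
    by_cases huv : u = v
    · subst huv
      rw [stepF_skip G (Or.inr hAv), stepF_skip G (Or.inl (List.mem_cons_self (a := u) (l := F)))]
      exact Or.inr (Or.inl ⟨d, hdv, hdF, hlen, hAv, hAd, hBv, hBd, hAB⟩)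
    · by_cases hud : u = d
      · subst hud
        rw [stepF_skip G (Or.inr hAd)]
        have huvF : u ∉ v :: F := by rw [List.mem_cons, not_or]; exact ⟨hdv, hdF⟩
        have hguardB : ¬(u ∈ v :: F ∨ isMatchedL B u = true) :=
          not_or.mpr ⟨huvF, by simp [hBd]⟩
        cases hfb : ord.find? (fun w =>
            decide (G.Adj u w) && !(decide (w ∈ v :: F)) && !isMatchedL B w) with
        | some w =>
          rw [stepF_match G hguardB hfb]
          obtain ⟨hadj, hwF', hmbw⟩ := find?_props G hfb
          rw [List.mem_cons, not_or] at hwF'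
          obtain ⟨hwv, hwF⟩ := hwF'
          have hwu : w ≠ u := hadj.ne'
          have hmaw : isMatchedL A w = false := (hAB w hwv hwu).trans hmbw
          refine Or.inr (Or.inr ⟨w, hwv, hwF, by simp [hlen], hAv, hmaw, ?_, ?_, ?_⟩)
          · rw [isMatchedL_cons_eq]; simp [hdv, hwv, hBv]
          · rw [isMatchedL_cons_eq]; simp
          · intro x hxv hxw
            rw [isMatchedL_cons_eq]
            by_cases hxd : x = u
            · subst hxd; simp [hAd, hBd]
            · simp [Ne.symm hxw, Ne.symm hxd, hAB x hxv hxd]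
        | none =>
          rw [stepF_nomatch G hguardB hfb]
          exact Or.inr (Or.inl ⟨u, hdv, hdF, hlen, hAv, hAd, hBv, hBd, hAB⟩)
      · by_cases huF : u ∈ F
        · rw [stepF_skip G (Or.inl huF),
            stepF_skip G (Or.inl (List.mem_cons_of_mem v huF))]
          exact Or.inr (Or.inl ⟨d, hdv, hdF, hlen, hAv, hAd, hBv, hBd, hAB⟩)
        · by_cases hmau : isMatchedL A u = true
          · rw [stepF_skip G (Or.inr hmau),
              stepF_skip G (Or.inr ((hAB u huv hud) ▸ hmau))]
            exact Or.inr (Or.inl ⟨d, hdv, hdF, hlen, hAv, hAd, hBv, hBd, hAB⟩)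
          · have hmau' : isMatchedL A u = false := Bool.eq_false_iff.mpr hmau
            have hmbu : isMatchedL B u = false := (hAB u huv hud) ▸ hmau'
            have hguardA : ¬(u ∈ F ∨ isMatchedL A u = true) := not_or.mpr ⟨huF, hmau⟩
            have huvF : u ∉ v :: F := by rw [List.mem_cons, not_or]; exact ⟨huv, huF⟩
            have hguardB : ¬(u ∈ v :: F ∨ isMatchedL B u = true) :=
              not_or.mpr ⟨huvF, by simp [hmbu]⟩
            have hdpt : (fun w => decide (G.Adj u w) && !(decide (w ∈ F)) &&
                !isMatchedL A w) d = false := by simp [hAd]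
            have hpoint : ∀ w, w ≠ d →
                (fun w => decide (G.Adj u w) && !(decide (w ∈ v :: F)) &&
                  !isMatchedL B w) w =
                (fun w => decide (G.Adj u w) && !(decide (w ∈ F)) &&
                  !isMatchedL A w) w := by
              intro w hwd
              by_cases hwv : w = v
              · subst hwv; simp [hAv]
              · simp [List.mem_cons, hwv, hAB w hwv hwd]
            rcases find?_or_point (l := ord)
                (pA := fun w => decide (G.Adj u w) && !(decide (w ∈ v :: F)) &&
                  !isMatchedL B w)
                (pB := fun w => decide (G.Adj u w) && !(decide (w ∈ F)) &&
                  !isMatchedL A w) (d := d) hdpt hpoint with hEq | hfbd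
            · cases hfa : ord.find? (fun w =>
                  decide (G.Adj u w) && !(decide (w ∈ F)) && !isMatchedL A w) with
              | some w =>
                rw [stepF_match G hguardA hfa, stepF_match G hguardB (hEq.trans hfa)]
                obtain ⟨hadj, hwF, hmaw⟩ := find?_props G hfa
                have hwv : w ≠ v := by rintro rfl; rw [hmaw] at hAv; cases hAv
                have hwd : w ≠ d := by rintro rfl; rw [hmaw] at hAd; cases hAd
                refine Or.inr (Or.inl ⟨d, hdv, hdF, by simp [hlen], ?_, ?_, ?_, ?_, ?_⟩)
                · rw [isMatchedL_cons_eq]; simp [huv, hwv, hAv]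
                · rw [isMatchedL_cons_eq]; simp [hud, hwd, hAd]
                · rw [isMatchedL_cons_eq]; simp [huv, hwv, hBv]
                · rw [isMatchedL_cons_eq]; simp [hud, hwd, hBd]
                · intro x hxv hxd
                  rw [isMatchedL_cons_eq, isMatchedL_cons_eq, hAB x hxv hxd]
              | none =>
                rw [stepF_nomatch G hguardA hfa, stepF_nomatch G hguardB (hEq.trans hfa)]
                exact Or.inr (Or.inl ⟨d, hdv, hdF, hlen, hAv, hAd, hBv, hBd, hAB⟩)
            · rw [stepF_match G hguardB hfbd]
              cases hfa : ord.find? (fun w =>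
                  decide (G.Adj u w) && !(decide (w ∈ F)) && !isMatchedL A w) with
              | some w' =>
                rw [stepF_match G hguardA hfa]
                obtain ⟨hadj', hw'F, hmaw'⟩ := find?_props G hfa
                have hw'v : w' ≠ v := by rintro rfl; rw [hmaw'] at hAv; cases hAv
                have hw'd : w' ≠ d := by rintro rfl; rw [hmaw'] at hAd; cases hAd
                refine Or.inr (Or.inl ⟨w', hw'v, hw'F, by simp [hlen], ?_, ?_, ?_, ?_, ?_⟩)
                · rw [isMatchedL_cons_eq]; simp [huv, hw'v, hAv]
                · rw [isMatchedL_cons_eq]; simp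
                · rw [isMatchedL_cons_eq]; simp [huv, hdv, hBv]
                · rw [isMatchedL_cons_eq]
                  have hmbw' : isMatchedL B w' = false :=
                    (hAB w' hw'v hw'd).symm.trans hmaw'
                  simp [hadj'.ne, Ne.symm hw'd, hmbw']
                · intro x hxv hxw'
                  rw [isMatchedL_cons_eq, isMatchedL_cons_eq]
                  by_cases hxd : x = d
                  · subst hxd; simp [hud, Ne.symm hw'd, hAd]
                  · simp [Ne.symm hxw', Ne.symm hxd, hAB x hxv hxd]
              | none =>
                rw [stepF_nomatch G hguardA hfa]
                refine Or.inr (Or.inr ⟨u, huv, huF, by simp [hlen], hAv, hmau', ?_, ?_, ?_⟩)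
                · rw [isMatchedL_cons_eq]; simp [huv, hdv, hBv]
                · rw [isMatchedL_cons_eq]; simp
                · intro x hxv hxu
                  rw [isMatchedL_cons_eq]
                  by_cases hxd : x = d
                  · subst hxd; simp [hAd, Ne.symm hud]
                  · simp [Ne.symm hxu, Ne.symm hxd, hAB x hxv hxd]
  · -- E case
    by_cases huv : u = v
    · subst huv
      rw [stepF_skip G (Or.inr hAv), stepF_skip G (Or.inl (List.mem_cons_self (a := u) (l := F)))]
      exact Or.inr (Or.inr ⟨d, hdv, hdF, hlen, hAv, hAd, hBv, hBd, hAB⟩)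
    · by_cases hud : u = d
      · subst hud
        rw [stepF_skip G (Or.inr hBd)]
        have hguardA : ¬(u ∈ F ∨ isMatchedL A u = true) :=
          not_or.mpr ⟨hdF, by simp [hAd]⟩
        cases hfa : ord.find? (fun w =>
            decide (G.Adj u w) && !(decide (w ∈ F)) && !isMatchedL A w) with
        | some w =>
          rw [stepF_match G hguardA hfa]
          obtain ⟨hadj, hwF, hmaw⟩ := find?_props G hfa
          have hwu : w ≠ u := hadj.ne'
          have hwv : w ≠ v := by rintro rfl; rw [hmaw] at hAv; cases hAv
          have hmbw : isMatchedL B w = false := (hAB w hwv hwu).symm.trans hmaw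
          refine Or.inr (Or.inl ⟨w, hwv, hwF, by simp [hlen], ?_, ?_, hBv, hmbw, ?_⟩)
          · rw [isMatchedL_cons_eq]; simp [hdv, hwv, hAv]
          · rw [isMatchedL_cons_eq]; simp
          · intro x hxv hxw
            rw [isMatchedL_cons_eq]
            by_cases hxd : x = u
            · subst hxd; simp [hBd]
            · simp [Ne.symm hxd, Ne.symm hxw, hAB x hxv hxd]
        | none =>
          rw [stepF_nomatch G hguardA hfa]
          exact Or.inr (Or.inr ⟨u, hdv, hdF, hlen, hAv, hAd, hBv, hBd, hAB⟩)
      · by_cases huF : u ∈ F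
        · rw [stepF_skip G (Or.inl huF),
            stepF_skip G (Or.inl (List.mem_cons_of_mem v huF))]
          exact Or.inr (Or.inr ⟨d, hdv, hdF, hlen, hAv, hAd, hBv, hBd, hAB⟩)
        · by_cases hmau : isMatchedL A u = true
          · rw [stepF_skip G (Or.inr hmau),
              stepF_skip G (Or.inr ((hAB u huv hud) ▸ hmau))]
            exact Or.inr (Or.inr ⟨d, hdv, hdF, hlen, hAv, hAd, hBv, hBd, hAB⟩)
          · have hmau' : isMatchedL A u = false := Bool.eq_false_iff.mpr hmau
            have hmbu : isMatchedL B u = false := (hAB u huv hud) ▸ hmau'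
            have hguardA : ¬(u ∈ F ∨ isMatchedL A u = true) := not_or.mpr ⟨huF, hmau⟩
            have huvF : u ∉ v :: F := by rw [List.mem_cons, not_or]; exact ⟨huv, huF⟩
            have hguardB : ¬(u ∈ v :: F ∨ isMatchedL B u = true) :=
              not_or.mpr ⟨huvF, by simp [hmbu]⟩
            have hdpt : (fun w => decide (G.Adj u w) && !(decide (w ∈ v :: F)) &&
                !isMatchedL B w) d = false := by simp [hBd]
            have hpoint : ∀ w, w ≠ d →
                (fun w => decide (G.Adj u w) && !(decide (w ∈ F)) &&
                  !isMatchedL A w) w =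
                (fun w => decide (G.Adj u w) && !(decide (w ∈ v :: F)) &&
                  !isMatchedL B w) w := by
              intro w hwd
              by_cases hwv : w = v
              · subst hwv; simp [hAv]
              · simp [List.mem_cons, hwv, hAB w hwv hwd]
            rcases find?_or_point (l := ord)
                (pA := fun w => decide (G.Adj u w) && !(decide (w ∈ F)) &&
                  !isMatchedL A w)
                (pB := fun w => decide (G.Adj u w) && !(decide (w ∈ v :: F)) &&
                  !isMatchedL B w) (d := d) hdpt hpoint with hEq | hfad
            · cases hfb : ord.find? (fun w =>
                  decide (G.Adj u w) && !(decide (w ∈ v :: F)) && !isMatchedL B w) with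
              | some w =>
                rw [stepF_match G hguardB hfb, stepF_match G hguardA (hEq.trans hfb)]
                obtain ⟨hadj, hwF', hmbw⟩ := find?_props G hfb
                rw [List.mem_cons, not_or] at hwF'
                obtain ⟨hwv, hwF⟩ := hwF'
                have hwd : w ≠ d := by rintro rfl; rw [hmbw] at hBd; cases hBd
                refine Or.inr (Or.inr ⟨d, hdv, hdF, by simp [hlen], ?_, ?_, ?_, ?_, ?_⟩)
                · rw [isMatchedL_cons_eq]; simp [huv, hwv, hAv]
                · rw [isMatchedL_cons_eq]; simp [hud, hwd, hAd]
                · rw [isMatchedL_cons_eq]; simp [huv, hwv, hBv]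
                · rw [isMatchedL_cons_eq]; simp [hud, hwd, hBd]
                · intro x hxv hxd
                  rw [isMatchedL_cons_eq, isMatchedL_cons_eq, hAB x hxv hxd]
              | none =>
                rw [stepF_nomatch G hguardB hfb, stepF_nomatch G hguardA (hEq.trans hfb)]
                exact Or.inr (Or.inr ⟨d, hdv, hdF, hlen, hAv, hAd, hBv, hBd, hAB⟩)
            · rw [stepF_match G hguardA hfad]
              cases hfb : ord.find? (fun w =>
                  decide (G.Adj u w) && !(decide (w ∈ v :: F)) && !isMatchedL B w) with
              | some w' =>
                rw [stepF_match G hguardB hfb]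
                obtain ⟨hadj', hw'F', hmbw'⟩ := find?_props G hfb
                rw [List.mem_cons, not_or] at hw'F'
                obtain ⟨hw'v, hw'F⟩ := hw'F'
                have hw'd : w' ≠ d := by rintro rfl; rw [hmbw'] at hBd; cases hBd
                have hmaw' : isMatchedL A w' = false := (hAB w' hw'v hw'd).trans hmbw'
                refine Or.inr (Or.inr ⟨w', hw'v, hw'F, by simp [hlen], ?_, ?_, ?_, ?_, ?_⟩)
                · rw [isMatchedL_cons_eq]; simp [huv, hdv, hAv]
                · rw [isMatchedL_cons_eq]; simp [hadj'.ne, Ne.symm hw'd, hmaw']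
                · rw [isMatchedL_cons_eq]; simp [huv, hw'v, hBv]
                · rw [isMatchedL_cons_eq]; simp
                · intro x hxv hxw'
                  rw [isMatchedL_cons_eq, isMatchedL_cons_eq]
                  by_cases hxd : x = d
                  · subst hxd; simp [hBd]
                  · simp [Ne.symm hxd, Ne.symm hxw', hAB x hxv hxd]
              | none =>
                rw [stepF_nomatch G hguardB hfb]
                refine Or.inr (Or.inl ⟨u, huv, huF, by simp [hlen], ?_, ?_, hBv, hmbu, ?_⟩)
                · rw [isMatchedL_cons_eq]; simp [huv, hdv, hAv]
                · rw [isMatchedL_cons_eq]; simp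
                · intro x hxv hxu
                  rw [isMatchedL_cons_eq]
                  by_cases hxd : x = d
                  · subst hxd; simp [hud, hBd]
                  · simp [Ne.symm hxu, Ne.symm hxd, hAB x hxv hxd]

end StepLemma
section Fold
variable [DecidableEq V] (G : SimpleGraph V) [DecidableRel G.Adj]

lemma RInv_foldl (F : List V) (v : V) (ord : List V) (l : List V)
    {A B : List (V × V)} (h : RInv F v A B) :
    RInv F v (l.foldl (rankingStepF G F ord) A) (l.foldl (rankingStepF G (v :: F) ord) B) := by
  induction l generalizing A B with
  | nil => exact h
  | cons a t ih => exact ih (RInv_step G F v ord a h)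

lemma RInv_length {F : List V} {v : V} {A B : List (V × V)} (h : RInv F v A B) :
    B.length ≤ A.length := by
  rcases h with ⟨hlen, -⟩ | ⟨d, -, -, hlen, -⟩ | ⟨d, -, -, hlen, -⟩ <;> omega

lemma length_run_cons_le (F : List V) (v : V) (ord : List V) :
    (ord.foldl (rankingStepF G (v :: F) ord) []).length ≤
      (ord.foldl (rankingStepF G F ord) []).length := by
  refine RInv_length (RInv_foldl G F v ord ord ?_)
  exact Or.inl ⟨rfl, rfl, fun _ => rfl⟩

lemma length_run_le (F : List V) (ord : List V) :
    (ord.foldl (rankingStepF G F ord) []).length ≤ (rankingList G ord).length := by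
  induction F with
  | nil => exact le_refl _
  | cons v F ih => exact le_trans (length_run_cons_le G F v ord) ih

end Fold

section Simulation

variable [DecidableEq V] {p : V → Prop} [DecidablePred p]
variable (G : SimpleGraph V) [DecidableRel G.Adj]
variable (G' : SimpleGraph (Subtype p)) [DecidableRel G'.Adj]
variable (hadj : ∀ a b : Subtype p, G'.Adj a b ↔ G.Adj a.val b.val)
variable (F : List V) (hF : ∀ x, x ∈ F ↔ ¬ p x)

/-- lift a vertex to the subtype if possible -/
def subOpt (p : V → Prop) [DecidablePred p] (x : V) : Option (Subtype p) :=
  if h : p x then some ⟨x, h⟩ else none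

lemma isMatchedL_cons_eq' (a : V × V) (x : V) (M : List (V × V)) :
    isMatchedL (a :: M) x = (decide (a.1 = x) || decide (a.2 = x) || isMatchedL M x) := by
  simp [isMatchedL, List.any_cons, Bool.or_assoc]

lemma mL_map_val (M' : List (Subtype p × Subtype p)) (w : Subtype p) :
    isMatchedL (M'.map (Prod.map Subtype.val Subtype.val)) w.val = isMatchedL M' w := by
  induction M' with
  | nil => rfl
  | cons a t ih =>
    rw [List.map_cons, isMatchedL_cons_eq', isMatchedL_cons_eq', ih]
    simp [Prod.map, Subtype.ext_iff]

lemma mL_map_notp (M' : List (Subtype p × Subtype p)) {x : V} (hx : ¬ p x) :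
    isMatchedL (M'.map (Prod.map Subtype.val Subtype.val)) x = false := by
  induction M' with
  | nil => rfl
  | cons a t ih =>
    rw [List.map_cons, isMatchedL_cons_eq', ih]
    have h1 : a.1.val ≠ x := fun e => hx (e ▸ a.1.2)
    have h2 : a.2.val ≠ x := fun e => hx (e ▸ a.2.2)
    simp [h1, h2]

include hadj hF

lemma find?_corr (ordl : List V) (u' : Subtype p) (M' : List (Subtype p × Subtype p)) :
    ordl.find? (fun w => decide (G.Adj u'.val w) && !(decide (w ∈ F)) &&
        !isMatchedL (M'.map (Prod.map Subtype.val Subtype.val)) w) =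
      Option.map Subtype.val ((ordl.filterMap (subOpt p)).find? (fun w' =>
        decide (G'.Adj u' w') && !(decide (w' ∈ ([] : List (Subtype p)))) &&
          !isMatchedL M' w')) := by
  induction ordl with
  | nil => rfl
  | cons a t ih =>
    by_cases hpa : p a
    · have hsub : subOpt p a = some ⟨a, hpa⟩ := dif_pos hpa
      have hmem : (decide (a ∈ F)) = false :=
        decide_eq_false (fun hh => ((hF a).mp hh) hpa)
      have hM : isMatchedL (M'.map (Prod.map Subtype.val Subtype.val)) a =
          isMatchedL M' ⟨a, hpa⟩ := mL_map_val M' ⟨a, hpa⟩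
      have hdec : decide (G.Adj u'.val a) = decide (G'.Adj u' ⟨a, hpa⟩) :=
        decide_eq_decide.mpr (hadj u' ⟨a, hpa⟩).symm
      rw [List.filterMap_cons, hsub, List.find?_cons, List.find?_cons]
      have hpred : (decide (G.Adj u'.val a) && !(decide (a ∈ F)) &&
          !isMatchedL (M'.map (Prod.map Subtype.val Subtype.val)) a) =
          (decide (G'.Adj u' ⟨a, hpa⟩) &&
            !(decide ((⟨a, hpa⟩ : Subtype p) ∈ ([] : List (Subtype p)))) &&
            !isMatchedL M' ⟨a, hpa⟩) := by
        rw [hmem, hM, hdec]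
        simp
      rw [hpred]
      cases hv : (decide (G'.Adj u' ⟨a, hpa⟩) &&
            !(decide ((⟨a, hpa⟩ : Subtype p) ∈ ([] : List (Subtype p)))) &&
            !isMatchedL M' ⟨a, hpa⟩) with
      | true => rfl
      | false => exact ih
    · have hsub : subOpt p a = none := dif_neg hpa
      have hmem : (decide (a ∈ F)) = true := decide_eq_true ((hF a).mpr hpa)
      rw [List.filterMap_cons, hsub, List.find?_cons, hmem]
      have : (decide (G.Adj u'.val a) && !(true : Bool) &&
          !isMatchedL (M'.map (Prod.map Subtype.val Subtype.val)) a) = false := by simp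
      rw [this]
      exact ih

lemma step_corr_p (ord : List V) (M' : List (Subtype p × Subtype p)) (u : V) (hu : p u) :
    rankingStepF G F ord (M'.map (Prod.map Subtype.val Subtype.val)) u =
      (rankingStepF G' [] (ord.filterMap (subOpt p)) M' ⟨u, hu⟩).map
        (Prod.map Subtype.val Subtype.val) := by
  have huF : u ∉ F := fun hh => (hF u).mp hh hu
  have hM : isMatchedL (M'.map (Prod.map Subtype.val Subtype.val)) u =
      isMatchedL M' ⟨u, hu⟩ := mL_map_val M' ⟨u, hu⟩
  by_cases hm : isMatchedL M' ⟨u, hu⟩ = true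
  · rw [stepF_skip G (Or.inr (hM.trans hm)), stepF_skip G' (Or.inr hm)]
  · have hgA : ¬(u ∈ F ∨ isMatchedL (M'.map (Prod.map Subtype.val Subtype.val)) u = true) :=
      not_or.mpr ⟨huF, by rw [hM]; exact hm⟩
    have hgB : ¬((⟨u, hu⟩ : Subtype p) ∈ ([] : List (Subtype p)) ∨
        isMatchedL M' ⟨u, hu⟩ = true) := not_or.mpr ⟨List.not_mem_nil, hm⟩
    have hcorr := find?_corr G G' hadj F hF ord ⟨u, hu⟩ M'
    cases hfb : (ord.filterMap (subOpt p)).find? (fun w' =>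
        decide (G'.Adj ⟨u, hu⟩ w') && !(decide (w' ∈ ([] : List (Subtype p)))) &&
          !isMatchedL M' w') with
    | some w' =>
      rw [hfb] at hcorr
      rw [stepF_match G hgA hcorr, stepF_match G' hgB hfb]
      rfl
    | none =>
      rw [hfb] at hcorr
      rw [stepF_nomatch G hgA hcorr, stepF_nomatch G' hgB hfb]

lemma step_corr_np (ord : List V) (M : List (V × V)) (u : V) (hu : ¬ p u) :
    rankingStepF G F ord M u = M :=
  stepF_skip G (Or.inl ((hF u).mpr hu))

lemma fold_corr (ord : List V) (l : List V) (M' : List (Subtype p × Subtype p)) :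
    l.foldl (rankingStepF G F ord) (M'.map (Prod.map Subtype.val Subtype.val)) =
      ((l.filterMap (subOpt p)).foldl
        (rankingStepF G' [] (ord.filterMap (subOpt p))) M').map
          (Prod.map Subtype.val Subtype.val) := by
  induction l generalizing M' with
  | nil => rfl
  | cons a t ih =>
    by_cases hpa : p a
    · have hsub : subOpt p a = some ⟨a, hpa⟩ := dif_pos hpa
      rw [List.filterMap_cons, hsub, List.foldl_cons, List.foldl_cons,
        step_corr_p G G' hadj F hF ord M' a hpa]
      exact ih _
    · have hsub : subOpt p a = none := dif_neg hpa
      rw [List.filterMap_cons, hsub, List.foldl_cons,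
        step_corr_np G G' hadj F hF ord _ a hpa]
      exact ih _

lemma length_run_eq (ord : List V) :
    (ord.foldl (rankingStepF G F ord) []).length =
      (rankingList G' (ord.filterMap (subOpt p))).length := by
  have h := fold_corr G G' hadj F hF ord ord ([] : List (Subtype p × Subtype p))
  rw [List.map_nil] at h
  rw [h, rankingList, List.length_map]

lemma length_ranking_sub_le (ord : List V) :
    (rankingList G' (ord.filterMap (subOpt p))).length ≤ (rankingList G ord).length := by
  rw [← length_run_eq G G' hadj F hF ord]
  exact length_run_le G F ord

end Simulation
section Counting
variable [Fintype V] [DecidableEq V] (p : V → Prop) [DecidablePred p]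

def listOfP (e : V ≃ Fin (Fintype.card V)) : List (Subtype p) :=
  (orderOfEquiv e).filterMap (subOpt p)

lemma nodup_orderOfEquiv (e : V ≃ Fin (Fintype.card V)) : (orderOfEquiv e).Nodup :=
  (List.nodup_finRange _).map e.symm.injective

lemma mem_orderOfEquiv (e : V ≃ Fin (Fintype.card V)) (x : V) : x ∈ orderOfEquiv e :=
  List.mem_map.mpr ⟨e x, List.mem_finRange _, e.symm_apply_apply x⟩

lemma subOpt_eq_some {a : V} {b : Subtype p} (h : subOpt p a = some b) : b.val = a := by
  unfold subOpt at h
  by_cases hp : p a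
  · rw [dif_pos hp] at h
    cases h; rfl
  · rw [dif_neg hp] at h; cases h

lemma subOpt_self (w : Subtype p) : subOpt p w.val = some w := by
  unfold subOpt
  rw [dif_pos w.2]

lemma nodup_listOfP (e : V ≃ Fin (Fintype.card V)) : (listOfP p e).Nodup :=
  List.Nodup.filterMap
    (fun a a' b hb hb' => (subOpt_eq_some p hb).symm.trans (subOpt_eq_some p hb'))
    (nodup_orderOfEquiv e)

lemma mem_listOfP (e : V ≃ Fin (Fintype.card V)) (w : Subtype p) : w ∈ listOfP p e :=
  List.mem_filterMap.mpr ⟨w.val, mem_orderOfEquiv e w.val, subOpt_self p w⟩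

lemma length_listOfP (e : V ≃ Fin (Fintype.card V)) :
    (listOfP p e).length = Fintype.card (Subtype p) := by
  rw [← List.toFinset_card_of_nodup (nodup_listOfP p e)]
  have huniv : (listOfP p e).toFinset = Finset.univ :=
    Finset.eq_univ_iff_forall.mpr (fun w => List.mem_toFinset.mpr (mem_listOfP p e w))
  rw [huniv, Finset.card_univ]

noncomputable def PsiE (e : V ≃ Fin (Fintype.card V)) :
    Subtype p ≃ Fin (Fintype.card (Subtype p)) :=
  (List.Nodup.getEquivOfForallMemList (listOfP p e) (nodup_listOfP p e)
    (mem_listOfP p e)).symm.trans (finCongr (length_listOfP p e))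

lemma map_getEquiv_eq {α : Type*} [DecidableEq α] (l : List α) (nd : l.Nodup)
    (hm : ∀ x, x ∈ l) (m : ℕ) (hlen : l.length = m) :
    (List.finRange m).map
      (((List.Nodup.getEquivOfForallMemList l nd hm).symm.trans (finCongr hlen)).symm) = l := by
  subst hlen
  have hfun : ∀ i, (((List.Nodup.getEquivOfForallMemList l nd hm).symm.trans
      (finCongr rfl)).symm) i = l.get i := by
    intro i
    simp [List.Nodup.getEquivOfForallMemList, finCongr]
  rw [List.map_congr_left (fun i _ => hfun i)]
  exact List.map_get_finRange l

lemma orderOfEquiv_PsiE (e : V ≃ Fin (Fintype.card V)) :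
    orderOfEquiv (PsiE p e) = listOfP p e := by
  unfold orderOfEquiv PsiE
  exact map_getEquiv_eq _ _ _ _ _

lemma orderOfEquiv_injective {U : Type*} [Fintype U] :
    Function.Injective (orderOfEquiv (V := U)) := by
  intro s₁ s₂ h
  have h' : ∀ i : Fin (Fintype.card U), s₁.symm i = s₂.symm i := by
    intro i
    have h2 := congrArg (fun L => L[i.val]?) h
    simpa [orderOfEquiv, List.getElem?_map, i.isLt] using h2
  have hsymm : s₁.symm = s₂.symm := Equiv.ext h'
  have := congrArg Equiv.symm hsymm
  simpa using this

end Counting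
section Counting2
variable [Fintype V] [DecidableEq V] (p : V → Prop) [DecidablePred p]

noncomputable def permV (q : Equiv.Perm (Subtype p)) : Equiv.Perm V :=
  q.subtypeCongr (Equiv.refl _)

lemma filterMap_map_permV (q : Equiv.Perm (Subtype p)) (L : List V) :
    (L.map (permV p q)).filterMap (subOpt p) = (L.filterMap (subOpt p)).map q := by
  induction L with
  | nil => rfl
  | cons a t ih =>
    rw [List.map_cons, List.filterMap_cons, List.filterMap_cons]
    by_cases hp : p a
    · have h1 : permV p q a = (q ⟨a, hp⟩).val :=
        Equiv.Perm.subtypeCongr.left_apply _ _ hp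
      have h2 : subOpt p (permV p q a) = some (q ⟨a, hp⟩) := by
        rw [h1]; exact subOpt_self p _
      have h3 : subOpt p a = some ⟨a, hp⟩ := dif_pos hp
      rw [h2, h3, List.map_cons, ih]
    · have h1 : permV p q a = a := by
        have := Equiv.Perm.subtypeCongr.right_apply q (Equiv.refl _) hp
        simpa [permV] using this
      have h2 : subOpt p a = none := dif_neg hp
      rw [h1, h2, ih]

lemma listOfP_permV (q : Equiv.Perm (Subtype p)) (e : V ≃ Fin (Fintype.card V)) :
    listOfP p ((permV p q).symm.trans e) = (listOfP p e).map q := by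
  unfold listOfP
  have horder : orderOfEquiv ((permV p q).symm.trans e) =
      (orderOfEquiv e).map (permV p q) := by
    unfold orderOfEquiv
    rw [List.map_map]
    rfl
  rw [horder, filterMap_map_permV]

lemma map_orderOfEquiv (q : Equiv.Perm (Subtype p))
    (s : Subtype p ≃ Fin (Fintype.card (Subtype p))) :
    (orderOfEquiv s).map q = orderOfEquiv ((s.symm.trans q).symm) := by
  unfold orderOfEquiv
  rw [List.map_map]
  rfl

lemma PsiE_permV (q : Equiv.Perm (Subtype p)) (e : V ≃ Fin (Fintype.card V)) :
    PsiE p ((permV p q).symm.trans e) = ((PsiE p e).symm.trans q).symm := by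
  apply orderOfEquiv_injective
  rw [orderOfEquiv_PsiE, listOfP_permV, ← orderOfEquiv_PsiE p e, map_orderOfEquiv]

end Counting2
section Counting3
variable [Fintype V] [DecidableEq V] (p : V → Prop) [DecidablePred p]

lemma fiber_card (t₁ t₂ : Subtype p ≃ Fin (Fintype.card (Subtype p))) :
    Fintype.card {e : V ≃ Fin (Fintype.card V) // PsiE p e = t₁} =
      Fintype.card {e : V ≃ Fin (Fintype.card V) // PsiE p e = t₂} := by
  classical
  set q : Equiv.Perm (Subtype p) := t₁.trans t₂.symm with hq
  have ht : (t₁.symm.trans q).symm = t₂ := by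
    have h0 : t₁.symm.trans q = t₂.symm := Equiv.ext (fun i => by simp [hq])
    rw [h0, Equiv.symm_symm]
  have hGF : ∀ s : Subtype p ≃ Fin (Fintype.card (Subtype p)),
      ((((s.symm.trans q).symm).symm).trans q.symm).symm = s := fun s => by
    ext i; simp
  have hFinj : Function.Injective
      (fun s : Subtype p ≃ Fin (Fintype.card (Subtype p)) => (s.symm.trans q).symm) :=
    Function.LeftInverse.injective
      (g := fun t => ((t.symm).trans q.symm).symm) (fun s => hGF s)
  have hiff : ∀ e : V ≃ Fin (Fintype.card V),
      PsiE p e = t₁ ↔ PsiE p ((permV p q).symm.trans e) = t₂ := by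
    intro e
    rw [PsiE_permV]
    constructor
    · rintro rfl; exact ht
    · intro hh
      exact hFinj (hh.trans ht.symm)
  let Φ : (V ≃ Fin (Fintype.card V)) ≃ (V ≃ Fin (Fintype.card V)) :=
    ⟨fun e => (permV p q).symm.trans e, fun e => (permV p q).trans e,
      fun e => by ext x; simp, fun e => by ext x; simp⟩
  exact Fintype.card_congr (Equiv.subtypeEquiv Φ hiff)

lemma key_count (f : (Subtype p ≃ Fin (Fintype.card (Subtype p))) → ℝ) :
    (∑ e : V ≃ Fin (Fintype.card V), f (PsiE p e)) /
      (Fintype.card (V ≃ Fin (Fintype.card V)) : ℝ) =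
    (∑ t : Subtype p ≃ Fin (Fintype.card (Subtype p)), f t) /
      (Fintype.card (Subtype p ≃ Fin (Fintype.card (Subtype p))) : ℝ) := by
  classical
  set K : ℕ := Fintype.card
    {e : V ≃ Fin (Fintype.card V) // PsiE p e = Fintype.equivFin (Subtype p)} with hKdef
  have hKfib : ∀ t, (Finset.univ.filter
      (fun e : V ≃ Fin (Fintype.card V) => PsiE p e = t)).card = K := by
    intro t
    rw [← Fintype.card_subtype, hKdef]
    exact fiber_card p t (Fintype.equivFin (Subtype p))
  have hsum : ∑ e : V ≃ Fin (Fintype.card V), f (PsiE p e) =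
      ∑ t : Subtype p ≃ Fin (Fintype.card (Subtype p)), (K : ℝ) * f t := by
    rw [← Finset.sum_fiberwise_of_maps_to (g := PsiE p)
      (fun e _ => Finset.mem_univ (PsiE p e)) (fun e => f (PsiE p e))]
    refine Finset.sum_congr rfl (fun t _ => ?_)
    rw [Finset.sum_congr rfl (fun e he => by rw [(Finset.mem_filter.mp he).2]),
      Finset.sum_const, hKfib t, nsmul_eq_mul]
  have hcard : Fintype.card (V ≃ Fin (Fintype.card V)) =
      K * Fintype.card (Subtype p ≃ Fin (Fintype.card (Subtype p))) := by
    rw [← Finset.card_univ,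
      Finset.card_eq_sum_card_fiberwise (fun e _ => Finset.mem_univ (PsiE p e)),
      Finset.sum_congr rfl (fun t _ => hKfib t), Finset.sum_const, Finset.card_univ,
      smul_eq_mul, mul_comm]
  have hD : Fintype.card (V ≃ Fin (Fintype.card V)) ≠ 0 := by
    have : Nonempty (V ≃ Fin (Fintype.card V)) := ⟨Fintype.equivFin V⟩
    exact Fintype.card_ne_zero
  have hK0 : K ≠ 0 := by
    intro hzero
    rw [hzero, zero_mul] at hcard
    exact hD hcard
  rw [hsum, ← Finset.mul_sum, hcard]
  push_cast
  rw [mul_div_mul_left _ _ (Nat.cast_ne_zero.mpr hK0)]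

end Counting3

/-- If `α ∈ [0,1]` lower-bounds the approximation ratio of Ranking (expected matching
size at least `α` times the size of any matching, hence of a maximum matching) on every
graph admitting a perfect matching, then it does so on every graph. -/
theorem stmt4 (α : ℝ) (hα : α ∈ Set.Icc (0 : ℝ) 1)
    (h : ∀ (W : Type) [Fintype W] [DecidableEq W] (G : SimpleGraph W) [DecidableRel G.Adj],
        (∃ M : Set (Sym2 W), IsPerfectMatchingOn G M) →
        ∀ M : Set (Sym2 W), IsMatchingOn G M → α * M.ncard ≤ expectedRankingSize G) :
    ∀ (W : Type) [Fintype W] [DecidableEq W] (G : SimpleGraph W) [DecidableRel G.Adj],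
        ∀ M : Set (Sym2 W), IsMatchingOn G M → α * M.ncard ≤ expectedRankingSize G := by
  intro W _ _ G _ M hM
  classical
  set p : W → Prop := fun x => ∃ e ∈ M, x ∈ e with hp
  letI : DecidablePred p := Classical.decPred p
  let G' : SimpleGraph (Subtype p) := SimpleGraph.comap Subtype.val G
  letI : DecidableRel G'.Adj := fun a b => (inferInstance : Decidable (G.Adj a.val b.val))
  have hadj : ∀ a b : Subtype p, G'.Adj a b ↔ G.Adj a.val b.val := fun a b => Iff.rfl
  set M' : Set (Sym2 (Subtype p)) := (Sym2.map (Subtype.val : Subtype p → W)) ⁻¹' M with hM'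
  have hinj : Function.Injective (Sym2.map (Subtype.val : Subtype p → W)) :=
    Sym2.map.injective Subtype.val_injective
  have himg : M = Sym2.map (Subtype.val : Subtype p → W) '' M' := by
    apply Set.Subset.antisymm
    · intro e he
      induction e using Sym2.ind with
      | _ a b =>
        have pa : p a := ⟨s(a, b), he, Sym2.mem_mk_left a b⟩
        have pb : p b := ⟨s(a, b), he, Sym2.mem_mk_right a b⟩
        refine ⟨s(⟨a, pa⟩, ⟨b, pb⟩), ?_, ?_⟩
        · show Sym2.map _ s((⟨a, pa⟩ : Subtype p), (⟨b, pb⟩ : Subtype p)) ∈ M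
          rw [Sym2.map_pair_eq]
          exact he
        · rw [Sym2.map_pair_eq]
    · rintro e ⟨e', he', rfl⟩
      exact he'
  have hncard : M.ncard = M'.ncard := by
    rw [himg]
    exact Set.ncard_image_of_injective M' hinj
  have hM'm : IsMatchingOn G' M' := by
    constructor
    · intro e' he'
      induction e' using Sym2.ind with
      | _ a b =>
        have hmem : s(a.val, b.val) ∈ M := by
          have : Sym2.map Subtype.val s((a : Subtype p), (b : Subtype p)) ∈ M := he'
          rwa [Sym2.map_pair_eq] at this
        have hGadj := hM.1 hmem
        exact (SimpleGraph.mem_edgeSet G').mpr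
          ((hadj a b).mpr ((SimpleGraph.mem_edgeSet G).mp hGadj))
    · intro e₁ he₁ e₂ he₂ hne v hv1 hv2
      have h1 : Sym2.map Subtype.val e₁ ∈ M := he₁
      have h2 : Sym2.map Subtype.val e₂ ∈ M := he₂
      have hneq : Sym2.map Subtype.val e₁ ≠ Sym2.map Subtype.val e₂ :=
        fun e => hne (hinj e)
      have hv1' : v.val ∈ Sym2.map Subtype.val e₁ := Sym2.mem_map.mpr ⟨v, hv1, rfl⟩
      have hv2' : v.val ∈ Sym2.map Subtype.val e₂ := Sym2.mem_map.mpr ⟨v, hv2, rfl⟩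
      exact hM.2 _ h1 _ h2 hneq v.val hv1' hv2'
  have hperf : IsPerfectMatchingOn G' M' := by
    refine ⟨hM'm, fun w => ?_⟩
    obtain ⟨e, heM, hve⟩ := w.2
    revert heM hve
    induction e using Sym2.ind with
    | _ a b =>
      intro heM hve
      have pa : p a := ⟨s(a, b), heM, Sym2.mem_mk_left a b⟩
      have pb : p b := ⟨s(a, b), heM, Sym2.mem_mk_right a b⟩
      refine ⟨s(⟨a, pa⟩, ⟨b, pb⟩), ?_, ?_⟩
      · show Sym2.map _ s((⟨a, pa⟩ : Subtype p), (⟨b, pb⟩ : Subtype p)) ∈ M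
        rw [Sym2.map_pair_eq]
        exact heM
      · rcases Sym2.mem_iff.mp hve with hwa | hwb
        · exact Sym2.mem_iff.mpr (Or.inl (Subtype.ext hwa))
        · exact Sym2.mem_iff.mpr (Or.inr (Subtype.ext hwb))
  have hineq := h (Subtype p) G' ⟨M', hperf⟩ M' hM'm
  set F : List W := (Finset.univ.filter (fun x => ¬ p x)).toList with hFdef
  have hF : ∀ x, x ∈ F ↔ ¬ p x := by
    intro x
    rw [hFdef, Finset.mem_toList, Finset.mem_filter]
    simp
  have hERS' : expectedRankingSize G' =
      (∑ e : W ≃ Fin (Fintype.card W),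
        ((rankingList G' (listOfP p e)).length : ℝ)) /
        (Fintype.card (W ≃ Fin (Fintype.card W)) : ℝ) := by
    rw [expectedRankingSize,
      ← key_count p (fun t => ((rankingList G' (orderOfEquiv t)).length : ℝ))]
    congr 1
    refine Finset.sum_congr rfl (fun e _ => ?_)
    rw [orderOfEquiv_PsiE]
  have hN : (0 : ℝ) < (Fintype.card (W ≃ Fin (Fintype.card W)) : ℝ) := by
    have : Nonempty (W ≃ Fin (Fintype.card W)) := ⟨Fintype.equivFin W⟩
    exact_mod_cast Fintype.card_pos
  have hle : expectedRankingSize G' ≤ expectedRankingSize G := by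
    rw [hERS', expectedRankingSize]
    refine (div_le_div_iff_of_pos_right hN).mpr ?_
    refine Finset.sum_le_sum (fun e _ => ?_)
    exact_mod_cast length_ranking_sub_le G G' hadj F hF (orderOfEquiv e)
  calc α * M.ncard = α * M'.ncard := by rw [hncard]
    _ ≤ expectedRankingSize G' := hineq
    _ ≤ expectedRankingSize G := hle
end

section
/- Alternating path lemma with timestamps: Let σ be a permutation of V, σ_{-u*} the induced permutation with u* removed (treated as u* marked unavailable from the start), and t a timestamp in the greedy probing process. Then (1) R^t(σ) ⊕ R^t(σ_{-u*}) is an alternating path (u₀,…,u_k) with u₀ = u*, alternating between the two partial matchings starting with R^t(σ); (2) σ(u_i) < σ(u_{i+2}) for all i ≤ k−2; and (3) the sets of available vertices satisfy A^t(σ) ⊕ A^t(σ_{-u*}) = {u_k}. -/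
open List

variable {V : Type*}

/-- The list of probes of the greedy probing view: pairs `(u, v)` in increasing
lexicographic order of ranks. -/
def probeList (order : List V) : List (V × V) :=
  order.flatMap fun u => order.map fun v => (u, v)

/-- The partial matching after the first `t` probes, with the vertices in `forbidden`
marked unavailable from the start. -/
def probePartial [DecidableEq V] (G : SimpleGraph V) [DecidableRel G.Adj]
    (forbidden order : List V) (t : ℕ) : List (V × V) :=
  ((probeList order).take t).foldl
    (fun M p =>
      if (decide (G.Adj p.1 p.2) && !decide (p.1 ∈ forbidden) && !decide (p.2 ∈ forbidden)
          && !isMatchedL M p.1 && !isMatchedL M p.2) = true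
      then p :: M else M) []

/-- The set of available vertices after the first `t` probes. -/
def probeAvail [DecidableEq V] (G : SimpleGraph V) [DecidableRel G.Adj]
    (forbidden order : List V) (t : ℕ) : Set V :=
  {x | x ∈ order ∧ x ∉ forbidden ∧ isMatchedL (probePartial G forbidden order t) x = false}

section AuxAP

variable [DecidableEq V] (G : SimpleGraph V) [DecidableRel G.Adj]
set_option linter.unusedSectionVars false

/-- The probing condition. -/
def pcondAP (F : List V) (M : List (V × V)) (q : V × V) : Bool :=
  decide (G.Adj q.1 q.2) && !decide (q.1 ∈ F) && !decide (q.2 ∈ F)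
    && !isMatchedL M q.1 && !isMatchedL M q.2

lemma isMatchedL_iff (M : List (V × V)) (u : V) :
    isMatchedL M u = true ↔ ∃ p ∈ M, p.1 = u ∨ p.2 = u := by
  simp [isMatchedL, List.any_eq_true]

lemma probePartial_succ (F order : List V) (t : ℕ) :
    probePartial G F order (t + 1) =
      match (probeList order)[t]? with
      | some q => if pcondAP G F (probePartial G F order t) q = true
                  then q :: probePartial G F order t else probePartial G F order t
      | none => probePartial G F order t := by
  unfold probePartial
  rw [List.take_succ, List.foldl_append]
  cases h : (probeList order)[t]? with
  | none => simp [h]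
  | some q => simp [h, pcondAP]

lemma probePartial_succ_of_ge (F order : List V) {t : ℕ}
    (h : (probeList order).length ≤ t) :
    probePartial G F order (t + 1) = probePartial G F order t := by
  rw [probePartial_succ]
  rw [List.getElem?_eq_none h]

lemma probePartial_mono {F order : List V} {s t : ℕ} (h : s ≤ t) :
    ∀ x ∈ probePartial G F order s, x ∈ probePartial G F order t := by
  induction t with
  | zero => simp_all
  | succ t ih =>
    rcases Nat.lt_or_ge s (t+1) with h' | h'
    · intro x hx
      have hx' := ih (Nat.lt_succ_iff.mp h') x hx
      rw [probePartial_succ]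
      cases hq : (probeList order)[t]? with
      | none => exact hx'
      | some q =>
        dsimp only
        split
        · exact List.mem_cons_of_mem _ hx'
        · exact hx'
    · have : s = t + 1 := le_antisymm h h'
      subst this; exact fun x hx => hx

lemma isMatchedL_mono {F order : List V} {s t : ℕ} (h : s ≤ t) {x : V}
    (hx : isMatchedL (probePartial G F order s) x = true) :
    isMatchedL (probePartial G F order t) x = true := by
  rw [isMatchedL_iff] at hx ⊢
  obtain ⟨p, hp, hp'⟩ := hx
  exact ⟨p, probePartial_mono G h p hp, hp'⟩

/-- Every pair in the partial matching is adjacent and avoids forbidden vertices. -/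
lemma probePartial_prop (F order : List V) (t : ℕ) :
    ∀ p ∈ probePartial G F order t, G.Adj p.1 p.2 ∧ p.1 ∉ F ∧ p.2 ∉ F := by
  induction t with
  | zero => simp [probePartial]
  | succ t ih =>
    rw [probePartial_succ]
    cases hq : (probeList order)[t]? with
    | none => exact ih
    | some q =>
      dsimp only
      split
      · rename_i hc
        intro p hp
        rcases List.mem_cons.mp hp with rfl | hp
        · simp only [pcondAP, Bool.and_eq_true, decide_eq_true_eq, Bool.not_eq_true',
            decide_eq_false_iff_not] at hc
          exact ⟨hc.1.1.1.1, hc.1.1.1.2, hc.1.1.2⟩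
        · exact ih p hp
      · exact ih

/-- The matching property: distinct pairs share no endpoints, and pairs have distinct ends. -/
def goodM (M : List (V × V)) : Prop :=
  (∀ p ∈ M, p.1 ≠ p.2) ∧
  M.Pairwise (fun p q => p.1 ≠ q.1 ∧ p.1 ≠ q.2 ∧ p.2 ≠ q.1 ∧ p.2 ≠ q.2)

lemma goodM_probePartial (F order : List V) (t : ℕ) :
    goodM (probePartial G F order t) := by
  induction t with
  | zero => constructor <;> simp [probePartial]
  | succ t ih =>
    rw [probePartial_succ]
    cases hq : (probeList order)[t]? with
    | none => exact ih
    | some q =>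
      dsimp only
      split
      · rename_i hc
        simp only [pcondAP, Bool.and_eq_true, decide_eq_true_eq, Bool.not_eq_true'] at hc
        obtain ⟨⟨⟨⟨hadj, _⟩, _⟩, h1⟩, h2⟩ := hc
        constructor
        · intro p hp
          rcases List.mem_cons.mp hp with rfl | hp
          · exact hadj.ne
          · exact ih.1 p hp
        · refine List.pairwise_cons.mpr ⟨?_, ih.2⟩
          intro p hp
          have m1 : isMatchedL (probePartial G F order t) q.1 = false := h1
          have m2 : isMatchedL (probePartial G F order t) q.2 = false := h2
          refine ⟨fun h => ?_, fun h => ?_, fun h => ?_, fun h => ?_⟩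
          · have : isMatchedL (probePartial G F order t) q.1 = true :=
              (isMatchedL_iff _ _).mpr ⟨p, hp, Or.inl h.symm⟩
            simp [m1] at this
          · have : isMatchedL (probePartial G F order t) q.1 = true :=
              (isMatchedL_iff _ _).mpr ⟨p, hp, Or.inr h.symm⟩
            simp [m1] at this
          · have : isMatchedL (probePartial G F order t) q.2 = true :=
              (isMatchedL_iff _ _).mpr ⟨p, hp, Or.inl h.symm⟩
            simp [m2] at this
          · have : isMatchedL (probePartial G F order t) q.2 = true :=
              (isMatchedL_iff _ _).mpr ⟨p, hp, Or.inr h.symm⟩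
            simp [m2] at this
      · exact ih


lemma mem_matchEdges_iff (M : List (V × V)) (e : Sym2 V) :
    e ∈ matchEdges M ↔ ∃ p ∈ M, e = s(p.1, p.2) := Iff.rfl

lemma matched_of_mem_matchEdges {M : List (V × V)} {x y : V}
    (h : s(x, y) ∈ matchEdges M) : isMatchedL M x = true ∧ isMatchedL M y = true := by
  obtain ⟨p, hp, he⟩ := h
  rw [Sym2.eq_iff] at he
  constructor <;> rw [isMatchedL_iff] <;> exact ⟨p, hp, by tauto⟩

/-- In a good matching, an endpoint determines its edge. -/
lemma goodM_unique {M : List (V × V)} (hM : goodM M) {x y z : V}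
    (h1 : s(x, y) ∈ matchEdges M) (h2 : s(x, z) ∈ matchEdges M) : y = z := by
  obtain ⟨p, hp, hep⟩ := h1
  obtain ⟨q, hq, heq⟩ := h2
  rw [Sym2.eq_iff] at hep heq
  by_cases hpq : p = q
  · subst hpq
    have hne : p.1 ≠ p.2 := hM.1 p hp
    rcases hep with ⟨h1, rfl⟩ | ⟨h1, rfl⟩ <;> rcases heq with ⟨h3, rfl⟩ | ⟨h3, rfl⟩ <;>
      first
        | rfl
        | exact absurd (h1.symm.trans h3) hne
        | exact absurd (h1.symm.trans h3) hne.symm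
  · have hsym : Symmetric (fun p q : V × V => p.1 ≠ q.1 ∧ p.1 ≠ q.2 ∧ p.2 ≠ q.1 ∧ p.2 ≠ q.2) :=
      fun a b h => by
        obtain ⟨e1, e2, e3, e4⟩ := h
        exact ⟨fun e => e1 e.symm, fun e => e3 e.symm, fun e => e2 e.symm, fun e => e4 e.symm⟩
    haveI : Std.Symm (fun p q : V × V => p.1 ≠ q.1 ∧ p.1 ≠ q.2 ∧ p.2 ≠ q.1 ∧ p.2 ≠ q.2) :=
      ⟨fun a b h => hsym h⟩
    obtain ⟨d1, d2, d3, d4⟩ := hM.2.forall hp hq hpq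
    rcases hep with ⟨h1, rfl⟩ | ⟨h1, rfl⟩ <;> rcases heq with ⟨h3, rfl⟩ | ⟨h3, rfl⟩ <;>
      first
        | exact absurd (h1.symm.trans h3) d1
        | exact absurd (h1.symm.trans h3) d2
        | exact absurd (h1.symm.trans h3) d3
        | exact absurd (h1.symm.trans h3) d4

/-- Forbidden vertices are never matched. -/
lemma forbidden_unmatched (F order : List V) (t : ℕ) {x : V} (hx : x ∈ F) :
    isMatchedL (probePartial G F order t) x = false := by
  rw [← Bool.not_eq_true, isMatchedL_iff]
  rintro ⟨p, hp, h | h⟩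
  · exact (probePartial_prop G F order t p hp).2.1 (h ▸ hx)
  · exact (probePartial_prop G F order t p hp).2.2 (h ▸ hx)

lemma sum_map_const_nat (l : List V) (n : ℕ) : (l.map fun _ => n).sum = l.length * n := by
  induction l with
  | nil => simp
  | cons a l ih => simp [ih, Nat.succ_mul]; ring

lemma probeList_length (order : List V) :
    (probeList order).length = order.length * order.length := by
  rw [probeList, List.length_flatMap]
  have h : (order.map (List.length ∘ fun u => order.map fun v => (u, v))) =
      order.map (fun _ => order.length) := by
    simp [Function.comp_def]
  simp only [Function.comp_def] at h
  rw [h, sum_map_const_nat]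

lemma flatMap_pair_getElem (l1 l2 : List V) (i j : ℕ) (hi : i < l1.length)
    (hj : j < l2.length) :
    (l1.flatMap fun u => l2.map fun v => (u, v))[i * l2.length + j]? =
      some (l1[i], l2[j]) := by
  induction l1 generalizing i with
  | nil => simp at hi
  | cons a l ih =>
    rw [List.flatMap_cons]
    cases i with
    | zero =>
      simp only [Nat.zero_mul, Nat.zero_add]
      rw [List.getElem?_append_left (by simpa using hj), List.getElem?_map,
        List.getElem?_eq_getElem hj]
      simp
    | succ i =>
      have hi' : i < l.length := by simpa using hi
      rw [List.getElem?_append_right (by simp [Nat.succ_mul]; omega)]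
      have harith : (i + 1) * l2.length + j - (l2.map fun v => (a, v)).length =
          i * l2.length + j := by simp [Nat.succ_mul]; omega
      rw [harith, ih i hi']
      simp

lemma probeList_getElem (order : List V) (i j : ℕ) (hi : i < order.length)
    (hj : j < order.length) :
    (probeList order)[i * order.length + j]? = some (order[i], order[j]) :=
  flatMap_pair_getElem order order i j hi hj


lemma pcondAP_iff (F : List V) (M : List (V × V)) (q : V × V) :
    pcondAP G F M q = true ↔ G.Adj q.1 q.2 ∧ q.1 ∉ F ∧ q.2 ∉ F ∧
      isMatchedL M q.1 = false ∧ isMatchedL M q.2 = false := by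
  simp only [pcondAP, Bool.and_eq_true, decide_eq_true_eq, Bool.not_eq_true',
    decide_eq_false_iff_not]
  tauto

/-- A successful probe is always in the increasing-rank orientation, and its
timestamp is `indexOf q.1 * n + indexOf q.2`. -/
lemma probe_orient (F order : List V) (hnd : order.Nodup) {t : ℕ} {q : V × V}
    (hq : (probeList order)[t]? = some q)
    (hc : pcondAP G F (probePartial G F order t) q = true) :
    order.idxOf q.1 < order.idxOf q.2 ∧
      order.idxOf q.1 * order.length + order.idxOf q.2 = t := by
  have ht : t < (probeList order).length := by
    have := hq
    rw [List.getElem?_eq_some_iff] at this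
    exact this.1
  rw [probeList_length] at ht
  have hnpos : 0 < order.length := by
    rcases Nat.eq_zero_or_pos order.length with h | h
    · rw [h] at ht; simp at ht
    · exact h
  have hi : t / order.length < order.length := Nat.div_lt_iff_lt_mul hnpos |>.mpr ht
  have hj : t % order.length < order.length := Nat.mod_lt _ hnpos
  have heq : t / order.length * order.length + t % order.length = t := by
    rw [Nat.mul_comm]; exact Nat.div_add_mod t order.length
  have hgot : (probeList order)[t]? =
      some (order[t / order.length]'hi, order[t % order.length]'hj) := by
    conv_lhs => rw [← heq]
    exact probeList_getElem order _ _ hi hj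
  rw [hq] at hgot
  have hgot' := Option.some.inj hgot
  have hq1 : q.1 = order[t / order.length]'hi := congrArg Prod.fst hgot'
  have hq2 : q.2 = order[t % order.length]'hj := congrArg Prod.snd hgot'
  have hidx1 : order.idxOf q.1 = t / order.length := by
    rw [hq1]; exact List.Nodup.idxOf_getElem hnd _ hi
  have hidx2 : order.idxOf q.2 = t % order.length := by
    rw [hq2]; exact List.Nodup.idxOf_getElem hnd _ hj
  rw [pcondAP_iff] at hc
  obtain ⟨hadj, hf1, hf2, hm1, hm2⟩ := hc
  have hne : q.1 ≠ q.2 := hadj.ne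
  have hij : t / order.length ≠ t % order.length := by
    intro h
    apply hne
    rw [hq1, hq2]
    simp only [h]
  rcases Nat.lt_or_ge (t / order.length) (t % order.length) with hlt | hge
  · constructor
    · omega
    · rw [hidx1, hidx2]; exact heq
  exfalso
  have hjlt : t % order.length < t / order.length := by omega
  set s := t % order.length * order.length + t / order.length with hs
  have key : t % order.length * order.length + order.length ≤
      t / order.length * order.length := by
    calc t % order.length * order.length + order.length
        = (t % order.length + 1) * order.length := by ring
      _ ≤ t / order.length * order.length :=
          Nat.mul_le_mul_right _ (Nat.succ_le_of_lt hjlt)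
  have hst : s < t := by
    have h2 : s < t / order.length * order.length + t % order.length := by
      rw [hs]; linarith
    exact heq ▸ h2
  have hgs : (probeList order)[s]? =
      some (order[t % order.length]'hj, order[t / order.length]'hi) :=
    probeList_getElem order _ _ hj hi
  have hgs' : (probeList order)[s]? = some (q.2, q.1) := by rw [hgs, ← hq1, ← hq2]
  have hcs : pcondAP G F (probePartial G F order s) (q.2, q.1) = true := by
    rw [pcondAP_iff]
    refine ⟨hadj.symm, hf2, hf1, ?_, ?_⟩
    · rw [← Bool.not_eq_true]
      intro h
      have := isMatchedL_mono G (le_of_lt hst) h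
      simp [hm2] at this
    · rw [← Bool.not_eq_true]
      intro h
      have := isMatchedL_mono G (le_of_lt hst) h
      simp [hm1] at this
  have hmem : (q.2, q.1) ∈ probePartial G F order (s + 1) := by
    rw [probePartial_succ, hgs']
    dsimp only
    rw [if_pos hcs]
    exact List.mem_cons_self
  have hmem' : (q.2, q.1) ∈ probePartial G F order t :=
    probePartial_mono G (by omega) _ hmem
  have : isMatchedL (probePartial G F order t) q.1 = true :=
    (isMatchedL_iff _ _).mpr ⟨(q.2, q.1), hmem', Or.inr rfl⟩
  simp [hm1] at this


lemma probePartial_zero (F order : List V) : probePartial G F order 0 = [] := rfl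

lemma mem_matchEdges_cons {q : V × V} {M : List (V × V)} {e : Sym2 V} :
    e ∈ matchEdges (q :: M) ↔ e = s(q.1, q.2) ∨ e ∈ matchEdges M := by
  constructor
  · rintro ⟨p, hp, he⟩
    rcases List.mem_cons.mp hp with rfl | hp
    · exact Or.inl he
    · exact Or.inr ⟨p, hp, he⟩
  · rintro (rfl | ⟨p, hp, he⟩)
    · exact ⟨q, List.mem_cons_self, rfl⟩
    · exact ⟨p, List.mem_cons_of_mem _ hp, he⟩

lemma matchEdges_subset_cons {q : V × V} {M : List (V × V)} {e : Sym2 V}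
    (h : e ∈ matchEdges M) : e ∈ matchEdges (q :: M) :=
  mem_matchEdges_cons.mpr (Or.inr h)

lemma isMatchedL_cons (q : V × V) (M : List (V × V)) (x : V) :
    isMatchedL (q :: M) x = ((decide (q.1 = x) || decide (q.2 = x)) || isMatchedL M x) := by
  simp [isMatchedL]

lemma isMatchedL_cons_ne {q : V × V} {M : List (V × V)} {x : V}
    (h1 : q.1 ≠ x) (h2 : q.2 ≠ x) : isMatchedL (q :: M) x = isMatchedL M x := by
  simp [isMatchedL_cons, h1, h2]

lemma isMatchedL_cons_fst (q : V × V) (M : List (V × V)) :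
    isMatchedL (q :: M) q.1 = true := by simp [isMatchedL_cons]

lemma isMatchedL_cons_snd (q : V × V) (M : List (V × V)) :
    isMatchedL (q :: M) q.2 = true := by simp [isMatchedL_cons]

/-- The alternating-path invariant. -/
structure PInv (order : List V) (ustar : V) (t : ℕ) (m : ℕ) (p : ℕ → V) : Prop where
  h0 : p 0 = ustar
  inj : ∀ i ≤ m, ∀ j ≤ m, p i = p j → i = j
  mem_even : ∀ i < m, Even i →
    s(p i, p (i + 1)) ∈ matchEdges (probePartial G [] order t)
  mem_odd : ∀ i < m, ¬ Even i →
    s(p i, p (i + 1)) ∈ matchEdges (probePartial G [ustar] order t)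
  diffMN : ∀ e ∈ matchEdges (probePartial G [] order t),
    e ∉ matchEdges (probePartial G [ustar] order t) → ∃ i < m, e = s(p i, p (i + 1))
  diffNM : ∀ e ∈ matchEdges (probePartial G [ustar] order t),
    e ∉ matchEdges (probePartial G [] order t) → ∃ i < m, e = s(p i, p (i + 1))
  agree : ∀ x, x ≠ p m → x ≠ ustar →
    isMatchedL (probePartial G [] order t) x = isMatchedL (probePartial G [ustar] order t) x
  free : isMatchedL (probePartial G (if Even m then [] else [ustar]) order t) (p m) = false
  rank : ∀ i, i + 2 ≤ m → order.idxOf (p i) < order.idxOf (p (i + 2))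
  last : m ≠ 0 → ∃ a b : V, s(a, b) = s(p (m - 1), p m) ∧
    order.idxOf a < order.idxOf b ∧
    order.idxOf a * order.length + order.idxOf b < t

variable {G}

/-- Even path edges are not in the `N` matching. -/
lemma PInv.edge_not_odd {order : List V} {ustar : V} {t m : ℕ} {p : ℕ → V}
    (inv : PInv G order ustar t m p) :
    ∀ i < m, Even i → s(p i, p (i + 1)) ∉ matchEdges (probePartial G [ustar] order t) := by
  intro i him hev he
  rcases Nat.eq_zero_or_pos i with rfl | hpos
  · have := (matched_of_mem_matchEdges he).1
    rw [inv.h0] at this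
    have h2 := forbidden_unmatched G [ustar] order t (by simp : ustar ∈ [ustar])
    simp [h2] at this
  · have hii : i - 1 + 1 = i := by omega
    have hprev : s(p (i - 1), p i) ∈ matchEdges (probePartial G [ustar] order t) := by
      rw [← hii]
      apply inv.mem_odd (i - 1) (by omega)
      intro hev'
      rcases hev with ⟨k, hk⟩
      rcases hev' with ⟨k', hk'⟩
      omega
    have hprev' : s(p i, p (i - 1)) ∈ matchEdges (probePartial G [ustar] order t) := by
      rwa [Sym2.eq_swap] at hprev
    have := goodM_unique (goodM_probePartial G [ustar] order t) he hprev'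
    have := inv.inj (i + 1) (by omega) (i - 1) (by omega) this
    omega

/-- Odd path edges are not in the `M` matching. -/
lemma PInv.edge_not_even {order : List V} {ustar : V} {t m : ℕ} {p : ℕ → V}
    (inv : PInv G order ustar t m p) :
    ∀ i < m, ¬ Even i → s(p i, p (i + 1)) ∉ matchEdges (probePartial G [] order t) := by
  intro i him hev he
  have hpos : 0 < i := by
    rcases Nat.eq_zero_or_pos i with rfl | h
    · exact absurd (Even.zero) hev
    · exact h
  have hii : i - 1 + 1 = i := by omega
  have hprev : s(p (i - 1), p i) ∈ matchEdges (probePartial G [] order t) := by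
    rw [← hii]
    apply inv.mem_even (i - 1) (by omega)
    rcases Nat.even_or_odd i with h | h
    · exact absurd h hev
    · rcases h with ⟨k, hk⟩
      exact ⟨k, by omega⟩
  have hprev' : s(p i, p (i - 1)) ∈ matchEdges (probePartial G [] order t) := by
    rwa [Sym2.eq_swap] at hprev
  have := goodM_unique (goodM_probePartial G [] order t) he hprev'
  have := inv.inj (i + 1) (by omega) (i - 1) (by omega) this
  omega

/-- Interior path vertices are matched in both partial matchings. -/
lemma PInv.interior_matched {order : List V} {ustar : V} {t m : ℕ} {p : ℕ → V}
    (inv : PInv G order ustar t m p) {i : ℕ} (h0 : 0 < i) (hm : i < m) :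
    isMatchedL (probePartial G [] order t) (p i) = true ∧
    isMatchedL (probePartial G [ustar] order t) (p i) = true := by
  have hii : i - 1 + 1 = i := by omega
  constructor
  · rcases Nat.even_or_odd i with h | h
    · exact (matched_of_mem_matchEdges (inv.mem_even i hm h)).1
    · have h1 : Even (i - 1) := by rcases h with ⟨k, hk⟩; exact ⟨k, by omega⟩
      have := (matched_of_mem_matchEdges (inv.mem_even (i-1) (by omega) h1)).2
      rwa [hii] at this
  · rcases Nat.even_or_odd i with h | h
    · have h1 : ¬ Even (i - 1) := by
        rcases h with ⟨k, hk⟩; rintro ⟨k', hk'⟩; omega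
      have := (matched_of_mem_matchEdges (inv.mem_odd (i-1) (by omega) h1)).2
      rwa [hii] at this
    · exact (matched_of_mem_matchEdges (inv.mem_odd i hm (Nat.not_even_iff_odd.mpr h))).1

/-- The path endpoint is matched in the opposite run (when the path is nonempty). -/
lemma PInv.endpoint_matched_opp {order : List V} {ustar : V} {t m : ℕ} {p : ℕ → V}
    (inv : PInv G order ustar t m p) (hm : m ≠ 0) :
    isMatchedL (probePartial G (if Even m then [ustar] else []) order t) (p m) = true := by
  rcases Nat.even_or_odd m with h | h
  · have h1 : ¬ Even (m - 1) := by rcases h with ⟨k, hk⟩; rintro ⟨k', hk'⟩; omega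
    have := (matched_of_mem_matchEdges (inv.mem_odd (m-1) (by omega) h1)).2
    rw [if_pos h]
    have heq : m - 1 + 1 = m := by omega
    rwa [heq] at this
  · have h1 : Even (m - 1) := by rcases h with ⟨k, hk⟩; exact ⟨k, by omega⟩
    have := (matched_of_mem_matchEdges (inv.mem_even (m-1) (by omega) h1)).2
    rw [if_neg (Nat.not_even_iff_odd.mpr h)]
    have heq : m - 1 + 1 = m := by omega
    rwa [heq] at this

/-- `ustar` is matched in `M` when the path is nonempty. -/
lemma PInv.ustar_matched {order : List V} {ustar : V} {t m : ℕ} {p : ℕ → V}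
    (inv : PInv G order ustar t m p) (hm : m ≠ 0) :
    isMatchedL (probePartial G [] order t) ustar = true := by
  have := (matched_of_mem_matchEdges (inv.mem_even 0 (by omega) Even.zero)).1
  rwa [inv.h0] at this


/-- Transport the invariant along a step that changes neither matching. -/
lemma PInv.congrStep {order : List V} {ustar : V} {t m : ℕ} {p : ℕ → V}
    (inv : PInv G order ustar t m p)
    (hM : probePartial G [] order (t + 1) = probePartial G [] order t)
    (hN : probePartial G [ustar] order (t + 1) = probePartial G [ustar] order t) :
    PInv G order ustar (t + 1) m p := by
  constructor
  · exact inv.h0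
  · exact inv.inj
  · rw [hM]; exact inv.mem_even
  · rw [hN]; exact inv.mem_odd
  · rw [hM, hN]; exact inv.diffMN
  · rw [hM, hN]; exact inv.diffNM
  · rw [hM, hN]; exact inv.agree
  · by_cases he : Even m
    · rw [if_pos he, hM]
      have := inv.free
      rwa [if_pos he] at this
    · rw [if_neg he, hN]
      have := inv.free
      rwa [if_neg he] at this
  · exact inv.rank
  · intro hm
    obtain ⟨a, b, h1, h2, h3⟩ := inv.last hm
    exact ⟨a, b, h1, h2, h3.trans (Nat.lt_succ_self t)⟩

/-- Transport the invariant along a step in which both runs add the probe `q`. -/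
lemma pinv_both {order : List V} {ustar : V} {t m : ℕ} {p : ℕ → V} {q : V × V}
    (inv : PInv G order ustar t m p)
    (cM : pcondAP G [] (probePartial G [] order t) q = true)
    (cN : pcondAP G [ustar] (probePartial G [ustar] order t) q = true)
    (hM : probePartial G [] order (t + 1) = q :: probePartial G [] order t)
    (hN : probePartial G [ustar] order (t + 1) = q :: probePartial G [ustar] order t) :
    PInv G order ustar (t + 1) m p := by
  rw [pcondAP_iff] at cM cN
  obtain ⟨hadj, -, -, hm1, hm2⟩ := cM
  obtain ⟨-, hns1, hns2, hn1, hn2⟩ := cN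
  simp only [List.mem_singleton] at hns1 hns2
  -- the endpoint `p m` is not an endpoint of `q`
  have hpm : p m ≠ q.1 ∧ p m ≠ q.2 := by
    rcases Nat.eq_zero_or_pos m with rfl | hmne
    · rw [inv.h0]
      exact ⟨fun e => hns1 e.symm, fun e => hns2 e.symm⟩
    · have hop := inv.endpoint_matched_opp (by omega)
      by_cases he : Even m
      · rw [if_pos he] at hop
        constructor <;> intro e <;> rw [e] at hop
        · simp [hn1] at hop
        · simp [hn2] at hop
      · rw [if_neg he] at hop
        constructor <;> intro e <;> rw [e] at hop
        · simp [hm1] at hop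
        · simp [hm2] at hop
  constructor
  · exact inv.h0
  · exact inv.inj
  · rw [hM]; exact fun i h he => matchEdges_subset_cons (inv.mem_even i h he)
  · rw [hN]; exact fun i h he => matchEdges_subset_cons (inv.mem_odd i h he)
  · rw [hM, hN]
    intro e he hne
    rcases mem_matchEdges_cons.mp he with rfl | he'
    · exact absurd (mem_matchEdges_cons.mpr (Or.inl rfl)) hne
    · exact inv.diffMN e he' fun h => hne (matchEdges_subset_cons h)
  · rw [hM, hN]
    intro e he hne
    rcases mem_matchEdges_cons.mp he with rfl | he'
    · exact absurd (mem_matchEdges_cons.mpr (Or.inl rfl)) hne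
    · exact inv.diffNM e he' fun h => hne (matchEdges_subset_cons h)
  · rw [hM, hN]
    intro x hx hu
    rw [isMatchedL_cons, isMatchedL_cons, inv.agree x hx hu]
  · by_cases he : Even m
    · rw [if_pos he, hM, isMatchedL_cons_ne (Ne.symm hpm.1) (Ne.symm hpm.2)]
      have := inv.free
      rwa [if_pos he] at this
    · rw [if_neg he, hN, isMatchedL_cons_ne (Ne.symm hpm.1) (Ne.symm hpm.2)]
      have := inv.free
      rwa [if_neg he] at this
  · exact inv.rank
  · intro hm
    obtain ⟨a, b, h1, h2, h3⟩ := inv.last hm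
    exact ⟨a, b, h1, h2, h3.trans (Nat.lt_succ_self t)⟩


/-- Extension step: the `M` run adds probe `q`, the `N` run does not. -/
lemma pinv_extM {order : List V} {ustar : V} {t m : ℕ} {p : ℕ → V} {q : V × V}
    (hnd : order.Nodup) (hall : ∀ v : V, v ∈ order)
    (inv : PInv G order ustar t m p)
    (hq : (probeList order)[t]? = some q)
    (cM : pcondAP G [] (probePartial G [] order t) q = true)
    (cN : pcondAP G [ustar] (probePartial G [ustar] order t) q = false)
    (hM : probePartial G [] order (t + 1) = q :: probePartial G [] order t)
    (hN : probePartial G [ustar] order (t + 1) = probePartial G [ustar] order t) :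
    ∃ m' p', PInv G order ustar (t + 1) m' p' := by
  obtain ⟨hor1, hor2⟩ := probe_orient G [] order hnd hq cM
  have cM' := cM
  rw [pcondAP_iff] at cM'
  obtain ⟨hadj, -, -, hm1, hm2⟩ := cM'
  have hqne : q.1 ≠ q.2 := hadj.ne
  -- why the N run failed
  have hfail : q.1 = ustar ∨ q.2 = ustar ∨
      isMatchedL (probePartial G [ustar] order t) q.1 = true ∨
      isMatchedL (probePartial G [ustar] order t) q.2 = true := by
    by_contra h
    push_neg at h
    obtain ⟨h1, h2, h3, h4⟩ := h
    rw [← Bool.not_eq_true, pcondAP_iff] at cN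
    exact cN ⟨hadj, by simp [h1], by simp [h2], by simpa using h3, by simpa using h4⟩
  -- the probe touches the path endpoint, and `m` is even
  have hkey : Even m ∧ (p m = q.1 ∨ p m = q.2) := by
    rcases hfail with h | h | h | h
    · have hm0 : m = 0 := by
        by_contra hm0
        have := inv.ustar_matched hm0
        rw [← h] at this
        simp [hm1] at this
      refine ⟨hm0 ▸ Even.zero, Or.inl ?_⟩
      rw [hm0, inv.h0, h]
    · have hm0 : m = 0 := by
        by_contra hm0
        have := inv.ustar_matched hm0
        rw [← h] at this
        simp [hm2] at this
      refine ⟨hm0 ▸ Even.zero, Or.inr ?_⟩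
      rw [hm0, inv.h0, h]
    · have hq1u : q.1 ≠ ustar := by
        intro e
        have := forbidden_unmatched G [ustar] order t (by simp [e] : q.1 ∈ [ustar])
        simp [this] at h
      have hq1pm : p m = q.1 := by
        by_contra hne
        have := inv.agree q.1 (fun e => hne e.symm) hq1u
        rw [hm1] at this
        simp [h] at this
      have hev : Even m := by
        by_contra hev
        have := inv.free
        rw [if_neg hev, hq1pm] at this
        simp [h] at this
      exact ⟨hev, Or.inl hq1pm⟩
    · have hq2u : q.2 ≠ ustar := by
        intro e
        have := forbidden_unmatched G [ustar] order t (by simp [e] : q.2 ∈ [ustar])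
        simp [this] at h
      have hq2pm : p m = q.2 := by
        by_contra hne
        have := inv.agree q.2 (fun e => hne e.symm) hq2u
        rw [hm2] at this
        simp [h] at this
      have hev : Even m := by
        by_contra hev
        have := inv.free
        rw [if_neg hev, hq2pm] at this
        simp [h] at this
      exact ⟨hev, Or.inr hq2pm⟩
  obtain ⟨hEm, hpm⟩ := hkey
  -- the new endpoint w
  obtain ⟨w, hsw, hwm, hwM⟩ :
      ∃ w, s(q.1, q.2) = s(p m, w) ∧ w ≠ p m ∧
        isMatchedL (probePartial G [] order t) w = false := by
    rcases hpm with h | h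
    · exact ⟨q.2, by rw [h], fun e => hqne (e.trans h).symm, hm2⟩
    · exact ⟨q.1, by rw [h, Sym2.eq_swap], fun e => hqne (e.trans h), hm1⟩
  have hwu : w ≠ ustar := by
    intro e
    rcases Nat.eq_zero_or_pos m with hm0 | hm0
    · exact hwm (e.trans (hm0 ▸ inv.h0).symm)
    · have := inv.ustar_matched (by omega)
      rw [← e] at this
      simp [hwM] at this
  have hwN : isMatchedL (probePartial G [ustar] order t) w = false := by
    rw [← inv.agree w hwm hwu]
    exact hwM
  have hwnew : ∀ i ≤ m, p i ≠ w := by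
    intro i hi
    rcases Nat.lt_or_ge i m with hlt | hge
    · rcases Nat.eq_zero_or_pos i with rfl | hpos
      · rw [inv.h0]; exact fun e => hwu e.symm
      · have := (inv.interior_matched hpos hlt).1
        intro e
        rw [e] at this
        simp [hwM] at this
    · have : i = m := by omega
      rw [this]
      exact fun e => hwm e.symm
  set p' : ℕ → V := fun i => if i ≤ m then p i else w with hp'
  have hp'le : ∀ i ≤ m, p' i = p i := fun i hi => if_pos hi
  have hp'succ : p' (m + 1) = w := if_neg (by omega)
  have hIdxPm : order.idxOf (p m) < order.length := List.idxOf_lt_length_iff.mpr (hall _)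
  refine ⟨m + 1, p', ?_⟩
  constructor
  · rw [hp'le 0 (by omega)]; exact inv.h0
  · intro i hi j hj he
    rcases Nat.lt_or_ge i (m + 1) with hi' | hi' <;> rcases Nat.lt_or_ge j (m + 1) with hj' | hj'
    · rw [hp'le i (by omega), hp'le j (by omega)] at he
      exact inv.inj i (by omega) j (by omega) he
    · have hj'' : j = m + 1 := by omega
      rw [hp'le i (by omega), hj'', hp'succ] at he
      exact absurd he (hwnew i (by omega))
    · have hi'' : i = m + 1 := by omega
      rw [hp'le j (by omega), hi'', hp'succ] at he
      exact absurd he.symm (hwnew j (by omega))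
    · omega
  · intro i hi hev
    rcases Nat.lt_or_ge i m with hlt | hge
    · rw [hp'le i (by omega), hp'le (i+1) (by omega), hM]
      exact matchEdges_subset_cons (inv.mem_even i hlt hev)
    · have him : i = m := by omega
      subst him
      rw [hp'le i le_rfl, hp'succ, hM, ← hsw]
      exact mem_matchEdges_cons.mpr (Or.inl rfl)
  · intro i hi hev
    have hlt : i < m := by
      rcases Nat.lt_or_ge i m with h | h
      · exact h
      · exact absurd (show i = m by omega) (fun e => hev (e ▸ hEm))
    rw [hp'le i (by omega), hp'le (i+1) (by omega), hN]
    exact inv.mem_odd i hlt hev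
  · rw [hM, hN]
    intro e he hne
    rcases mem_matchEdges_cons.mp he with rfl | he'
    · exact ⟨m, by omega, by rw [hp'le m le_rfl, hp'succ, hsw]⟩
    · obtain ⟨i, him, hei⟩ := inv.diffMN e he' hne
      exact ⟨i, by omega, by rwa [hp'le i (by omega), hp'le (i+1) (by omega)]⟩
  · rw [hM, hN]
    intro e he hne
    have hne' : e ∉ matchEdges (probePartial G [] order t) :=
      fun h => hne (matchEdges_subset_cons h)
    obtain ⟨i, him, hei⟩ := inv.diffNM e he hne'
    exact ⟨i, by omega, by rwa [hp'le i (by omega), hp'le (i+1) (by omega)]⟩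
  · intro x hx hu
    rw [hp'succ] at hx
    rw [hM, hN]
    by_cases hxq : x = q.1 ∨ x = q.2
    · have hxpm : x = p m := by
        rw [Sym2.eq_iff] at hsw
        rcases hsw with ⟨e1, e2⟩ | ⟨e1, e2⟩ <;> rcases hxq with rfl | rfl
        · exact e1
        · exact absurd e2 hx
        · exact absurd e1 hx
        · exact e2
      have hm0 : m ≠ 0 := by
        intro e
        exact hu (hxpm.trans (e ▸ inv.h0))
      have hNpm : isMatchedL (probePartial G [ustar] order t) (p m) = true := by
        have := inv.endpoint_matched_opp hm0
        rwa [if_pos hEm] at this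
      have hMpm : isMatchedL (q :: probePartial G [] order t) x = true := by
        rcases hxq' : hxq with rfl | rfl
        · exact isMatchedL_cons_fst _ _
        · exact isMatchedL_cons_snd _ _
      rw [hMpm, hxpm, hNpm]
    · push_neg at hxq
      rw [isMatchedL_cons_ne (fun e => hxq.1 e.symm) (fun e => hxq.2 e.symm)]
      have hxpm : x ≠ p m := by
        intro e
        rcases hpm with h | h
        · exact hxq.1 (e.trans h)
        · exact hxq.2 (e.trans h)
      exact inv.agree x hxpm hu
  · have hodd : ¬ Even (m + 1) := by simp [Nat.even_add_one, hEm]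
    rw [if_neg hodd, hp'succ, hN]
    exact hwN
  · intro i hi2
    rcases Nat.lt_or_ge (i + 2) (m + 1) with hlt | hge
    · rw [hp'le i (by omega), hp'le (i+2) (by omega)]
      exact inv.rank i (by omega)
    · have him : i + 2 = m + 1 := by omega
      have him' : i = m - 1 := by omega
      have hm1' : 1 ≤ m := by omega
      rw [hp'le i (by omega), show i + 2 = m + 1 by omega, hp'succ, him']
      obtain ⟨a, b, hab, habo, habt⟩ := inv.last (by omega)
      rw [Sym2.eq_iff] at hab hsw
      rw [← hor2] at habt
      rcases hab with ⟨ha, hb⟩ | ⟨ha, hb⟩ <;> rcases hsw with ⟨h1, h2⟩ | ⟨h1, h2⟩ <;>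
        rw [ha, hb] at habo habt <;> rw [h1, h2] at hor1 habt
      · exact lt_trans habo hor1
      · have h3 := lt_of_add_lt_add_right habt
        exact lt_of_mul_lt_mul_right h3 (Nat.zero_le _)
      · exact lt_of_add_lt_add_left habt
      · exfalso
        have h5 : order.idxOf w * order.length + order.length ≤
            order.idxOf (p m) * order.length := by
          calc order.idxOf w * order.length + order.length
              = (order.idxOf w + 1) * order.length := by ring
            _ ≤ order.idxOf (p m) * order.length :=
                Nat.mul_le_mul_right _ (by omega)
        linarith
  · intro _
    refine ⟨q.1, q.2, ?_, hor1, by rw [hor2]; exact Nat.lt_succ_self t⟩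
    rw [hsw, show m + 1 - 1 = m from rfl, hp'le m le_rfl, hp'succ]


/-- Extension step: the `N` run adds probe `q`, the `M` run does not. -/
lemma pinv_extN {order : List V} {ustar : V} {t m : ℕ} {p : ℕ → V} {q : V × V}
    (hnd : order.Nodup) (hall : ∀ v : V, v ∈ order)
    (inv : PInv G order ustar t m p)
    (hq : (probeList order)[t]? = some q)
    (cM : pcondAP G [] (probePartial G [] order t) q = false)
    (cN : pcondAP G [ustar] (probePartial G [ustar] order t) q = true)
    (hM : probePartial G [] order (t + 1) = probePartial G [] order t)
    (hN : probePartial G [ustar] order (t + 1) = q :: probePartial G [ustar] order t) :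
    ∃ m' p', PInv G order ustar (t + 1) m' p' := by
  obtain ⟨hor1, hor2⟩ := probe_orient G [ustar] order hnd hq cN
  have cN' := cN
  rw [pcondAP_iff] at cN'
  obtain ⟨hadj, hns1, hns2, hn1, hn2⟩ := cN'
  simp only [List.mem_singleton] at hns1 hns2
  have hqne : q.1 ≠ q.2 := hadj.ne
  -- why the M run failed
  have hfail : isMatchedL (probePartial G [] order t) q.1 = true ∨
      isMatchedL (probePartial G [] order t) q.2 = true := by
    by_contra h
    push_neg at h
    obtain ⟨h1, h2⟩ := h
    rw [← Bool.not_eq_true, pcondAP_iff] at cM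
    exact cM ⟨hadj, by simp, by simp, by simpa using h1, by simpa using h2⟩
  -- the probe touches the path endpoint, and `m` is odd
  have hkey : ¬ Even m ∧ (p m = q.1 ∨ p m = q.2) := by
    rcases hfail with h | h
    · have hq1pm : p m = q.1 := by
        by_contra hne
        have := inv.agree q.1 (fun e => hne e.symm) hns1
        rw [hn1] at this
        simp [h] at this
      have hod : ¬ Even m := by
        intro hev
        have := inv.free
        rw [if_pos hev, hq1pm] at this
        simp [h] at this
      exact ⟨hod, Or.inl hq1pm⟩
    · have hq2pm : p m = q.2 := by
        by_contra hne
        have := inv.agree q.2 (fun e => hne e.symm) hns2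
        rw [hn2] at this
        simp [h] at this
      have hod : ¬ Even m := by
        intro hev
        have := inv.free
        rw [if_pos hev, hq2pm] at this
        simp [h] at this
      exact ⟨hod, Or.inr hq2pm⟩
  obtain ⟨hOm, hpm⟩ := hkey
  have hm0 : m ≠ 0 := fun e => hOm (e ▸ Even.zero)
  -- the new endpoint w
  obtain ⟨w, hsw, hwm, hwN, hwu⟩ :
      ∃ w, s(q.1, q.2) = s(p m, w) ∧ w ≠ p m ∧
        isMatchedL (probePartial G [ustar] order t) w = false ∧ w ≠ ustar := by
    rcases hpm with h | h
    · exact ⟨q.2, by rw [h], fun e => hqne (e.trans h).symm, hn2, hns2⟩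
    · exact ⟨q.1, by rw [h, Sym2.eq_swap], fun e => hqne (e.trans h), hn1, hns1⟩
  have hwM : isMatchedL (probePartial G [] order t) w = false := by
    rw [inv.agree w hwm hwu]
    exact hwN
  have hwnew : ∀ i ≤ m, p i ≠ w := by
    intro i hi
    rcases Nat.lt_or_ge i m with hlt | hge
    · rcases Nat.eq_zero_or_pos i with rfl | hpos
      · rw [inv.h0]; exact fun e => hwu e.symm
      · have := (inv.interior_matched hpos hlt).2
        intro e
        rw [e] at this
        simp [hwN] at this
    · have : i = m := by omega
      rw [this]
      exact fun e => hwm e.symm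
  set p' : ℕ → V := fun i => if i ≤ m then p i else w with hp'
  have hp'le : ∀ i ≤ m, p' i = p i := fun i hi => if_pos hi
  have hp'succ : p' (m + 1) = w := if_neg (by omega)
  have hIdxPm : order.idxOf (p m) < order.length := List.idxOf_lt_length_iff.mpr (hall _)
  refine ⟨m + 1, p', ?_⟩
  constructor
  · rw [hp'le 0 (by omega)]; exact inv.h0
  · intro i hi j hj he
    rcases Nat.lt_or_ge i (m + 1) with hi' | hi' <;> rcases Nat.lt_or_ge j (m + 1) with hj' | hj'
    · rw [hp'le i (by omega), hp'le j (by omega)] at he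
      exact inv.inj i (by omega) j (by omega) he
    · have hj'' : j = m + 1 := by omega
      rw [hp'le i (by omega), hj'', hp'succ] at he
      exact absurd he (hwnew i (by omega))
    · have hi'' : i = m + 1 := by omega
      rw [hp'le j (by omega), hi'', hp'succ] at he
      exact absurd he.symm (hwnew j (by omega))
    · omega
  · intro i hi hev
    have hlt : i < m := by
      rcases Nat.lt_or_ge i m with h | h
      · exact h
      · exact absurd (show i = m by omega) (fun e => hOm (e ▸ hev))
    rw [hp'le i (by omega), hp'le (i+1) (by omega), hM]
    exact inv.mem_even i hlt hev
  · intro i hi hev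
    rcases Nat.lt_or_ge i m with hlt | hge
    · rw [hp'le i (by omega), hp'le (i+1) (by omega), hN]
      exact matchEdges_subset_cons (inv.mem_odd i hlt hev)
    · have him : i = m := by omega
      subst him
      rw [hp'le i le_rfl, hp'succ, hN, ← hsw]
      exact mem_matchEdges_cons.mpr (Or.inl rfl)
  · rw [hM, hN]
    intro e he hne
    have hne' : e ∉ matchEdges (probePartial G [ustar] order t) :=
      fun h => hne (matchEdges_subset_cons h)
    obtain ⟨i, him, hei⟩ := inv.diffMN e he hne'
    exact ⟨i, by omega, by rwa [hp'le i (by omega), hp'le (i+1) (by omega)]⟩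
  · rw [hM, hN]
    intro e he hne
    rcases mem_matchEdges_cons.mp he with rfl | he'
    · exact ⟨m, by omega, by rw [hp'le m le_rfl, hp'succ, hsw]⟩
    · obtain ⟨i, him, hei⟩ := inv.diffNM e he' hne
      exact ⟨i, by omega, by rwa [hp'le i (by omega), hp'le (i+1) (by omega)]⟩
  · intro x hx hu
    rw [hp'succ] at hx
    rw [hM, hN]
    by_cases hxq : x = q.1 ∨ x = q.2
    · have hxpm : x = p m := by
        rw [Sym2.eq_iff] at hsw
        rcases hsw with ⟨e1, e2⟩ | ⟨e1, e2⟩ <;> rcases hxq with rfl | rfl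
        · exact e1
        · exact absurd e2 hx
        · exact absurd e1 hx
        · exact e2
      have hMpm : isMatchedL (probePartial G [] order t) (p m) = true := by
        have := inv.endpoint_matched_opp hm0
        rwa [if_neg hOm] at this
      have hNpm : isMatchedL (q :: probePartial G [ustar] order t) x = true := by
        rcases hxq' : hxq with rfl | rfl
        · exact isMatchedL_cons_fst _ _
        · exact isMatchedL_cons_snd _ _
      rw [hNpm, hxpm, hMpm]
    · push_neg at hxq
      rw [isMatchedL_cons_ne (fun e => hxq.1 e.symm) (fun e => hxq.2 e.symm)]
      have hxpm : x ≠ p m := by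
        intro e
        rcases hpm with h | h
        · exact hxq.1 (e.trans h)
        · exact hxq.2 (e.trans h)
      exact inv.agree x hxpm hu
  · have hev : Even (m + 1) := by simpa [Nat.even_add_one] using hOm
    rw [if_pos hev, hp'succ, hM]
    exact hwM
  · intro i hi2
    rcases Nat.lt_or_ge (i + 2) (m + 1) with hlt | hge
    · rw [hp'le i (by omega), hp'le (i+2) (by omega)]
      exact inv.rank i (by omega)
    · have him : i + 2 = m + 1 := by omega
      have him' : i = m - 1 := by omega
      have hm1' : 1 ≤ m := by omega
      rw [hp'le i (by omega), show i + 2 = m + 1 by omega, hp'succ, him']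
      obtain ⟨a, b, hab, habo, habt⟩ := inv.last (by omega)
      rw [Sym2.eq_iff] at hab hsw
      rw [← hor2] at habt
      rcases hab with ⟨ha, hb⟩ | ⟨ha, hb⟩ <;> rcases hsw with ⟨h1, h2⟩ | ⟨h1, h2⟩ <;>
        rw [ha, hb] at habo habt <;> rw [h1, h2] at hor1 habt
      · exact lt_trans habo hor1
      · have h3 := lt_of_add_lt_add_right habt
        exact lt_of_mul_lt_mul_right h3 (Nat.zero_le _)
      · exact lt_of_add_lt_add_left habt
      · exfalso
        have h5 : order.idxOf w * order.length + order.length ≤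
            order.idxOf (p m) * order.length := by
          calc order.idxOf w * order.length + order.length
              = (order.idxOf w + 1) * order.length := by ring
            _ ≤ order.idxOf (p m) * order.length :=
                Nat.mul_le_mul_right _ (by omega)
        linarith
  · intro _
    refine ⟨q.1, q.2, ?_, hor1, by rw [hor2]; exact Nat.lt_succ_self t⟩
    rw [hsw, show m + 1 - 1 = m from rfl, hp'le m le_rfl, hp'succ]


variable (G)

/-- The invariant holds at every timestamp. -/
lemma pinv_exists (order : List V) (hnd : order.Nodup) (hall : ∀ v : V, v ∈ order)
    (ustar : V) (t : ℕ) : ∃ m p, PInv G order ustar t m p := by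
  induction t with
  | zero =>
    refine ⟨0, fun _ => ustar, ?_⟩
    constructor
    · rfl
    · intro i hi j hj _; omega
    · intro i hi; omega
    · intro i hi; omega
    · rintro e ⟨pp, hp, -⟩ -
      rw [probePartial_zero] at hp
      simp at hp
    · rintro e ⟨pp, hp, -⟩ -
      rw [probePartial_zero] at hp
      simp at hp
    · intro x _ _
      rw [probePartial_zero, probePartial_zero]
    · rw [if_pos Even.zero, probePartial_zero]
      rfl
    · intro i hi; omega
    · intro h; exact absurd rfl h
  | succ t ih =>
    obtain ⟨m, p, inv⟩ := ih
    cases hq : (probeList order)[t]? with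
    | none =>
      have hM : probePartial G [] order (t + 1) = probePartial G [] order t := by
        rw [probePartial_succ, hq]
      have hN : probePartial G [ustar] order (t + 1) = probePartial G [ustar] order t := by
        rw [probePartial_succ, hq]
      exact ⟨m, p, inv.congrStep hM hN⟩
    | some q =>
      by_cases cM : pcondAP G [] (probePartial G [] order t) q = true
      · have hM : probePartial G [] order (t + 1) = q :: probePartial G [] order t := by
          rw [probePartial_succ, hq]
          exact if_pos cM
        by_cases cN : pcondAP G [ustar] (probePartial G [ustar] order t) q = true
        · have hN : probePartial G [ustar] order (t + 1) =
              q :: probePartial G [ustar] order t := by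
            rw [probePartial_succ, hq]
            exact if_pos cN
          exact ⟨m, p, pinv_both inv cM cN hM hN⟩
        · have hN : probePartial G [ustar] order (t + 1) =
              probePartial G [ustar] order t := by
            rw [probePartial_succ, hq]
            exact if_neg cN
          exact pinv_extM hnd hall inv hq cM (by simpa using cN) hM hN
      · have hM : probePartial G [] order (t + 1) = probePartial G [] order t := by
          rw [probePartial_succ, hq]
          exact if_neg cM
        by_cases cN : pcondAP G [ustar] (probePartial G [ustar] order t) q = true
        · have hN : probePartial G [ustar] order (t + 1) =
              q :: probePartial G [ustar] order t := by
            rw [probePartial_succ, hq]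
            exact if_pos cN
          exact pinv_extN hnd hall inv hq (by simpa using cM) cN hM hN
        · have hN : probePartial G [ustar] order (t + 1) =
              probePartial G [ustar] order t := by
            rw [probePartial_succ, hq]
            exact if_neg cN
          exact ⟨m, p, inv.congrStep hM hN⟩

end AuxAP

/-- Alternating path lemma with timestamps: at any time `t` of the greedy probing
process, the symmetric difference of the partial matchings `R^t(σ)` and `R^t(σ₋ᵤ*)` is an
alternating path `p 0, …, p m` starting at `u*` (even-indexed edges in `R^t(σ)`,
odd-indexed in `R^t(σ₋ᵤ*)`), ranks increase two steps at a time, and the available sets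
differ exactly in the endpoint `p m`. -/
theorem stmt9 {V : Type*} [DecidableEq V] (G : SimpleGraph V) [DecidableRel G.Adj]
    (order : List V) (hnd : order.Nodup) (hall : ∀ v : V, v ∈ order) (ustar : V) (t : ℕ) :
    ∃ (m : ℕ) (p : ℕ → V),
      p 0 = ustar ∧
      (∀ i ≤ m, ∀ j ≤ m, p i = p j → i = j) ∧
      symmDiff (matchEdges (probePartial G [] order t))
          (matchEdges (probePartial G [ustar] order t)) =
        {e : Sym2 V | ∃ i < m, e = s(p i, p (i + 1))} ∧
      (∀ i < m, Even i → s(p i, p (i + 1)) ∈ matchEdges (probePartial G [] order t)) ∧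
      (∀ i < m, ¬ Even i →
        s(p i, p (i + 1)) ∈ matchEdges (probePartial G [ustar] order t)) ∧
      (∀ i, i + 2 ≤ m → order.idxOf (p i) < order.idxOf (p (i + 2))) ∧
      symmDiff (probeAvail G [] order t) (probeAvail G [ustar] order t) = {p m} := by
  obtain ⟨m, p, inv⟩ := pinv_exists G order hnd hall ustar t
  refine ⟨m, p, inv.h0, inv.inj, ?_, inv.mem_even, inv.mem_odd, inv.rank, ?_⟩
  · ext e
    rw [Set.mem_symmDiff]
    constructor
    · rintro (⟨he, hne⟩ | ⟨he, hne⟩)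
      · obtain ⟨i, him, hei⟩ := inv.diffMN e he hne
        exact ⟨i, him, hei⟩
      · obtain ⟨i, him, hei⟩ := inv.diffNM e he hne
        exact ⟨i, him, hei⟩
    · rintro ⟨i, him, rfl⟩
      rcases Nat.even_or_odd i with h | h
      · exact Or.inl ⟨inv.mem_even i him h, inv.edge_not_odd i him h⟩
      · exact Or.inr ⟨inv.mem_odd i him (Nat.not_even_iff_odd.mpr h),
          inv.edge_not_even i him (Nat.not_even_iff_odd.mpr h)⟩
  · have hmemM : ∀ x, x ∈ probeAvail G [] order t ↔
        isMatchedL (probePartial G [] order t) x = false := by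
      intro x
      constructor
      · rintro ⟨-, -, h⟩; exact h
      · intro h; exact ⟨hall x, by simp, h⟩
    have hmemN : ∀ x, x ∈ probeAvail G [ustar] order t ↔
        (x ≠ ustar ∧ isMatchedL (probePartial G [ustar] order t) x = false) := by
      intro x
      constructor
      · rintro ⟨-, h1, h2⟩; exact ⟨by simpa using h1, h2⟩
      · intro h; exact ⟨hall x, by simpa using h.1, h.2⟩
    ext x
    rw [Set.mem_symmDiff, Set.mem_singleton_iff, hmemM, hmemN]
    constructor
    · rintro (⟨hxM, hxN⟩ | ⟨⟨hxu, hxN⟩, hxM⟩)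
      · by_contra hx
        by_cases hxu : x = ustar
        · have hm0 : m = 0 := by
            by_contra hm0
            have := inv.ustar_matched hm0
            rw [← hxu] at this
            simp [hxM] at this
          exact hx (hxu.trans (hm0 ▸ inv.h0 : p m = ustar).symm)
        · exact hxN ⟨hxu, by rw [← inv.agree x hx hxu]; exact hxM⟩
      · by_contra hx
        exact hxM (by rw [inv.agree x hx hxu]; exact hxN)
    · rintro rfl
      by_cases hev : Even m
      · refine Or.inl ⟨?_, ?_⟩
        · have := inv.free
          rwa [if_pos hev] at this
        · rintro ⟨hpu, hpN⟩
          rcases Nat.eq_zero_or_pos m with hm0 | hm0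
          · exact hpu (hm0 ▸ inv.h0)
          · have := inv.endpoint_matched_opp (by omega)
            rw [if_pos hev] at this
            simp [hpN] at this
      · refine Or.inr ⟨⟨?_, ?_⟩, ?_⟩
        · intro hpu
          have hm0 : m = 0 := inv.inj m le_rfl 0 (Nat.zero_le _) (hpu.trans inv.h0.symm)
          exact hev (hm0 ▸ Even.zero)
        · have := inv.free
          rwa [if_neg hev] at this
        · intro hpM
          have hm0 : m ≠ 0 := fun e => hev (e ▸ Even.zero)
          have := inv.endpoint_matched_opp hm0
          rw [if_neg hev] at this
          simp [hpM] at this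
end

section
/- Let σ_{-u*} be a permutation on V \ {u*} under which Ranking matches u to v, and let σ be obtained by inserting u* at an arbitrary rank. If σ(u*) > σ(u), then u is matched in R(σ) to some vertex w with σ(w) ≤ σ(v). -/
open List

set_option linter.unusedSectionVars false
set_option linter.unusedVariables false

variable {V : Type*}

set_option linter.unusedSectionVars false
set_option linter.unusedVariables false

namespace Stmt11Helper

variable {V : Type*} [DecidableEq V]

/-! ### Generic list lemmas -/

theorem find?_min {l : List V} {p : V → Bool} {b : V} (h : l.find? p = some b)
    {a : V} (ha : a ∈ l) (hpa : p a = true) : l.idxOf b ≤ l.idxOf a := by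
  induction l with
  | nil => cases ha
  | cons c tl ih =>
    by_cases hph : p c = true
    · rw [List.find?_cons_of_pos hph] at h
      cases h
      simp
    · rw [List.find?_cons_of_neg hph] at h
      rcases List.mem_cons.mp ha with rfl | ha
      · exact absurd hpa hph
      · by_cases hbd : c = b
        · subst hbd; simp
        · have had : c ≠ a := fun he => hph (by rw [he]; exact hpa)
          rw [List.idxOf_cons_ne _ hbd, List.idxOf_cons_ne _ had]
          exact Nat.succ_le_succ (ih h ha)

theorem find?_exists {l : List V} {p : V → Bool} {a : V} (ha : a ∈ l) (hpa : p a = true) :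
    ∃ b, l.find? p = some b := by
  cases h : l.find? p with
  | some b => exact ⟨b, rfl⟩
  | none => exact absurd hpa (List.find?_eq_none.mp h a ha)

theorem find?_congr' {l : List V} {p q : V → Bool} (h : ∀ x ∈ l, p x = q x) :
    l.find? p = l.find? q := by
  induction l with
  | nil => rfl
  | cons hd tl ih =>
    have hh := h hd (List.mem_cons_self)
    by_cases hp : p hd = true
    · rw [List.find?_cons_of_pos hp, List.find?_cons_of_pos (hh ▸ hp)]
    · rw [List.find?_cons_of_neg hp, List.find?_cons_of_neg (fun hq => hp (hh ▸ hq))]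
      exact ih fun x hx => h x (List.mem_cons_of_mem _ hx)

theorem indexOf_eq_imp_eq {l : List V} (hnd : l.Nodup) {a b : V} (ha : a ∈ l) (hb : b ∈ l)
    (h : l.idxOf a = l.idxOf b) : a = b := by
  have h1 := List.getElem_idxOf (List.idxOf_lt_length_iff.mpr ha)
  have h2 := List.getElem_idxOf (List.idxOf_lt_length_iff.mpr hb)
  rw [← h1, ← h2]
  congr 1

theorem insertIdx_decomp (l : List V) (i : ℕ) (a : V) (h : i ≤ l.length) :
    l.insertIdx i a = l.take i ++ a :: l.drop i := by
  induction l generalizing i with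
  | nil =>
    have : i = 0 := by simpa using h
    subst this
    simp
  | cons hd tl ih =>
    cases i with
    | zero => simp [List.insertIdx_zero]
    | succ n =>
      simp only [List.insertIdx_succ_cons, List.take_succ_cons, List.drop_succ_cons,
        List.cons_append]
      rw [ih n (by simpa using h)]

theorem find?_insert_lift {l : List V} {i : ℕ} {a : V} {p : V → Bool} (hi : i ≤ l.length)
    (hpa : p a = false) : (l.insertIdx i a).find? p = l.find? p := by
  rw [insertIdx_decomp l i a hi, List.find?_append,
    List.find?_cons_of_neg (by simp [hpa]), ← List.find?_append, List.take_append_drop]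

theorem lift_find {order : List V} {ustar : V} {i : ℕ} (hu : ustar ∉ order)
    (hi : i ≤ order.length) (p : V → Bool) :
    (order.insertIdx i ustar).find? (fun w => p w && !(decide (w = ustar))) = order.find? p := by
  rw [find?_insert_lift hi (by simp)]
  exact find?_congr' fun x hx => by
    have : x ≠ ustar := fun he => hu (he ▸ hx)
    simp [this]

theorem indexOf_insert_self {l : List V} {i : ℕ} {a : V} (hi : i ≤ l.length) (ha : a ∉ l) :
    (l.insertIdx i a).idxOf a = i := by
  rw [insertIdx_decomp l i a hi,
    List.idxOf_append_of_notMem (fun h => ha (List.mem_of_mem_take h)),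
    List.idxOf_cons_self]
  simp [Nat.min_eq_left hi]

theorem mem_take_of_indexOf_lt {l : List V} {x : V} {t : ℕ} (hx : x ∈ l)
    (h : l.idxOf x < t) : x ∈ l.take t := by
  have hlt := List.idxOf_lt_length_iff.mpr hx
  have h1 : (l.take t)[l.idxOf x]'(by simp [hlt, h]) = x := by
    rw [List.getElem_take]
    exact List.getElem_idxOf hlt
  exact h1 ▸ List.getElem_mem _

theorem indexOf_ge_of_not_mem_take {l : List V} {x : V} {t : ℕ} (hx : x ∈ l)
    (h : x ∉ l.take t) : t ≤ l.idxOf x := by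
  by_contra hc
  exact h (mem_take_of_indexOf_lt hx (by omega))

theorem indexOf_insert_of_mem {l : List V} (hnd : l.Nodup) {i : ℕ} {a : V}
    (hi : i ≤ l.length) (ha : a ∉ l) {x : V} (hx : x ∈ l) :
    (l.insertIdx i a).idxOf x =
      if l.idxOf x < i then l.idxOf x else l.idxOf x + 1 := by
  induction l generalizing i with
  | nil => cases hx
  | cons c tl ih =>
    have hax : a ≠ x := fun he => ha (he ▸ hx)
    cases i with
    | zero =>
      rw [List.insertIdx_zero, List.idxOf_cons_ne _ hax]
      simp
    | succ n =>
      rw [List.insertIdx_succ_cons]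
      by_cases hxc : c = x
      · subst hxc
        rw [List.idxOf_cons_self, List.idxOf_cons_self]
        simp
      · have hxtl : x ∈ tl := by
          rcases List.mem_cons.mp hx with h1 | h1
          · exact absurd h1.symm hxc
          · exact h1
        rw [List.idxOf_cons_ne _ hxc, List.idxOf_cons_ne _ hxc,
          ih hnd.of_cons (by simpa using hi) (fun hm => ha (List.mem_cons_of_mem _ hm)) hxtl]
        by_cases hlt : tl.idxOf x < n
        · rw [if_pos hlt, if_pos (by omega)]
        · rw [if_neg hlt, if_neg (by omega)]

end Stmt11Helper



theorem indexOf_lt_of_mem_take {V : Type*} [DecidableEq V] {l : List V} {x : V} {t : ℕ} (h : x ∈ l.take t) :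
    l.idxOf x < t := by
  have h1 : l.idxOf x = (l.take t).idxOf x := by
    conv_lhs => rw [← List.take_append_drop t l]
    rw [List.idxOf_append_of_mem h]
  rw [h1]
  calc (l.take t).idxOf x < (l.take t).length := List.idxOf_lt_length_iff.mpr h
    _ ≤ t := by simp [List.length_take]

theorem getElem_mem_take_succ {V : Type*} {l : List V} {t : ℕ} (h : t < l.length) :
    l[t] ∈ l.take (t + 1) := by
  have h2 : (l.take (t + 1))[t]'(by simp [h]) = l[t] := List.getElem_take
  exact h2 ▸ List.getElem_mem _

theorem take_succ_subset {V : Type*} {l : List V} {t : ℕ} (h : t < l.length) :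
    l.take (t + 1) ⊆ l[t] :: l.take t := by
  rw [List.take_succ, List.getElem?_eq_getElem h]
  intro x hx
  rcases List.mem_append.mp hx with h1 | h1
  · exact List.mem_cons_of_mem _ h1
  · simp only [Option.toList_some, List.mem_singleton] at h1
    simp [h1]


namespace Stmt11Helper

variable {V : Type*} [DecidableEq V] {G : SimpleGraph V} [DecidableRel G.Adj]

/-! ### Matching-list lemmas -/

/-- Symmetric membership of a pair in a matching list. -/
def pm (M : List (V × V)) (x y : V) : Prop := (x, y) ∈ M ∨ (y, x) ∈ M

omit [DecidableEq V] in
theorem pm_mono {M : List (V × V)} {a b x y : V} (h : pm M x y) : pm ((a, b) :: M) x y := by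
  rcases h with h | h
  · exact Or.inl (List.mem_cons_of_mem _ h)
  · exact Or.inr (List.mem_cons_of_mem _ h)

omit [DecidableEq V] in
theorem pm_head1 {M : List (V × V)} {a b : V} : pm ((a, b) :: M) a b :=
  Or.inl (List.mem_cons_self)

omit [DecidableEq V] in
theorem pm_head2 {M : List (V × V)} {a b : V} : pm ((a, b) :: M) b a :=
  Or.inr (List.mem_cons_self)

omit [DecidableEq V] in
theorem pm_cons_iff {M : List (V × V)} {a b x v : V} :
    pm ((a, b) :: M) x v ↔ (x = a ∧ v = b) ∨ (x = b ∧ v = a) ∨ pm M x v := by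
  simp only [pm, List.mem_cons, Prod.mk.injEq]
  tauto

theorem matched_iff {M : List (V × V)} {x : V} :
    isMatchedL M x = true ↔ ∃ y, pm M x y := by
  simp only [isMatchedL, List.any_eq_true, Bool.or_eq_true, decide_eq_true_eq, pm]
  constructor
  · rintro ⟨p, hp, h | h⟩
    · exact ⟨p.2, Or.inl (by rw [← h]; exact hp)⟩
    · exact ⟨p.1, Or.inr (by rw [← h]; exact hp)⟩
  · rintro ⟨y, h | h⟩
    · exact ⟨(x, y), h, Or.inl rfl⟩
    · exact ⟨(y, x), h, Or.inr rfl⟩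

theorem matched_head1 {M : List (V × V)} {a b : V} : isMatchedL ((a, b) :: M) a = true := by
  simp [isMatchedL]

theorem matched_head2 {M : List (V × V)} {a b : V} : isMatchedL ((a, b) :: M) b = true := by
  simp [isMatchedL]

theorem matched_cons_mono {M : List (V × V)} {a b x : V} (h : isMatchedL M x = true) :
    isMatchedL ((a, b) :: M) x = true := by
  simp only [isMatchedL, List.any_cons, Bool.or_eq_true] at h ⊢
  exact Or.inr h

theorem matched_cons_ne {M : List (V × V)} {a b x : V} (ha : a ≠ x) (hb : b ≠ x) :
    isMatchedL ((a, b) :: M) x = isMatchedL M x := by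
  simp [isMatchedL, ha, hb]

theorem pm_of_mem_matched {M : List (V × V)} {x : V} (h : isMatchedL M x = true) :
    ∃ y, pm M x y := matched_iff.mp h

/-! ### Step normal form -/

/-- The availability predicate used by one step of Ranking (no forbidden vertices). -/
def prd (G : SimpleGraph V) [DecidableRel G.Adj] (M : List (V × V)) (y : V) : V → Bool :=
  fun w => decide (G.Adj y w) && !isMatchedL M w

theorem prd_iff {M : List (V × V)} {y w : V} :
    prd G M y w = true ↔ G.Adj y w ∧ isMatchedL M w = false := by
  simp [prd]

theorem step_eq (l : List V) (M : List (V × V)) (y : V) :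
    rankingStepF G [] l M y =
      if isMatchedL M y = true then M
      else
        match l.find? (prd G M y) with
        | some w => (y, w) :: M
        | none => M := by
  by_cases h : isMatchedL M y = true
  · rw [rankingStepF, if_pos (Or.inr h), if_pos h]
  · rw [rankingStepF, if_neg (by simpa using h), if_neg h]
    have hpp : (fun w => decide (G.Adj y w) && !(decide (w ∈ ([] : List V))) && !isMatchedL M w)
        = prd G M y := by
      funext w
      simp [prd]
    rw [hpp]

theorem step_of_matched {l : List V} {M : List (V × V)} {y : V} (h : isMatchedL M y = true) :
    rankingStepF G [] l M y = M := by rw [step_eq, if_pos h]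

theorem step_of_none {l : List V} {M : List (V × V)} {y : V} (h : isMatchedL M y = false)
    (hf : l.find? (prd G M y) = none) : rankingStepF G [] l M y = M := by
  rw [step_eq, if_neg (by simp [h]), hf]

theorem step_of_some {l : List V} {M : List (V × V)} {y w : V} (h : isMatchedL M y = false)
    (hf : l.find? (prd G M y) = some w) : rankingStepF G [] l M y = (y, w) :: M := by
  rw [step_eq, if_neg (by simp [h]), hf]

/-! ### The invariant -/

/-- Maximality of the partial matching on processed vertices. -/
def MaxP (G : SimpleGraph V) [DecidableRel G.Adj] (order : List V) (t : ℕ)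
    (MA : List (V × V)) : Prop :=
  ∀ x ∈ order.take t, isMatchedL MA x = false → ∀ w ∈ order, G.Adj x w → isMatchedL MA w = true

/-- Every vertex coming before `ustar` that is matched in `MA` is matched at least as
well in `MB`. -/
def Pguar (ord' : List V) (ustar : V) (MA MB : List (V × V)) : Prop :=
  ∀ x v, pm MA x v → ord'.idxOf x < ord'.idxOf ustar →
    ∃ w, pm MB x w ∧ ord'.idxOf w ≤ ord'.idxOf v

/-- The difference between the two runs: equal, one vertex freed in `MB`, or one extra
vertex matched in `MB`. -/
def Mode (order ord' : List V) (ustar : V) (t : ℕ) (MA MB : List (V × V)) : Prop :=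
  MB = MA ∨
  (∃ z, ord'.idxOf ustar < ord'.idxOf z ∧ isMatchedL MB ustar = true ∧
    isMatchedL MA z = true ∧ isMatchedL MB z = false ∧
    ∀ x, x ≠ ustar → x ≠ z → isMatchedL MB x = isMatchedL MA x) ∨
  (∃ c, isMatchedL MB ustar = true ∧ isMatchedL MB c = true ∧ isMatchedL MA c = false ∧
    (∀ x, x ≠ ustar → x ≠ c → isMatchedL MB x = isMatchedL MA x) ∧
    (c ∈ order.take t ∨
      (ord'.idxOf ustar ≤ t ∧ ∃ p, pm MB c p ∧ ord'.idxOf p ≤ t)))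

def Inv (G : SimpleGraph V) [DecidableRel G.Adj] (order ord' : List V) (ustar : V) (t : ℕ)
    (MA MB : List (V × V)) : Prop :=
  isMatchedL MA ustar = false ∧ MaxP G order t MA ∧ Pguar ord' ustar MA MB ∧
    Mode order ord' ustar t MA MB

theorem MaxP_step {order : List V} {t : ℕ} {MA : List (V × V)} {y : V} (hyo : y ∈ order)
    (hyt : y ∉ order.take t) (h : MaxP G order t MA)
    (hmono : order.take (t + 1) ⊆ y :: order.take t) :
    MaxP G order (t + 1) (rankingStepF G [] order MA y) := by
  have hmonoM : ∀ x, isMatchedL MA x = true → isMatchedL (rankingStepF G [] order MA y) x = true := by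
    intro x hx
    rw [step_eq]
    split
    · exact hx
    · split
      · exact matched_cons_mono hx
      · exact hx
  intro x hxt hxf w hw hadj
  rcases List.mem_cons.mp (hmono hxt) with rfl | hxt'
  · -- x = y
    by_cases hmy : isMatchedL MA x = true
    · rw [step_of_matched hmy] at hxf
      exact absurd hxf (by simp [hmy])
    · have hmy' : isMatchedL MA x = false := by simpa using hmy
      cases hfa : order.find? (prd G MA x) with
      | some a =>
        rw [step_of_some hmy' hfa] at hxf
        exact absurd (matched_head1 (M := MA) (a := x) (b := a)) (by simp [hxf])
      | none =>
        rw [step_of_none hmy' hfa] at hxf ⊢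
        by_contra hc
        exact (List.find?_eq_none.mp hfa w hw)
          (prd_iff.mpr ⟨hadj, by simpa using hc⟩)
  · -- x ∈ take t
    have hxfA : isMatchedL MA x = false := by
      by_contra hc
      rw [hmonoM x (by simpa using hc)] at hxf
      exact Bool.true_eq_false.mp hxf
    exact hmonoM w (h x hxt' hxfA w hw hadj)


/-! ### The main simulation step -/

theorem step_main {order : List V} (hnd : order.Nodup) {ustar : V} (hu : ustar ∉ order)
    {i : ℕ} (hi : i ≤ order.length) {t : ℕ} {y : V} (hyo : y ∈ order)
    (hyt : order.idxOf y = t) {MA MB : List (V × V)}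
    (inv : Inv G order (order.insertIdx i ustar) ustar t MA MB) :
    Inv G order (order.insertIdx i ustar) ustar (t + 1)
      (rankingStepF G [] order MA y)
      (rankingStepF G [] (order.insertIdx i ustar) MB y) := by
  set ord' := order.insertIdx i ustar with hord'
  obtain ⟨hA, hMax, hP, hMode⟩ := inv
  have hperm : ord' ~ ustar :: order := List.perm_insertIdx ustar order hi
  have hmem' : ∀ x : V, x ∈ ord' ↔ x = ustar ∨ x ∈ order := fun x => by
    rw [hperm.mem_iff]; simp
  have hnd' : ord'.Nodup := hperm.nodup_iff.mpr (List.nodup_cons.mpr ⟨hu, hnd⟩)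
  have hyu : y ≠ ustar := fun h => hu (h ▸ hyo)
  have hyo' : y ∈ ord' := (hmem' y).mpr (Or.inr hyo)
  have huo' : ustar ∈ ord' := (hmem' ustar).mpr (Or.inl rfl)
  have rkU : ord'.idxOf ustar = i := indexOf_insert_self hi hu
  have rkmem : ∀ x ∈ order, ord'.idxOf x =
      if order.idxOf x < i then order.idxOf x else order.idxOf x + 1 :=
    fun x hx => indexOf_insert_of_mem hnd hi hu hx
  have htlen : t < order.length := hyt ▸ List.idxOf_lt_length_iff.mpr hyo
  have hyget : order[t]'htlen = y := by
    subst hyt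
    exact List.getElem_idxOf htlen
  have hyTake : y ∉ order.take t := fun h => by
    have := indexOf_lt_of_mem_take h; omega
  have hTakeSub : order.take (t + 1) ⊆ y :: order.take t := hyget ▸ take_succ_subset htlen
  have hmaxstep := MaxP_step hyo hyTake hMax hTakeSub
  have rky : ord'.idxOf y = if t < i then t else t + 1 := by rw [rkmem y hyo, hyt]
  have hySucc : y ∈ order.take (t + 1) := hyget ▸ getElem_mem_take_succ htlen
  have Pmono : ∀ {MB' : List (V × V)}, (∀ x w, pm MB x w → pm MB' x w) →
      Pguar ord' ustar MA MB' := fun h x v hpm hlt =>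
    let ⟨w, h1, h2⟩ := hP x v hpm hlt; ⟨w, h _ _ h1, h2⟩
  rcases hMode with hE | hG | hBad
  · -- MODE E : the two runs agree
    subst hE
    by_cases hmAy : isMatchedL MB y = true
    · rw [step_of_matched (G := G) (l := order) hmAy, step_of_matched (G := G) (l := ord') hmAy]
      exact ⟨hA, (step_of_matched (G := G) (l := order) hmAy) ▸ hmaxstep, hP, Or.inl rfl⟩
    · have hmAy' : isMatchedL MB y = false := by simpa using hmAy
      cases hfB : ord'.find? (prd G MB y) with
      | none =>
        have hfA : order.find? (prd G MB y) = none := by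
          cases hfa : order.find? (prd G MB y) with
          | none => rfl
          | some a =>
            exact absurd (List.find?_some hfa)
              (List.find?_eq_none.mp hfB a
                ((hmem' a).mpr (Or.inr (List.mem_of_find?_eq_some hfa))))
        rw [step_of_none (G := G) (l := order) hmAy' hfA, step_of_none (G := G) (l := ord') hmAy' hfB]
        exact ⟨hA, (step_of_none (G := G) (l := order) hmAy' hfA) ▸ hmaxstep, hP, Or.inl rfl⟩
      | some w =>
        have hw_prd := prd_iff.mp (List.find?_some hfB)
        have hw_mem' : w ∈ ord' := List.mem_of_find?_eq_some hfB
        have hwy : w ≠ y := Ne.symm hw_prd.1.ne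
        by_cases hwu : w = ustar
        · rw [hwu] at hfB hw_prd hwy
          rw [step_of_some hmAy' hfB]
          cases hfA : order.find? (prd G MB y) with
          | some a =>
            rw [step_of_some hmAy' hfA]
            have ha_prd := prd_iff.mp (List.find?_some hfA)
            have ha_mem := List.mem_of_find?_eq_some hfA
            have ha_mem' : a ∈ ord' := (hmem' a).mpr (Or.inr ha_mem)
            have hau : a ≠ ustar := fun h => hu (h ▸ ha_mem)
            have hrk1 : ord'.idxOf ustar ≤ ord'.idxOf a :=
              find?_min hfB ha_mem' (prd_iff.mpr ha_prd)
            have hrk : ord'.idxOf ustar < ord'.idxOf a :=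
              lt_of_le_of_ne hrk1 fun h =>
                hau (indexOf_eq_imp_eq hnd' ha_mem' huo' h.symm)
            have hya : y ≠ a := ha_prd.1.ne
            refine ⟨by rw [matched_cons_ne hyu hau]; exact hA,
              (step_of_some hmAy' hfA) ▸ hmaxstep, ?_,
              Or.inr (Or.inl ⟨a, hrk, matched_head2, matched_head2,
                by rw [matched_cons_ne hya (Ne.symm hau)]; exact ha_prd.2, ?_⟩)⟩
            · intro x v hpm hlt
              rcases pm_cons_iff.mp hpm with ⟨h1, h2⟩ | ⟨h1, h2⟩ | hold
              · refine ⟨ustar, ?_, ?_⟩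
                · rw [h1]; exact pm_head1
                · rw [h2]; exact hrk1
              · exact absurd hlt (by rw [h1]; omega)
              · obtain ⟨w', h1, h2⟩ := hP x v hold hlt
                exact ⟨w', pm_mono h1, h2⟩
            · intro x hxu hxa
              by_cases hxy : x = y
              · subst hxy
                rw [matched_head1, matched_head1]
              · rw [matched_cons_ne (fun h => hxy h.symm) (fun h => hxu h.symm),
                  matched_cons_ne (fun h => hxy h.symm) (fun h => hxa h.symm)]
          | none =>
            rw [step_of_none hmAy' hfA]
            refine ⟨hA, (step_of_none (G := G) (l := order) hmAy' hfA) ▸ hmaxstep,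
              Pmono (fun _ _ h => pm_mono h),
              Or.inr (Or.inr ⟨y, matched_head2, matched_head1, hmAy', ?_, Or.inl hySucc⟩)⟩
            intro x hxu hxy
            rw [matched_cons_ne (fun h => hxy h.symm) (fun h => hxu h.symm)]
        · have hw_mem : w ∈ order := ((hmem' w).mp hw_mem').resolve_left hwu
          obtain ⟨a, hfA⟩ := find?_exists hw_mem (prd_iff.mpr hw_prd)
          have ha_prd := prd_iff.mp (List.find?_some hfA)
          have ha_mem := List.mem_of_find?_eq_some hfA
          have ha_mem' : a ∈ ord' := (hmem' a).mpr (Or.inr ha_mem)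
          have hau : a ≠ ustar := fun h => hu (h ▸ ha_mem)
          have hlift : ord'.find? (fun x => prd G MB y x && !(decide (x = ustar))) = some a := by
            rw [lift_find hu hi]; exact hfA
          have h1 : ord'.idxOf a ≤ ord'.idxOf w :=
            find?_min hlift hw_mem' (by
              rw [Bool.and_eq_true]
              exact ⟨prd_iff.mpr hw_prd, by simp [hwu]⟩)
          have h2 : ord'.idxOf w ≤ ord'.idxOf a :=
            find?_min hfB ha_mem' (prd_iff.mpr ha_prd)
          have haw : a = w := indexOf_eq_imp_eq hnd' ha_mem' hw_mem' (le_antisymm h1 h2)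
          have hfA' : order.find? (prd G MB y) = some w := haw ▸ hfA
          have hwu' : w ≠ ustar := hwu
          rw [step_of_some hmAy' hfA', step_of_some hmAy' hfB]
          refine ⟨by rw [matched_cons_ne hyu hwu']; exact hA,
            (step_of_some hmAy' hfA') ▸ hmaxstep, ?_, Or.inl rfl⟩
          intro x v hpm hlt
          rcases pm_cons_iff.mp hpm with ⟨h1, h2⟩ | ⟨h1, h2⟩ | hold
          · refine ⟨v, ?_, le_refl _⟩
            rw [h1, h2]; exact pm_head1
          · refine ⟨v, ?_, le_refl _⟩
            rw [h1, h2]; exact pm_head2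
          · obtain ⟨w', h1, h2⟩ := hP x v hold hlt
            exact ⟨w', pm_mono h1, h2⟩
  · -- MODE G
    rcases hG with ⟨z, hrkz, hBu, hmAz, hmBz, heq⟩
    rw [rkU] at hrkz
    by_cases hmAy : isMatchedL MA y = true
    · rw [step_of_matched (G := G) (l := order) hmAy]
      by_cases hyz : y = z
      · -- the freed vertex acts in the B-run only
        have hmBy : isMatchedL MB y = false := by rw [hyz]; exact hmBz
        cases hfB : ord'.find? (prd G MB y) with
        | none =>
          rw [step_of_none hmBy hfB]
          exact ⟨hA, (step_of_matched (G := G) (l := order) hmAy) ▸ hmaxstep,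
            hP, Or.inr (Or.inl ⟨z, by rw [rkU]; exact hrkz, hBu, hmAz, hmBz, heq⟩)⟩
        | some w =>
          rw [step_of_some hmBy hfB]
          have hw_prd := prd_iff.mp (List.find?_some hfB)
          have hwy : w ≠ y := Ne.symm hw_prd.1.ne
          have hwu : w ≠ ustar := by
            intro h; rw [h] at hw_prd
            exact absurd hw_prd.2 (by simp [hBu])
          have hwz : w ≠ z := fun h => hwy (h.trans hyz.symm)
          have hmAw : isMatchedL MA w = false := by
            rw [← heq w hwu hwz]; exact hw_prd.2
          have hiy : i ≤ t ∧ ord'.idxOf y = t + 1 := by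
            have h1 : ord'.idxOf y = ord'.idxOf z := by rw [hyz]
            by_cases hti : t < i
            · rw [if_pos hti] at rky; omega
            · rw [if_neg hti] at rky; exact ⟨by omega, rky⟩
          refine ⟨hA, (step_of_matched (G := G) (l := order) hmAy) ▸ hmaxstep,
            Pmono (fun _ _ h => pm_mono h),
            Or.inr (Or.inr ⟨w, matched_cons_mono hBu, matched_head2, hmAw, ?_,
              Or.inr ⟨by rw [rkU]; omega, y, pm_head2, by omega⟩⟩)⟩
          intro x hxu hxw
          by_cases hxy : x = y
          · rw [hxy, matched_head1, hmAy]
          · rw [matched_cons_ne (fun h => hxy h.symm) (fun h => hxw h.symm),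
              heq x hxu (fun h => hxy (h.trans hyz.symm))]
      · have hmBy : isMatchedL MB y = true := by rw [heq y hyu hyz]; exact hmAy
        rw [step_of_matched (G := G) (l := ord') hmBy]
        exact ⟨hA, (step_of_matched (G := G) (l := order) hmAy) ▸ hmaxstep,
          hP, Or.inr (Or.inl ⟨z, by rw [rkU]; exact hrkz, hBu, hmAz, hmBz, heq⟩)⟩
    · -- the A-run acts
      have hmAy' : isMatchedL MA y = false := by simpa using hmAy
      have hyz : y ≠ z := by
        intro h; rw [h, hmAz] at hmAy'; exact absurd hmAy' (by simp)
      have hmBy : isMatchedL MB y = false := by rw [heq y hyu hyz]; exact hmAy'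
      have pimp1 : ∀ x, (prd G MA y x && !(decide (x = ustar))) = true →
          prd G MB y x = true := by
        intro x hx
        rw [Bool.and_eq_true] at hx
        obtain ⟨hadj, hxm⟩ := prd_iff.mp hx.1
        have hxu : x ≠ ustar := by simpa using hx.2
        have hxz : x ≠ z := by
          intro h; rw [h, hmAz] at hxm; exact absurd hxm (by simp)
        exact prd_iff.mpr ⟨hadj, by rw [heq x hxu hxz]; exact hxm⟩
      have pimp2 : ∀ x, prd G MB y x = true →
          x = z ∨ (prd G MA y x && !(decide (x = ustar))) = true := by
        intro x hx
        obtain ⟨hadj, hxm⟩ := prd_iff.mp hx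
        have hxu : x ≠ ustar := by
          intro h; rw [h, hBu] at hxm; exact absurd hxm (by simp)
        by_cases hxz : x = z
        · exact Or.inl hxz
        · refine Or.inr ?_
          rw [Bool.and_eq_true]
          exact ⟨prd_iff.mpr ⟨hadj, by rw [← heq x hxu hxz]; exact hxm⟩, by simp [hxu]⟩
      cases hfA : order.find? (prd G MA y) with
      | some a =>
        have ha_prd := prd_iff.mp (List.find?_some hfA)
        have ha_mem := List.mem_of_find?_eq_some hfA
        have ha_mem' : a ∈ ord' := (hmem' a).mpr (Or.inr ha_mem)
        have hau : a ≠ ustar := fun h => hu (h ▸ ha_mem)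
        have haz : a ≠ z := by
          intro h; rw [h, hmAz] at ha_prd
          exact absurd ha_prd.2 (by simp)
        have hya : y ≠ a := ha_prd.1.ne
        have hlift : ord'.find? (fun x => prd G MA y x && !(decide (x = ustar))) = some a := by
          rw [lift_find hu hi]; exact hfA
        have haA'' : (prd G MA y a && !(decide (a = ustar))) = true := by
          rw [Bool.and_eq_true]
          exact ⟨prd_iff.mpr ha_prd, by simp [hau]⟩
        have haB : prd G MB y a = true := pimp1 a haA''
        obtain ⟨w, hfB⟩ := find?_exists ha_mem' haB
        have hw_prd := prd_iff.mp (List.find?_some hfB)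
        have hw_mem' : w ∈ ord' := List.mem_of_find?_eq_some hfB
        have hrkwa : ord'.idxOf w ≤ ord'.idxOf a := find?_min hfB ha_mem' haB
        have hwy : w ≠ y := Ne.symm hw_prd.1.ne
        rw [step_of_some hmAy' hfA]
        by_cases hwz : w = z
        · -- the B-run grabs the freed vertex, freeing a instead
          have hfB' : ord'.find? (prd G MB y) = some z := by rw [← hwz]; exact hfB
          rw [step_of_some hmBy hfB']
          have hrkza : ord'.idxOf z ≤ ord'.idxOf a := by rw [← hwz]; exact hrkwa
          have hrka : ord'.idxOf ustar < ord'.idxOf a := by rw [rkU]; omega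
          refine ⟨by rw [matched_cons_ne hyu hau]; exact hA,
            (step_of_some hmAy' hfA) ▸ hmaxstep, ?_,
            Or.inr (Or.inl ⟨a, hrka, matched_cons_mono hBu, matched_head2, ?_, ?_⟩)⟩
          · intro x v hpm hlt
            rcases pm_cons_iff.mp hpm with ⟨h1, h2⟩ | ⟨h1, h2⟩ | hold
            · refine ⟨z, ?_, ?_⟩
              · rw [h1]; exact pm_head1
              · rw [h2]; exact hrkza
            · exfalso; rw [h1] at hlt; omega
            · obtain ⟨w', hh1, hh2⟩ := hP x v hold hlt
              exact ⟨w', pm_mono hh1, hh2⟩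
          · rw [matched_cons_ne hya (fun h => haz h.symm)]
            rw [heq a hau haz]; exact ha_prd.2
          · intro x hxu hxa
            by_cases hxy : x = y
            · rw [hxy, matched_head1, matched_head1]
            · by_cases hxz : x = z
              · rw [hxz, matched_head2, matched_cons_ne hyz haz, hmAz]
              · rw [matched_cons_ne (fun h => hxy h.symm) (fun h => hxz h.symm),
                  matched_cons_ne (fun h => hxy h.symm) (fun h => hxa h.symm),
                  heq x hxu hxz]
        · -- the two runs pick the same vertex
          have hwA : (prd G MA y w && !(decide (w = ustar))) = true :=
            (pimp2 w (List.find?_some hfB)).resolve_left hwz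
          have hrkaw : ord'.idxOf a ≤ ord'.idxOf w := find?_min hlift hw_mem' hwA
          have haw : a = w := indexOf_eq_imp_eq hnd' ha_mem' hw_mem' (le_antisymm hrkaw hrkwa)
          have hfB' : ord'.find? (prd G MB y) = some a := by rw [haw]; exact hfB
          rw [step_of_some hmBy hfB']
          refine ⟨by rw [matched_cons_ne hyu hau]; exact hA,
            (step_of_some hmAy' hfA) ▸ hmaxstep, ?_,
            Or.inr (Or.inl ⟨z, by rw [rkU]; exact hrkz, matched_cons_mono hBu,
              by rw [matched_cons_ne hyz haz]; exact hmAz,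
              by rw [matched_cons_ne hyz haz]; exact hmBz, ?_⟩)⟩
          · intro x v hpm hlt
            rcases pm_cons_iff.mp hpm with ⟨h1, h2⟩ | ⟨h1, h2⟩ | hold
            · refine ⟨v, ?_, le_refl _⟩
              rw [h1, h2]; exact pm_head1
            · refine ⟨v, ?_, le_refl _⟩
              rw [h1, h2]; exact pm_head2
            · obtain ⟨w', hh1, hh2⟩ := hP x v hold hlt
              exact ⟨w', pm_mono hh1, hh2⟩
          · intro x hxu hxz
            by_cases hxy : x = y
            · rw [hxy, matched_head1, matched_head1]
            · by_cases hxa : x = a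
              · rw [hxa, matched_head2, matched_head2]
              · rw [matched_cons_ne (fun h => hxy h.symm) (fun h => hxa h.symm),
                  matched_cons_ne (fun h => hxy h.symm) (fun h => hxa h.symm),
                  heq x hxu hxz]
      | none =>
        rw [step_of_none hmAy' hfA]
        cases hfB : ord'.find? (prd G MB y) with
        | none =>
          rw [step_of_none hmBy hfB]
          exact ⟨hA, (step_of_none (G := G) (l := order) hmAy' hfA) ▸ hmaxstep,
            hP, Or.inr (Or.inl ⟨z, by rw [rkU]; exact hrkz, hBu, hmAz, hmBz, heq⟩)⟩
        | some w =>
          have hwz : w = z := by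
            rcases pimp2 w (List.find?_some hfB) with h | h
            · exact h
            · exfalso
              rw [Bool.and_eq_true] at h
              have hw_mem : w ∈ order :=
                ((hmem' w).mp (List.mem_of_find?_eq_some hfB)).resolve_left (by simpa using h.2)
              exact (List.find?_eq_none.mp hfA w hw_mem) h.1
          have hfB' : ord'.find? (prd G MB y) = some z := by rw [← hwz]; exact hfB
          rw [step_of_some hmBy hfB']
          refine ⟨hA, (step_of_none (G := G) (l := order) hmAy' hfA) ▸ hmaxstep,
            Pmono (fun _ _ h => pm_mono h),
            Or.inr (Or.inr ⟨y, matched_cons_mono hBu, matched_head1, hmAy', ?_,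
              Or.inl hySucc⟩)⟩
          intro x hxu hxy
          by_cases hxz : x = z
          · rw [hxz, matched_head2, hmAz]
          · rw [matched_cons_ne (fun h => hxy h.symm) (fun h => hxz h.symm), heq x hxu hxz]
  · -- MODE BAD
    rcases hBad with ⟨c, hBu, hmBc, hmAc, heq, hflav⟩
    have hsubt : order.take t ⊆ order.take (t + 1) := fun x hx =>
      mem_take_of_indexOf_lt (List.mem_of_mem_take hx)
        (by have := indexOf_lt_of_mem_take hx; omega)
    by_cases hmAy : isMatchedL MA y = true
    · -- both runs skip
      have hyc : y ≠ c := by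
        intro h; rw [h, hmAc] at hmAy; exact absurd hmAy (by simp)
      have hmBy : isMatchedL MB y = true := by rw [heq y hyu hyc]; exact hmAy
      rw [step_of_matched (G := G) (l := order) hmAy,
        step_of_matched (G := G) (l := ord') hmBy]
      refine ⟨hA, (step_of_matched (G := G) (l := order) hmAy) ▸ hmaxstep, hP,
        Or.inr (Or.inr ⟨c, hBu, hmBc, hmAc, heq, ?_⟩)⟩
      rcases hflav with h | ⟨h1, p, h2, h3⟩
      · exact Or.inl (hsubt h)
      · exact Or.inr ⟨by omega, p, h2, by omega⟩
    · have hmAy' : isMatchedL MA y = false := by simpa using hmAy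
      by_cases hyc : y = c
      · -- the extra B-matched vertex has its A-turn
        have hmBy : isMatchedL MB y = true := by rw [hyc]; exact hmBc
        rw [step_of_matched (G := G) (l := ord') hmBy]
        have hflav2 : ord'.idxOf ustar ≤ t ∧ ∃ p, pm MB c p ∧ ord'.idxOf p ≤ t := by
          rcases hflav with h | h
          · exfalso; rw [← hyc] at h; exact hyTake h
          · exact h
        obtain ⟨hit, p, hpmp, hrkp⟩ := hflav2
        rw [rkU] at hit
        cases hfA : order.find? (prd G MA y) with
        | none =>
          rw [step_of_none hmAy' hfA]
          exact ⟨hA, (step_of_none (G := G) (l := order) hmAy' hfA) ▸ hmaxstep, hP,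
            Or.inr (Or.inr ⟨c, hBu, hmBc, hmAc, heq,
              Or.inr ⟨by rw [rkU]; omega, p, hpmp, by omega⟩⟩)⟩
        | some a =>
          rw [step_of_some hmAy' hfA]
          have ha_prd := prd_iff.mp (List.find?_some hfA)
          have ha_mem := List.mem_of_find?_eq_some hfA
          have ha_mem' : a ∈ ord' := (hmem' a).mpr (Or.inr ha_mem)
          have hau : a ≠ ustar := fun h => hu (h ▸ ha_mem)
          have hya : y ≠ a := ha_prd.1.ne
          have hac : a ≠ c := fun h => hya (hyc.trans h.symm)
          have haTake : a ∉ order.take t := by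
            intro hmemt
            have hres := hMax a hmemt ha_prd.2 y hyo ha_prd.1.symm
            rw [hres] at hmAy'
            exact absurd hmAy' (by simp)
          have hidxa : t ≤ order.idxOf a := indexOf_ge_of_not_mem_take ha_mem haTake
          have hrk_a : ord'.idxOf ustar < ord'.idxOf a := by
            have h0 := rkmem a ha_mem
            rw [rkU]
            by_cases hlt : order.idxOf a < i
            · omega
            · rw [if_neg hlt] at h0; omega
          have hrkyt : ord'.idxOf y = t + 1 := by
            rw [rky, if_neg (by omega)]
          refine ⟨by rw [matched_cons_ne hyu hau]; exact hA,
            (step_of_some hmAy' hfA) ▸ hmaxstep, ?_,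
            Or.inr (Or.inl ⟨a, hrk_a, hBu, matched_head2,
              (heq a hau hac).trans ha_prd.2, ?_⟩)⟩
          · intro x v hpm hlt
            rcases pm_cons_iff.mp hpm with ⟨h1, h2⟩ | ⟨h1, h2⟩ | hold
            · exfalso; rw [h1, hrkyt, rkU] at hlt; omega
            · exfalso; rw [h1] at hlt; omega
            · exact hP x v hold hlt
          · intro x hxu hxa
            by_cases hxy : x = y
            · rw [hxy, hmBy, matched_head1]
            · rw [matched_cons_ne (fun h => hxy h.symm) (fun h => hxa h.symm),
                heq x hxu (fun h => hxy (h.trans hyc.symm))]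
      · -- both runs act, with the same result unless the A-run grabs c
        have hmBy : isMatchedL MB y = false := by rw [heq y hyu hyc]; exact hmAy'
        have pimp2 : ∀ x, prd G MB y x = true →
            ((prd G MA y x && !(decide (x = ustar))) = true ∧ x ≠ c) := by
          intro x hx
          obtain ⟨hadj, hxm⟩ := prd_iff.mp hx
          have hxc : x ≠ c := by
            intro h; rw [h, hmBc] at hxm; exact absurd hxm (by simp)
          have hxu : x ≠ ustar := by
            intro h; rw [h, hBu] at hxm; exact absurd hxm (by simp)
          refine ⟨?_, hxc⟩
          rw [Bool.and_eq_true]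
          exact ⟨prd_iff.mpr ⟨hadj, by rw [← heq x hxu hxc]; exact hxm⟩, by simp [hxu]⟩
        have pimp1 : ∀ x, (prd G MA y x && !(decide (x = ustar))) = true → x ≠ c →
            prd G MB y x = true := by
          intro x hx hxc
          rw [Bool.and_eq_true] at hx
          obtain ⟨hadj, hxm⟩ := prd_iff.mp hx.1
          exact prd_iff.mpr ⟨hadj, by rw [heq x (by simpa using hx.2) hxc]; exact hxm⟩
        cases hfA : order.find? (prd G MA y) with
        | none =>
          rw [step_of_none hmAy' hfA]
          have hfB : ord'.find? (prd G MB y) = none := by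
            cases hfb : ord'.find? (prd G MB y) with
            | none => rfl
            | some w =>
              exfalso
              obtain ⟨hw, hwc⟩ := pimp2 w (List.find?_some hfb)
              rw [Bool.and_eq_true] at hw
              have hw_mem : w ∈ order :=
                ((hmem' w).mp (List.mem_of_find?_eq_some hfb)).resolve_left
                  (by simpa using hw.2)
              exact (List.find?_eq_none.mp hfA w hw_mem) hw.1
          rw [step_of_none hmBy hfB]
          refine ⟨hA, (step_of_none (G := G) (l := order) hmAy' hfA) ▸ hmaxstep, hP,
            Or.inr (Or.inr ⟨c, hBu, hmBc, hmAc, heq, ?_⟩)⟩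
          rcases hflav with h | ⟨h1, p, h2, h3⟩
          · exact Or.inl (hsubt h)
          · exact Or.inr ⟨by omega, p, h2, by omega⟩
        | some a =>
          have ha_prd := prd_iff.mp (List.find?_some hfA)
          have ha_mem := List.mem_of_find?_eq_some hfA
          have ha_mem' : a ∈ ord' := (hmem' a).mpr (Or.inr ha_mem)
          have hau : a ≠ ustar := fun h => hu (h ▸ ha_mem)
          have hya : y ≠ a := ha_prd.1.ne
          have hlift : ord'.find? (fun x => prd G MA y x && !(decide (x = ustar))) = some a := by
            rw [lift_find hu hi]; exact hfA
          have haA'' : (prd G MA y a && !(decide (a = ustar))) = true := by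
            rw [Bool.and_eq_true]
            exact ⟨prd_iff.mpr ha_prd, by simp [hau]⟩
          by_cases hac : a = c
          · -- the A-run matches y to c; the B-run must look further
            have hflav2 : ord'.idxOf ustar ≤ t ∧ ∃ p, pm MB c p ∧ ord'.idxOf p ≤ t := by
              rcases hflav with h | h
              · exfalso
                have hadjcy : G.Adj c y := by rw [← hac]; exact ha_prd.1.symm
                have hres := hMax c h hmAc y hyo hadjcy
                rw [hres] at hmAy'
                exact absurd hmAy' (by simp)
              · exact h
            obtain ⟨hit, p, hpmp, hrkp⟩ := hflav2
            rw [rkU] at hit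
            have hrkyt : ord'.idxOf y = t + 1 := by
              rw [rky, if_neg (by omega)]
            rw [step_of_some hmAy' hfA]
            cases hfB : ord'.find? (prd G MB y) with
            | some w =>
              rw [step_of_some hmBy hfB]
              obtain ⟨hwA, hwc⟩ := pimp2 w (List.find?_some hfB)
              rw [Bool.and_eq_true] at hwA
              have hw_prdA := prd_iff.mp hwA.1
              have hwu : w ≠ ustar := by simpa using hwA.2
              have hwy : w ≠ y := Ne.symm hw_prdA.1.ne
              refine ⟨by rw [matched_cons_ne hyu hau]; exact hA,
                (step_of_some hmAy' hfA) ▸ hmaxstep, ?_,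
                Or.inr (Or.inr ⟨w, matched_cons_mono hBu, matched_head2, ?_, ?_,
                  Or.inr ⟨by rw [rkU]; omega, y, pm_head2, by omega⟩⟩)⟩
              · intro x v hpm hlt
                rcases pm_cons_iff.mp hpm with ⟨h1, h2⟩ | ⟨h1, h2⟩ | hold
                · exfalso; rw [h1, hrkyt, rkU] at hlt; omega
                · refine ⟨p, ?_, ?_⟩
                  · rw [h1, hac]; exact pm_mono hpmp
                  · rw [h2, hrkyt]; omega
                · obtain ⟨w', hh1, hh2⟩ := hP x v hold hlt
                  exact ⟨w', pm_mono hh1, hh2⟩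
              · rw [matched_cons_ne hw_prdA.1.ne (fun h => hwc (h ▸ hac))]
                exact hw_prdA.2
              · intro x hxu hxw
                by_cases hxy : x = y
                · rw [hxy, matched_head1, matched_head1]
                · by_cases hxc : x = c
                  · rw [hxc, matched_cons_ne hyc (fun h => hwc h), hmBc, ← hac,
                      matched_head2]
                  · rw [matched_cons_ne (fun h => hxy h.symm) (fun h => hxw h.symm),
                      matched_cons_ne (fun h => hxy h.symm)
                        (fun h => hxc (h.symm.trans hac)),
                      heq x hxu hxc]
            | none =>
              rw [step_of_none hmBy hfB]
              have hrk_y : ord'.idxOf ustar < ord'.idxOf y := by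
                rw [rkU, hrkyt]; omega
              refine ⟨by rw [matched_cons_ne hyu hau]; exact hA,
                (step_of_some hmAy' hfA) ▸ hmaxstep, ?_,
                Or.inr (Or.inl ⟨y, hrk_y, hBu, matched_head1, hmBy, ?_⟩)⟩
              · intro x v hpm hlt
                rcases pm_cons_iff.mp hpm with ⟨h1, h2⟩ | ⟨h1, h2⟩ | hold
                · exfalso; rw [h1] at hlt; omega
                · refine ⟨p, ?_, ?_⟩
                  · rw [h1, hac]; exact hpmp
                  · rw [h2, hrkyt]; omega
                · exact hP x v hold hlt
              · intro x hxu hxy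
                by_cases hxc : x = c
                · rw [hxc, hmBc, ← hac, matched_head2]
                · rw [matched_cons_ne (fun h => hxy h.symm)
                      (fun h => hxc (h.symm.trans hac)), heq x hxu hxc]
          · -- same pick in both runs
            have haB : prd G MB y a = true := pimp1 a haA'' hac
            obtain ⟨w, hfB⟩ := find?_exists ha_mem' haB
            have hrkwa : ord'.idxOf w ≤ ord'.idxOf a := find?_min hfB ha_mem' haB
            obtain ⟨hwA, hwc⟩ := pimp2 w (List.find?_some hfB)
            have hw_mem' : w ∈ ord' := List.mem_of_find?_eq_some hfB
            have hrkaw : ord'.idxOf a ≤ ord'.idxOf w := find?_min hlift hw_mem' hwA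
            have haw : a = w := indexOf_eq_imp_eq hnd' ha_mem' hw_mem' (le_antisymm hrkaw hrkwa)
            have hfB' : ord'.find? (prd G MB y) = some a := by rw [haw]; exact hfB
            rw [step_of_some hmAy' hfA, step_of_some hmBy hfB']
            refine ⟨by rw [matched_cons_ne hyu hau]; exact hA,
              (step_of_some hmAy' hfA) ▸ hmaxstep, ?_,
              Or.inr (Or.inr ⟨c, matched_cons_mono hBu, matched_cons_mono hmBc,
                by rw [matched_cons_ne hyc hac]; exact hmAc, ?_, ?_⟩)⟩
            · intro x v hpm hlt
              rcases pm_cons_iff.mp hpm with ⟨h1, h2⟩ | ⟨h1, h2⟩ | hold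
              · refine ⟨v, ?_, le_refl _⟩
                rw [h1, h2]; exact pm_head1
              · refine ⟨v, ?_, le_refl _⟩
                rw [h1, h2]; exact pm_head2
              · obtain ⟨w', hh1, hh2⟩ := hP x v hold hlt
                exact ⟨w', pm_mono hh1, hh2⟩
            · intro x hxu hxc
              by_cases hxy : x = y
              · rw [hxy, matched_head1, matched_head1]
              · by_cases hxa : x = a
                · rw [hxa, matched_head2, matched_head2]
                · rw [matched_cons_ne (fun h => hxy h.symm) (fun h => hxa h.symm),
                    matched_cons_ne (fun h => hxy h.symm) (fun h => hxa h.symm),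
                    heq x hxu hxc]
            · rcases hflav with h | ⟨h1, p, h2, h3⟩
              · exact Or.inl (hsubt h)
              · exact Or.inr ⟨by omega, p, pm_mono h2, by omega⟩


theorem fold_take_succ {α β : Type*} (f : β → α → β) (b : β) (l : List α) {s : ℕ}
    (hs : s < l.length) :
    (l.take (s + 1)).foldl f b = f ((l.take s).foldl f b) (l[s]'hs) := by
  rw [List.take_succ, List.getElem?_eq_getElem hs, Option.toList_some, List.foldl_append]
  rfl

theorem step_star {order : List V} (hnd : order.Nodup) {ustar : V} (hu : ustar ∉ order)
    {i : ℕ} (hi : i ≤ order.length) {t : ℕ} (hit : i ≤ t) {MA MB : List (V × V)}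
    (inv : Inv G order (order.insertIdx i ustar) ustar t MA MB) :
    Inv G order (order.insertIdx i ustar) ustar t MA
      (rankingStepF G [] (order.insertIdx i ustar) MB ustar) := by
  set ord' := order.insertIdx i ustar with hord'
  obtain ⟨hA, hMax, hP, hMode⟩ := inv
  have rkU : ord'.idxOf ustar = i := indexOf_insert_self hi hu
  rcases hMode with hE | hG | hBad
  · subst hE
    cases hfB : ord'.find? (prd G MB ustar) with
    | none =>
      rw [step_of_none hA hfB]
      exact ⟨hA, hMax, hP, Or.inl rfl⟩
    | some w =>
      rw [step_of_some hA hfB]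
      have hw_prd := prd_iff.mp (List.find?_some hfB)
      have hwu : w ≠ ustar := Ne.symm hw_prd.1.ne
      refine ⟨hA, hMax,
        (fun x v hpm hlt => let ⟨w', h1, h2⟩ := hP x v hpm hlt; ⟨w', pm_mono h1, h2⟩),
        Or.inr (Or.inr ⟨w, matched_head1, matched_head2, hw_prd.2, ?_,
          Or.inr ⟨by rw [rkU]; exact hit, ustar, pm_head2, by rw [rkU]; exact hit⟩⟩)⟩
      intro x hxu hxw
      rw [matched_cons_ne (fun h => hxu h.symm) (fun h => hxw h.symm)]
  · rcases hG with ⟨z, hrkz, hBu, hmAz, hmBz, heq⟩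
    rw [step_of_matched (G := G) (l := ord') hBu]
    exact ⟨hA, hMax, hP, Or.inr (Or.inl ⟨z, hrkz, hBu, hmAz, hmBz, heq⟩)⟩
  · rcases hBad with ⟨c, hBu, hmBc, hmAc, heq, hflav⟩
    rw [step_of_matched (G := G) (l := ord') hBu]
    exact ⟨hA, hMax, hP, Or.inr (Or.inr ⟨c, hBu, hmBc, hmAc, heq, hflav⟩)⟩

end Stmt11Helper


open Stmt11Helper in
/-- If Ranking on `σ₋ᵤ*` matches `u` to `v`, and `σ` is obtained by inserting `u*` at an
arbitrary rank with `σ(u*) > σ(u)`, then in `R(σ)` the vertex `u` is matched to some `w`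
with `σ(w) ≤ σ(v)`. -/
theorem stmt11 {V : Type*} [DecidableEq V] (G : SimpleGraph V) [DecidableRel G.Adj]
    (order : List V) (hnd : order.Nodup) (ustar : V) (hu : ustar ∉ order)
    (hall : ∀ x : V, x ≠ ustar → x ∈ order)
    (u v : V) (hmatch : matchedTo G order u v)
    (i : ℕ) (hi : i ≤ order.length)
    (hrank : (order.insertIdx i ustar).idxOf u < (order.insertIdx i ustar).idxOf ustar) :
    ∃ w : V, matchedTo G (order.insertIdx i ustar) u w ∧
      (order.insertIdx i ustar).idxOf w ≤ (order.insertIdx i ustar).idxOf v := by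
  set ord' := order.insertIdx i ustar with hord'
  set n := order.length with hn
  have hlen' : ord'.length = n + 1 := List.length_insertIdx_of_le_length hi ustar
  have main1 : ∀ s, s ≤ i →
      Inv G order ord' ustar s ((order.take s).foldl (rankingStepF G [] order) [])
        ((ord'.take s).foldl (rankingStepF G [] ord') []) := by
    intro s
    induction s with
    | zero =>
      intro _
      exact ⟨rfl, fun x hx => absurd hx (by simp), fun x v hpm => absurd hpm (by simp [pm]),
        Or.inl rfl⟩
    | succ s ih =>
      intro hsi
      have hs : s < i := by omega
      have hslen : s < n := by omega
      have e1 := fold_take_succ (rankingStepF G [] order) [] order hslen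
      have e2 : (ord'.take (s + 1)).foldl (rankingStepF G [] ord') [] =
          rankingStepF G [] ord' ((ord'.take s).foldl (rankingStepF G [] ord') [])
            (order[s]'hslen) := by
        rw [fold_take_succ (rankingStepF G [] ord') [] ord' (show s < ord'.length by omega)]
        congr 1
        exact List.getElem_insertIdx_of_lt hs _
      rw [e1, e2]
      exact step_main hnd hu hi (List.getElem_mem _) (hnd.idxOf_getElem s hslen)
        (ih (by omega))
  have mid : Inv G order ord' ustar i ((order.take i).foldl (rankingStepF G [] order) [])
      ((ord'.take (i + 1)).foldl (rankingStepF G [] ord') []) := by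
    have e2 : (ord'.take (i + 1)).foldl (rankingStepF G [] ord') [] =
        rankingStepF G [] ord' ((ord'.take i).foldl (rankingStepF G [] ord') []) ustar := by
      rw [fold_take_succ (rankingStepF G [] ord') [] ord' (show i < ord'.length by omega)]
      congr 1
      exact List.getElem_insertIdx_self _
    rw [e2]
    exact step_star hnd hu hi (le_refl i) (main1 i (le_refl i))
  have main2 : ∀ k, i + k ≤ n →
      Inv G order ord' ustar (i + k)
        ((order.take (i + k)).foldl (rankingStepF G [] order) [])
        ((ord'.take (i + k + 1)).foldl (rankingStepF G [] ord') []) := by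
    intro k
    induction k with
    | zero => intro _; simpa using mid
    | succ k ih =>
      intro hk
      have hslen : i + k < n := by omega
      have e1 := fold_take_succ (rankingStepF G [] order) [] order hslen
      have e2 : (ord'.take (i + k + 1 + 1)).foldl (rankingStepF G [] ord') [] =
          rankingStepF G [] ord' ((ord'.take (i + k + 1)).foldl (rankingStepF G [] ord') [])
            (order[i + k]'hslen) := by
        rw [fold_take_succ (rankingStepF G [] ord') [] ord'
          (show i + k + 1 < ord'.length by omega)]
        congr 1
        exact List.getElem_insertIdx_add_succ order ustar i k hslen
      have goal := step_main hnd hu hi (List.getElem_mem _)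
        (hnd.idxOf_getElem (i + k) hslen) (ih (by omega))
      rw [← e1, ← e2] at goal
      have harr : i + (k + 1) = i + k + 1 := by omega
      rw [harr]
      exact goal
  have fin0 := main2 (n - i) (by omega)
  have harr2 : i + (n - i) = n := by omega
  rw [harr2] at fin0
  obtain ⟨-, -, hPfin, -⟩ := fin0
  have hA_end : (order.take n).foldl (rankingStepF G [] order) [] = rankingList G order := by
    rw [hn, List.take_length]; rfl
  have hB_end : (ord'.take (n + 1)).foldl (rankingStepF G [] ord') [] = rankingList G ord' := by
    rw [← hlen', List.take_length]; rfl
  rw [hA_end, hB_end] at hPfin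
  obtain ⟨w, hw1, hw2⟩ := hPfin u v hmatch hrank
  exact ⟨w, hw1, hw2⟩
end

section
/- Backup rank bound: Suppose under permutation σ_{-u*} on V \ {u*}, Ranking matches u to v, and u has a backup b (i.e., removing v from the permutation leaves u matched to b under Ranking). Then σ_{-u*}(v) < σ_{-u*}(b). -/
open List

variable {V : Type*}

namespace S13
variable [DecidableEq V] (G : SimpleGraph V) [DecidableRel G.Adj]

/-- clean availability predicate -/
def pr (M : List (V × V)) (x : V) : V → Bool := fun w => decide (G.Adj x w) && !isMatchedL M w

lemma step_eq (O : List V) (M : List (V × V)) (x : V) :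
    rankingStepF G [] O M x =
      if isMatchedL M x = true then M
      else match O.find? (pr G M x) with
        | some w => (x, w) :: M
        | none => M := by
  have hp : (fun w => decide (G.Adj x w) && !(decide (w ∈ ([] : List V))) && !isMatchedL M w)
      = pr G M x := by funext w; simp [pr]
  simp only [rankingStepF, List.mem_nil_iff, false_or, decide_false, Bool.not_false,
    Bool.and_true]
  rw [show (fun w => decide (G.Adj x w) && !isMatchedL M w) = pr G M x from rfl]

lemma isMatchedL_cons (p : V × V) (M : List (V × V)) (x : V) :
    isMatchedL (p :: M) x = (decide (p.1 = x) || decide (p.2 = x) || isMatchedL M x) := by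
  simp [isMatchedL, List.any_cons, Bool.or_assoc]

lemma isMatchedL_append (A B : List (V × V)) (x : V) :
    isMatchedL (A ++ B) x = (isMatchedL A x || isMatchedL B x) := by
  simp [isMatchedL, List.any_append]

lemma matched_of_mem {M : List (V × V)} {p : V × V} {x : V} (hp : p ∈ M)
    (hx : p.1 = x ∨ p.2 = x) : isMatchedL M x = true := by
  simp only [isMatchedL, List.any_eq_true]
  exact ⟨p, hp, by rcases hx with h | h <;> simp [h]⟩

lemma unmatched_forall {M : List (V × V)} {x : V} (h : isMatchedL M x = false) :
    ∀ p ∈ M, p.1 ≠ x ∧ p.2 ≠ x := by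
  intro p hp
  constructor <;> intro he
  · rw [matched_of_mem hp (Or.inl he)] at h; exact absurd h (by simp)
  · rw [matched_of_mem hp (Or.inr he)] at h; exact absurd h (by simp)

lemma isMatchedL_sublist {M M' : List (V × V)} {x : V} (h : M <+ M')
    (hm : isMatchedL M x = true) : isMatchedL M' x = true := by
  simp only [isMatchedL, List.any_eq_true] at hm ⊢
  obtain ⟨p, hp, h2⟩ := hm
  exact ⟨p, h.mem hp, h2⟩

lemma step_suffix (F O : List V) (M : List (V × V)) (x : V) :
    M <:+ rankingStepF G F O M x := by
  unfold rankingStepF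
  split
  · exact suffix_rfl
  · split
    · exact suffix_cons _ _
    · exact suffix_rfl

lemma foldl_suffix (F O : List V) (rest : List V) (M : List (V × V)) :
    M <:+ List.foldl (rankingStepF G F O) M rest := by
  induction rest generalizing M with
  | nil => exact suffix_rfl
  | cons a t ih =>
    simp only [List.foldl_cons]
    exact (step_suffix G F O M a).trans (ih _)

lemma matched_foldl_mono {F O rest : List V} {M : List (V × V)} {x : V}
    (h : isMatchedL M x = true) :
    isMatchedL (List.foldl (rankingStepF G F O) M rest) x = true :=
  isMatchedL_sublist ((foldl_suffix G F O rest M).sublist) h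

/-- validity of a partial matching produced by the algorithm -/
def Valid (M : List (V × V)) : Prop :=
  (∀ p ∈ M, G.Adj p.1 p.2) ∧
    M.Pairwise (fun p q => p.1 ≠ q.1 ∧ p.1 ≠ q.2 ∧ p.2 ≠ q.1 ∧ p.2 ≠ q.2)

lemma valid_step {M : List (V × V)} (h : Valid G M) (F O : List V) (x : V) :
    Valid G (rankingStepF G F O M x) := by
  unfold rankingStepF
  split
  · exact h
  · rename_i hnm
    push_neg at hnm
    cases hf : O.find? (fun w =>
        decide (G.Adj x w) && !(decide (w ∈ F)) && !isMatchedL M w) with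
    | none => exact h
    | some w =>
      have hpw := List.find?_some hf
      simp only [Bool.and_eq_true, Bool.not_eq_true', decide_eq_true_eq] at hpw
      have hadj : G.Adj x w := hpw.1.1
      have hwm : isMatchedL M w = false := hpw.2
      have hxm : isMatchedL M x = false := Bool.not_eq_true _ ▸ hnm.2
      refine ⟨?_, ?_⟩
      · intro p hp
        rcases List.mem_cons.mp hp with rfl | hp
        · exact hadj
        · exact h.1 p hp
      · refine List.pairwise_cons.mpr ⟨?_, h.2⟩
        intro q hq
        have h1 := unmatched_forall hxm q hq
        have h2 := unmatched_forall hwm q hq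
        exact ⟨fun he => h1.1 he.symm, fun he => h1.2 he.symm,
          fun he => h2.1 he.symm, fun he => h2.2 he.symm⟩

lemma valid_foldl {M : List (V × V)} (h : Valid G M) (F O rest : List V) :
    Valid G (List.foldl (rankingStepF G F O) M rest) := by
  induction rest generalizing M with
  | nil => exact h
  | cons a t ih => exact ih (valid_step G h F O a)

set_option linter.unusedSectionVars false in
lemma valid_nil : Valid G ([] : List (V × V)) := ⟨by simp, by simp⟩

lemma valid_ranking (O : List V) : Valid G (rankingList G O) :=
  valid_foldl G (valid_nil G) [] O O

lemma partner_unique {M : List (V × V)} (h : Valid G M) {z b c : V}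
    (hb : (z, b) ∈ M ∨ (b, z) ∈ M) (hc : (z, c) ∈ M ∨ (c, z) ∈ M) : b = c := by
  have hsymm : Symmetric (fun p q : V × V => p.1 ≠ q.1 ∧ p.1 ≠ q.2 ∧ p.2 ≠ q.1 ∧ p.2 ≠ q.2) := by
    intro p q hpq
    exact ⟨fun e => hpq.1 e.symm, fun e => hpq.2.2.1 e.symm,
      fun e => hpq.2.1 e.symm, fun e => hpq.2.2.2 e.symm⟩
  haveI : Std.Symm (fun p q : V × V => p.1 ≠ q.1 ∧ p.1 ≠ q.2 ∧ p.2 ≠ q.1 ∧ p.2 ≠ q.2) :=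
    ⟨fun a b h => hsymm h⟩
  have hforall := h.2.forall
  rcases hb with hb | hb <;> rcases hc with hc | hc
  · by_cases he : ((z, b) : V × V) = (z, c)
    · exact (Prod.mk.injEq _ _ _ _ ▸ he).2
    · exact absurd rfl (hforall hb hc he).1
  · by_cases he : ((z, b) : V × V) = (c, z)
    · have := Prod.mk.injEq _ _ _ _ ▸ he
      exact this.2.trans this.1
    · exact absurd rfl (hforall hb hc he).2.1
  · by_cases he : ((b, z) : V × V) = (z, c)
    · have := Prod.mk.injEq _ _ _ _ ▸ he
      exact this.1.trans this.2
    · exact absurd rfl (hforall hb hc he).2.2.1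
  · by_cases he : ((b, z) : V × V) = (c, z)
    · exact (Prod.mk.injEq _ _ _ _ ▸ he).1
    · exact absurd rfl (hforall hb hc he).2.2.2

lemma mem_endpoints {F O : List V} {M : List (V × V)} {p : V × V} :
    ∀ {rest : List V}, p ∈ List.foldl (rankingStepF G F O) M rest →
      p ∈ M ∨ (p.1 ∈ rest ∧ p.2 ∈ O) := by
  intro rest
  induction rest generalizing M with
  | nil => intro h; exact Or.inl h
  | cons a t ih =>
    intro h
    simp only [List.foldl_cons] at h
    rcases ih h with h1 | h1
    · unfold rankingStepF at h1
      split at h1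
      · exact Or.inl h1
      · rename_i hff
        cases hf : O.find? (fun w =>
            decide (G.Adj a w) && !(decide (w ∈ F)) && !isMatchedL M w) with
        | none => rw [hf] at h1; exact Or.inl h1
        | some w =>
          rw [hf] at h1
          rcases List.mem_cons.mp h1 with rfl | h1
          · exact Or.inr ⟨by simp, List.mem_of_find?_eq_some hf⟩
          · exact Or.inl h1
    · exact Or.inr ⟨List.mem_cons_of_mem _ h1.1, h1.2⟩


section Find
variable {α : Type*} [DecidableEq α]

lemma find?_append_some {A : List α} (B : List α) {p : α → Bool} {w : α}
    (h : A.find? p = some w) : (A ++ B).find? p = some w := by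
  induction A with
  | nil => simp at h
  | cons a t ih =>
    by_cases hpa : p a = true
    · simp only [List.find?_cons, hpa] at h
      simp only [List.cons_append, List.find?_cons, hpa]
      exact h
    · have hpa' : p a = false := by simpa using hpa
      simp only [List.find?_cons, hpa'] at h
      simp only [List.cons_append, List.find?_cons, hpa']
      exact ih h

lemma find?_append_none {A B : List α} {p : α → Bool}
    (h : A.find? p = none) : (A ++ B).find? p = B.find? p := by
  induction A with
  | nil => simp
  | cons a t ih =>
    by_cases hpa : p a = true
    · simp only [List.find?_cons, hpa] at h
      simp at h
    · have hpa' : p a = false := by simpa using hpa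
      simp only [List.find?_cons, hpa'] at h
      simp only [List.cons_append, List.find?_cons, hpa']
      exact ih h

lemma find?_first {l₁ l₂ : List α} {v : α} {p : α → Bool}
    (h : (l₁ ++ v :: l₂).find? p = some v) (hv : v ∉ l₁) :
    ∀ b ∈ l₁, p b = false := by
  induction l₁ with
  | nil => simp
  | cons a t ih =>
    intro b hb
    simp only [List.cons_append, List.find?_cons] at h
    cases hpa : p a with
    | true =>
      rw [hpa] at h
      simp only [Option.some.injEq] at h
      exact absurd (h ▸ List.mem_cons_self) hv
    | false =>
      rw [hpa] at h
      rcases List.mem_cons.mp hb with rfl | hb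
      · exact hpa
      · exact ih h (fun hm => hv (List.mem_cons_of_mem _ hm)) b hb

lemma find?_mono_some {l : List α} {p1 p2 : α → Bool} {w : α}
    (hmono : ∀ y, p1 y = true → p2 y = true)
    (h : l.find? p2 = some w) (hw : p1 w = true) : l.find? p1 = some w := by
  induction l with
  | nil => simp at h
  | cons a t ih =>
    simp only [List.find?_cons] at h ⊢
    cases hpa : p2 a with
    | true =>
      rw [hpa] at h
      simp only [Option.some.injEq] at h
      subst h
      rw [hw]
    | false =>
      rw [hpa] at h
      cases hp1 : p1 a with
      | true => exact absurd (hmono a hp1) (by rw [hpa]; simp)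
      | false => exact ih h

lemma find?_mono_none {l : List α} {p1 p2 : α → Bool}
    (hmono : ∀ y ∈ l, p1 y = true → p2 y = true)
    (h : l.find? p2 = none) : l.find? p1 = none := by
  rw [List.find?_eq_none] at h ⊢
  intro x hx hp
  exact h x hx (hmono x hx hp)

lemma find?_skip {l₁ l₂ : List α} {v : α} {p : α → Bool} (hv : p v = false) :
    (l₁ ++ v :: l₂).find? p = (l₁ ++ l₂).find? p := by
  cases h1 : l₁.find? p with
  | some w => rw [find?_append_some _ h1, find?_append_some _ h1]
  | none => rw [find?_append_none h1, find?_append_none h1, List.find?_cons, hv]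

lemma find?_drop_some {l₁ l₂ : List α} {v w : α} {p : α → Bool}
    (h : (l₁ ++ v :: l₂).find? p = some w) (hw : w ≠ v) :
    (l₁ ++ l₂).find? p = some w := by
  cases h1 : l₁.find? p with
  | some w' =>
    rw [find?_append_some _ h1] at h
    rw [find?_append_some _ h1]
    exact h
  | none =>
    rw [find?_append_none h1] at h
    rw [find?_append_none h1]
    rw [List.find?_cons] at h
    cases hpv : p v with
    | true => rw [hpv] at h; simp only [Option.some.injEq] at h; exact absurd h.symm hw
    | false => rw [hpv] at h; exact h

lemma find?_sub_none {l l' : List α} {p : α → Bool}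
    (h : l.find? p = none) (hsub : ∀ x ∈ l', x ∈ l) : l'.find? p = none := by
  rw [List.find?_eq_none] at h ⊢
  exact fun x hx => h x (hsub x hx)

lemma indexOf_append_not_mem {b : α} {l t : List α} (h : b ∉ l) :
    (l ++ t).idxOf b = l.length + t.idxOf b := by
  induction l with
  | nil => simp
  | cons a s ih =>
    have h' : b ≠ a ∧ b ∉ s := by
      simp only [List.mem_cons, not_or] at h
      exact h
    simp only [List.cons_append, List.idxOf_cons_ne _ (Ne.symm h'.1), ih h'.2, List.length_cons]
    omega

lemma indexOf_v_eq {v : α} {l₁ l₂ : List α} (hv : v ∉ l₁) :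
    (l₁ ++ v :: l₂).idxOf v = l₁.length := by
  rw [indexOf_append_not_mem hv, List.idxOf_cons_self]
  omega

lemma indexOf_gt {b v : α} {l₁ l₂ : List α} (hb : b ∉ l₁) (hbv : b ≠ v) :
    l₁.length < (l₁ ++ v :: l₂).idxOf b := by
  rw [indexOf_append_not_mem hb, List.idxOf_cons_ne _ (Ne.symm hbv)]
  omega

end Find

/-- After a vertex `x` has been processed, `x` or any fixed neighbour `y ∈ O` is matched. -/
lemma neighbor_lemma (O P : List V) (x y : V) (hx : x ∈ P) (hy : y ∈ O) (hadj : G.Adj x y) :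
    isMatchedL (List.foldl (rankingStepF G [] O) [] P) x = true ∨
    isMatchedL (List.foldl (rankingStepF G [] O) [] P) y = true := by
  obtain ⟨P1, P2, rfl⟩ := List.append_of_mem hx
  rw [List.foldl_append, List.foldl_cons]
  set M0 := List.foldl (rankingStepF G [] O) [] P1 with hM0
  suffices h : isMatchedL (rankingStepF G [] O M0 x) x = true ∨
      isMatchedL (rankingStepF G [] O M0 x) y = true by
    rcases h with h | h
    · exact Or.inl (matched_foldl_mono G h)
    · exact Or.inr (matched_foldl_mono G h)
  rw [step_eq]
  by_cases hm : isMatchedL M0 x = true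
  · rw [if_pos hm]; exact Or.inl hm
  · rw [if_neg hm]
    cases hf : O.find? (pr G M0 x) with
    | some w =>
      exact Or.inl (matched_of_mem (List.mem_cons_self) (Or.inl rfl))
    | none =>
      rw [List.find?_eq_none] at hf
      right
      have hthis := hf y hy
      simp only [pr, Bool.and_eq_true, Bool.not_eq_true', decide_eq_true_eq, not_and] at hthis
      have h2 := hthis hadj
      cases h3 : isMatchedL M0 y with
      | false => exact (h2 h3).elim
      | true => rfl

section Main

variable (u v : V) (l₁ l₂ : List V)

/-- the two runs agree and `v` is still unmatched -/
def EQs (M M2 : List (V × V)) : Prop := M2 = M ∧ isMatchedL M v = false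

/-- run 1 contains the extra pair `{u,v}`; otherwise the runs agree -/
def DIVs (M M2 : List (V × V)) : Prop :=
  ∃ A B q, M = A ++ q :: B ∧ M2 = A ++ B ∧ (q = (v, u) ∨ q = (u, v)) ∧
    isMatchedL M2 u = false ∧ isMatchedL M2 v = false

/-- `u` can never be matched in run 2 -/
def STUCKs (M2 : List (V × V)) : Prop :=
  isMatchedL M2 u = false ∧ ∀ w ∈ l₁ ++ l₂, G.Adj u w → isMatchedL M2 w = true

/-- `u` is matched in run 2 to a vertex of large index -/
def FINs (M2 : List (V × V)) : Prop :=
  ∃ b, ((u, b) ∈ M2 ∨ (b, u) ∈ M2) ∧ l₁.length < (l₁ ++ v :: l₂).idxOf b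

variable {G u v l₁ l₂}

lemma div_matched {A B : List (V × V)} {q : V × V} (x : V) :
    isMatchedL (A ++ q :: B) x
      = (isMatchedL (A ++ B) x || (decide (q.1 = x) || decide (q.2 = x))) := by
  rw [isMatchedL_append, isMatchedL_append, isMatchedL_cons]
  cases isMatchedL A x <;> cases isMatchedL B x <;>
    cases h1 : decide (q.1 = x) <;> cases h2 : decide (q.2 = x) <;> simp [h1, h2]

lemma stuck_step (x : V) (hx : x ∈ l₁ ++ l₂) (h : STUCKs G u l₁ l₂ M2) :
    STUCKs G u l₁ l₂ (rankingStepF G [] (l₁ ++ l₂) M2 x) := by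
  obtain ⟨hu2, hN⟩ := h
  rw [step_eq]
  by_cases hm : isMatchedL M2 x = true
  · rw [if_pos hm]; exact ⟨hu2, hN⟩
  · rw [if_neg hm]
    by_cases hxu : x = u
    · subst hxu
      have hnone : (l₁ ++ l₂).find? (pr G M2 x) = none := by
        rw [List.find?_eq_none]
        intro w hw
        simp only [pr, Bool.and_eq_true, Bool.not_eq_true', decide_eq_true_eq, not_and]
        intro hadj hum
        rw [hN w hw hadj] at hum
        exact absurd hum (by simp)
      rw [hnone]
      exact ⟨Bool.not_eq_true _ ▸ hm, hN⟩
    · cases hf : (l₁ ++ l₂).find? (pr G M2 x) with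
      | none => exact ⟨hu2, hN⟩
      | some w =>
        have hpw := List.find?_some hf
        simp only [pr, Bool.and_eq_true, Bool.not_eq_true', decide_eq_true_eq] at hpw
        have hwu : w ≠ u := by
          intro he
          subst he
          have := hN x hx (hpw.1.symm)
          rw [this] at hm
          exact hm rfl
        refine ⟨?_, ?_⟩
        · rw [isMatchedL_cons]
          simp only [decide_eq_true_eq]
          have : ¬ ((x : V) = u) := hxu
          simp [hxu, hwu, hu2]
        · intro w' hw' hadj
          rw [isMatchedL_cons]
          simp [hN w' hw' hadj]

lemma fin_step (x : V) (O : List V) (h : FINs u v l₁ l₂ M2) :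
    FINs u v l₁ l₂ (rankingStepF G [] O M2 x) := by
  obtain ⟨b, hb, hidx⟩ := h
  have hsub := (step_suffix G [] O M2 x).sublist
  refine ⟨b, ?_, hidx⟩
  rcases hb with hb | hb
  · exact Or.inl (hsub.mem hb)
  · exact Or.inr (hsub.mem hb)

/-- EQ transition for a processor `x ≠ v`. -/
lemma step_EQ {Mfin : List (V × V)} {M M2 : List (V × V)} (x : V) (hxv : x ≠ v)
    (hvl₁ : v ∉ l₁) (hvl₂ : v ∉ l₂)
    (HMfin : (u, v) ∈ Mfin ∨ (v, u) ∈ Mfin) (hval : Valid G Mfin)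
    (hnext : rankingStepF G [] (l₁ ++ v :: l₂) M x <:+ Mfin)
    (hEQ : EQs v M M2) :
    EQs v (rankingStepF G [] (l₁ ++ v :: l₂) M x) (rankingStepF G [] (l₁ ++ l₂) M2 x) ∨
    STUCKs G u l₁ l₂ (rankingStepF G [] (l₁ ++ l₂) M2 x) ∨
    FINs u v l₁ l₂ (rankingStepF G [] (l₁ ++ l₂) M2 x) := by
  obtain ⟨heq, hv⟩ := hEQ
  rw [heq]
  rw [step_eq, step_eq]
  by_cases hm : isMatchedL M x = true
  · rw [if_pos hm, if_pos hm]
    exact Or.inl ⟨rfl, hv⟩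
  · rw [if_neg hm, if_neg hm]
    cases hf : (l₁ ++ v :: l₂).find? (pr G M x) with
    | none =>
      have hf2 : (l₁ ++ l₂).find? (pr G M x) = none :=
        find?_sub_none hf (by intro y hy; simp only [List.mem_append, List.mem_cons] at hy ⊢; tauto)
      rw [hf2]
      exact Or.inl ⟨rfl, hv⟩
    | some w =>
      by_cases hwv : w = v
      · rw [hwv] at hf
        -- run 1 matches x to v, so x = u
        have hstep : rankingStepF G [] (l₁ ++ v :: l₂) M x = (x, v) :: M := by
          rw [step_eq, if_neg hm, hf]
        have hpair : (x, v) ∈ Mfin := hnext.sublist.mem (hstep ▸ List.mem_cons_self)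
        have hxu : x = u := partner_unique G hval (Or.inr hpair) HMfin.symm
        subst hxu
        cases hf2 : (l₁ ++ l₂).find? (pr G M x) with
        | none =>
          rw [List.find?_eq_none] at hf2
          refine Or.inr (Or.inl ⟨Bool.not_eq_true _ ▸ hm, ?_⟩)
          intro w' hw' hadj
          have := hf2 w' hw'
          simp only [pr, Bool.and_eq_true, Bool.not_eq_true', decide_eq_true_eq, not_and] at this
          have h2 := this hadj
          cases h3 : isMatchedL M w' with
          | false => exact (h2 h3).elim
          | true => rfl
        | some b =>
          refine Or.inr (Or.inr ⟨b, Or.inl (List.mem_cons_self), ?_⟩)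
          have hbmem := List.mem_of_find?_eq_some hf2
          have hbv : b ≠ v := by
            intro he; subst he
            rcases List.mem_append.mp hbmem with h | h
            · exact hvl₁ h
            · exact hvl₂ h
          have hbl₁ : b ∉ l₁ := by
            intro hbl
            have := find?_first hf hvl₁ b hbl
            rw [List.find?_some hf2] at this
            exact absurd this (by simp)
          exact indexOf_gt hbl₁ hbv
      · have hf2 : (l₁ ++ l₂).find? (pr G M x) = some w := find?_drop_some hf hwv
        rw [hf2]
        refine Or.inl ⟨rfl, ?_⟩
        rw [isMatchedL_cons]
        simp only [decide_eq_true_eq]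
        simp [hxv, hwv, hv]

/-- the step where run 1 processes `v` itself (run 2 does nothing). -/
lemma step_v {Mfin : List (V × V)} {M M2 : List (V × V)}
    (HMfin : (u, v) ∈ Mfin ∨ (v, u) ∈ Mfin) (hval : Valid G Mfin)
    (hnext : rankingStepF G [] (l₁ ++ v :: l₂) M v <:+ Mfin)
    (hEQ : EQs v M M2) :
    EQs v (rankingStepF G [] (l₁ ++ v :: l₂) M v) M2 ∨
    DIVs u v (rankingStepF G [] (l₁ ++ v :: l₂) M v) M2 := by
  obtain ⟨heq, hv⟩ := hEQ
  rw [heq] at *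
  rw [step_eq, if_neg (by rw [hv]; simp)]
  cases hf : (l₁ ++ v :: l₂).find? (pr G M v) with
  | none => exact Or.inl ⟨rfl, hv⟩
  | some w =>
    have hstep : rankingStepF G [] (l₁ ++ v :: l₂) M v = (v, w) :: M := by
      rw [step_eq, if_neg (by rw [hv]; simp), hf]
    have hpair : (v, w) ∈ Mfin := hnext.sublist.mem (hstep ▸ List.mem_cons_self)
    have hwu : w = u := partner_unique G hval (Or.inl hpair) HMfin.symm
    subst hwu
    have hwm : isMatchedL M w = false := by
      have := List.find?_some hf
      simp only [pr, Bool.and_eq_true, Bool.not_eq_true'] at this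
      exact this.2
    exact Or.inr ⟨[], M, (v, w), rfl, rfl, Or.inl rfl, hwm, hv⟩

/-- DIV transition for a processor `x` with `x ∉ l₁`, `x ≠ v`. -/
lemma step_DIV {M M2 : List (V × V)} (x : V) (hxv : x ≠ v) (hxl₁ : x ∉ l₁)
    (hvl₁ : v ∉ l₁) (hvl₂ : v ∉ l₂) (huv : u ≠ v)
    (hnbr : ∀ w ∈ l₁, G.Adj u w → isMatchedL M2 w = true ∨ isMatchedL M2 u = true)
    (hDIV : DIVs u v M M2) :
    DIVs u v (rankingStepF G [] (l₁ ++ v :: l₂) M x) (rankingStepF G [] (l₁ ++ l₂) M2 x) ∨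
    STUCKs G u l₁ l₂ (rankingStepF G [] (l₁ ++ l₂) M2 x) ∨
    FINs u v l₁ l₂ (rankingStepF G [] (l₁ ++ l₂) M2 x) := by
  obtain ⟨A, B, q, rfl, rfl, hq, hu2, hv2⟩ := hDIV
  have hqu : (decide (q.1 = u) || decide (q.2 = u)) = true := by
    rcases hq with rfl | rfl <;> simp
  have hqv : (decide (q.1 = v) || decide (q.2 = v)) = true := by
    rcases hq with rfl | rfl <;> simp
  have hm1u : isMatchedL (A ++ q :: B) u = true := by
    rw [div_matched, hqu]; simp
  have hm1v : isMatchedL (A ++ q :: B) v = true := by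
    rw [div_matched, hqv]; simp
  have hmeq : ∀ y, y ≠ u → y ≠ v → isMatchedL (A ++ q :: B) y = isMatchedL (A ++ B) y := by
    intro y hyu hyv
    rw [div_matched]
    have h1 : decide (q.1 = y) = false := by
      rcases hq with rfl | rfl <;> simp [Ne.symm hyv, Ne.symm hyu]
    have h2 : decide (q.2 = y) = false := by
      rcases hq with rfl | rfl <;> simp [Ne.symm hyv, Ne.symm hyu]
    rw [h1, h2]; simp
  by_cases hxu : x = u
  · subst hxu
    rw [step_eq, step_eq, if_pos hm1u, if_neg (by rw [hu2]; simp)]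
    cases hf2 : (l₁ ++ l₂).find? (pr G (A ++ B) x) with
    | none =>
      rw [List.find?_eq_none] at hf2
      refine Or.inr (Or.inl ⟨hu2, ?_⟩)
      intro w' hw' hadj
      have := hf2 w' hw'
      simp only [pr, Bool.and_eq_true, Bool.not_eq_true', decide_eq_true_eq, not_and] at this
      have h2 := this hadj
      cases h3 : isMatchedL (A ++ B) w' with
      | false => exact (h2 h3).elim
      | true => rfl
    | some b =>
      refine Or.inr (Or.inr ⟨b, Or.inl (List.mem_cons_self), ?_⟩)
      have hpb := List.find?_some hf2
      simp only [pr, Bool.and_eq_true, Bool.not_eq_true', decide_eq_true_eq] at hpb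
      have hbmem := List.mem_of_find?_eq_some hf2
      have hbv : b ≠ v := by
        intro he; subst he
        rcases List.mem_append.mp hbmem with h | h
        · exact hvl₁ h
        · exact hvl₂ h
      have hbl₁ : b ∉ l₁ := by
        intro hbl
        rcases hnbr b hbl hpb.1 with h | h
        · rw [h] at hpb; exact absurd hpb.2 (by simp)
        · rw [h] at hu2; exact absurd hu2 (by simp)
      exact indexOf_gt hbl₁ hbv
  · -- x ∉ {u, v}
    have hmx : isMatchedL (A ++ q :: B) x = isMatchedL (A ++ B) x := hmeq x hxu hxv
    by_cases hm2 : isMatchedL (A ++ B) x = true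
    · rw [step_eq, step_eq, if_pos (hmx ▸ hm2), if_pos hm2]
      exact Or.inl ⟨A, B, q, rfl, rfl, hq, hu2, hv2⟩
    · rw [step_eq, step_eq, if_neg (by rw [hmx]; exact hm2), if_neg hm2]
      have hsubl : (A ++ B) <+ (A ++ q :: B) :=
        List.Sublist.append_left (List.sublist_cons_self q B) A
      have hmono : ∀ y, pr G (A ++ q :: B) x y = true → pr G (A ++ B) x y = true := by
        intro y hy
        simp only [pr, Bool.and_eq_true, Bool.not_eq_true'] at hy ⊢
        refine ⟨hy.1, ?_⟩
        cases h3 : isMatchedL (A ++ B) y with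
        | false => rfl
        | true => rw [isMatchedL_sublist hsubl h3] at hy; exact absurd hy.2 (by simp)
      cases hf2 : (l₁ ++ l₂).find? (pr G (A ++ B) x) with
      | none =>
        have hf1 : (l₁ ++ v :: l₂).find? (pr G (A ++ q :: B) x) = none := by
          rw [List.find?_eq_none] at hf2 ⊢
          intro y hy hp
          by_cases hyv : y = v
          · subst hyv
            simp only [pr, Bool.and_eq_true, Bool.not_eq_true'] at hp
            rw [hm1v] at hp; exact absurd hp.2 (by simp)
          · have hy2 : y ∈ l₁ ++ l₂ := by
              simp only [List.mem_append, List.mem_cons] at hy ⊢; tauto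
            exact hf2 y hy2 (hmono y hp)
        rw [hf1]
        exact Or.inl ⟨A, B, q, rfl, rfl, hq, hu2, hv2⟩
      | some w =>
        have hpw2 := List.find?_some hf2
        by_cases hwu : w = u
        · subst hwu
          refine Or.inr (Or.inr ⟨x, Or.inr (List.mem_cons_self), indexOf_gt hxl₁ hxv⟩)
        · have hwv : w ≠ v := by
            intro he; subst he
            rcases List.mem_append.mp (List.mem_of_find?_eq_some hf2) with h | h
            · exact hvl₁ h
            · exact hvl₂ h
          have hpw1 : pr G (A ++ q :: B) x w = true := by
            simp only [pr, Bool.and_eq_true, Bool.not_eq_true'] at hpw2 ⊢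
            exact ⟨hpw2.1, (hmeq w hwu hwv) ▸ hpw2.2⟩
          have hf1' : (l₁ ++ l₂).find? (pr G (A ++ q :: B) x) = some w :=
            find?_mono_some hmono hf2 hpw1
          have hprv : pr G (A ++ q :: B) x v = false := by
            simp only [pr, hm1v]; simp
          have hf1 : (l₁ ++ v :: l₂).find? (pr G (A ++ q :: B) x) = some w := by
            rw [find?_skip hprv]; exact hf1'
          rw [hf1]
          refine Or.inl ⟨(x, w) :: A, B, q, rfl, rfl, hq, ?_, ?_⟩
          · rw [isMatchedL_cons]
            simp [hxu, hwu, hu2]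
          · rw [isMatchedL_cons]
            simp [hxv, hwv, hv2]

end Main

end S13

/-- Backup rank bound: if Ranking on `σ₋ᵤ*` matches `u` to `v` and, after additionally
removing `v`, Ranking matches `u` to its backup `b`, then `σ₋ᵤ*(v) < σ₋ᵤ*(b)`. -/
theorem stmt13 {V : Type*} [DecidableEq V] (G : SimpleGraph V) [DecidableRel G.Adj]
    (order : List V) (hnd : order.Nodup) (ustar : V) (hu : ustar ∉ order)
    (hall : ∀ x : V, x ≠ ustar → x ∈ order)
    (u v b : V) (hmatch : matchedTo G order u v)
    (hbackup : matchedTo G (order.erase v) u b) :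
    order.idxOf v < order.idxOf b := by
  classical
  -- final matchings and their basic properties
  have hval : S13.Valid G (rankingList G order) := S13.valid_ranking G order
  have HM : (u, v) ∈ rankingList G order ∨ (v, u) ∈ rankingList G order := hmatch
  have hadj : G.Adj u v := by
    rcases HM with h | h
    · exact hval.1 _ h
    · exact (hval.1 _ h).symm
  have huv : u ≠ v := G.ne_of_adj hadj
  have humem : u ∈ order ∧ v ∈ order := by
    rcases HM with h | h
    · have := S13.mem_endpoints G (rest := order) (M := []) (F := []) (O := order) h
      simpa using this
    · have := S13.mem_endpoints G (rest := order) (M := []) (F := []) (O := order) h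
      constructor
      · rcases this with h' | h'
        · simp at h'
        · exact h'.2
      · rcases this with h' | h'
        · simp at h'
        · exact h'.1
  obtain ⟨l₁, l₂, hvl₁, horder, herase⟩ := List.exists_erase_eq humem.2
  rw [horder] at hnd HM hval hbackup ⊢
  rw [horder] at herase
  rw [herase] at hbackup
  have hvl₂ : v ∉ l₂ := by
    have h1 := hnd.of_append_right
    exact (List.nodup_cons.mp h1).1
  have hdisj : List.Disjoint l₁ (v :: l₂) := List.disjoint_of_nodup_append hnd
  have humem2 : u ∈ l₁ ++ l₂ := by
    have h1 : u ∈ l₁ ++ v :: l₂ := horder ▸ humem.1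
    simp only [List.mem_append, List.mem_cons] at h1 ⊢
    rcases h1 with h | h | h
    · exact Or.inl h
    · exact absurd h huv
    · exact Or.inr h
  have HB : (u, b) ∈ rankingList G (l₁ ++ l₂) ∨ (b, u) ∈ rankingList G (l₁ ++ l₂) := hbackup
  have hval2 : S13.Valid G (rankingList G (l₁ ++ l₂)) := S13.valid_ranking G (l₁ ++ l₂)
  -- abbreviations
  set f1 := rankingStepF G [] (l₁ ++ v :: l₂) with hf1
  set f2 := rankingStepF G [] (l₁ ++ l₂) with hf2
  have hMfin : rankingList G (l₁ ++ v :: l₂) = List.foldl f1 [] (l₁ ++ v :: l₂) := rfl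
  have hM2fin : rankingList G (l₁ ++ l₂) = List.foldl f2 [] (l₁ ++ l₂) := rfl
  -- phase 1 : both runs process a prefix of l₁ in lockstep
  have phase1 : ∀ P : List V, P <+: l₁ →
      (S13.EQs v (List.foldl f1 [] P) (List.foldl f2 [] P) ∨
       S13.STUCKs G u l₁ l₂ (List.foldl f2 [] P) ∨
       S13.FINs u v l₁ l₂ (List.foldl f2 [] P)) := by
    intro P
    induction P using List.reverseRecOn with
    | nil => exact fun _ => Or.inl ⟨rfl, rfl⟩
    | append_singleton P x ih =>
      intro hpre
      have hpre' : P <+: l₁ := (List.prefix_append P [x]).trans hpre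
      have hx : x ∈ l₁ := hpre.subset (by simp)
      have hxv : x ≠ v := fun he => hvl₁ (he ▸ hx)
      obtain ⟨t, ht⟩ := hpre
      have h0 : List.foldl f1 [] (P ++ [x]) = f1 (List.foldl f1 [] P) x := by
        rw [List.foldl_append, List.foldl_cons, List.foldl_nil]
      have h0' : List.foldl f2 [] (P ++ [x]) = f2 (List.foldl f2 [] P) x := by
        rw [List.foldl_append, List.foldl_cons, List.foldl_nil]
      have hnext : f1 (List.foldl f1 [] P) x <:+ rankingList G (l₁ ++ v :: l₂) := by
        have h2 : List.foldl f1 (List.foldl f1 [] (P ++ [x])) (t ++ v :: l₂)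
            = List.foldl f1 [] (l₁ ++ v :: l₂) := by
          rw [← List.foldl_append]
          congr 1
          rw [← List.append_assoc, ht]
        rw [hMfin, ← h2, h0]
        exact S13.foldl_suffix G [] _ _ _
      rw [h0, h0']
      rcases ih hpre' with hEQ | hS | hF
      · exact S13.step_EQ x hxv hvl₁ hvl₂ HM hval hnext hEQ
      · exact Or.inr (Or.inl (S13.stuck_step x (List.mem_append.mpr (Or.inl hx)) hS))
      · exact Or.inr (Or.inr (S13.fin_step x _ hF))
  -- phase 2 : run 1 has processed v; both runs process a prefix of l₂
  have phase2 : ∀ Q : List V, Q <+: l₂ →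
      (S13.EQs v (List.foldl f1 [] (l₁ ++ v :: Q)) (List.foldl f2 [] (l₁ ++ Q)) ∨
       S13.DIVs u v (List.foldl f1 [] (l₁ ++ v :: Q)) (List.foldl f2 [] (l₁ ++ Q)) ∨
       S13.STUCKs G u l₁ l₂ (List.foldl f2 [] (l₁ ++ Q)) ∨
       S13.FINs u v l₁ l₂ (List.foldl f2 [] (l₁ ++ Q))) := by
    intro Q
    induction Q using List.reverseRecOn with
    | nil =>
      intro _
      have h1 : l₁ ++ v :: ([] : List V) = l₁ ++ [v] := rfl
      have h2 : l₁ ++ ([] : List V) = l₁ := by simp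
      rw [h1, h2, List.foldl_append, List.foldl_cons, List.foldl_nil]
      have hnext : f1 (List.foldl f1 [] l₁) v <:+ rankingList G (l₁ ++ v :: l₂) := by
        rw [hMfin, List.foldl_append, List.foldl_cons]
        exact S13.foldl_suffix G [] _ _ _
      rcases phase1 l₁ List.prefix_rfl with hEQ | hS | hF
      · rcases S13.step_v HM hval hnext hEQ with h | h
        · exact Or.inl h
        · exact Or.inr (Or.inl h)
      · exact Or.inr (Or.inr (Or.inl hS))
      · exact Or.inr (Or.inr (Or.inr hF))
    | append_singleton Q x ih =>
      intro hpre
      have hpre' : Q <+: l₂ := (List.prefix_append Q [x]).trans hpre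
      have hx : x ∈ l₂ := hpre.subset (by simp)
      have hxv : x ≠ v := fun he => hvl₂ (he ▸ hx)
      have hxl₁ : x ∉ l₁ := fun hc => hdisj hc (List.mem_cons_of_mem v hx)
      obtain ⟨t, ht⟩ := hpre
      have e1 : l₁ ++ v :: (Q ++ [x]) = (l₁ ++ v :: Q) ++ [x] := by simp
      have e2 : l₁ ++ (Q ++ [x]) = (l₁ ++ Q) ++ [x] := by simp
      have g1 : List.foldl f1 [] ((l₁ ++ v :: Q) ++ [x]) = f1 (List.foldl f1 [] (l₁ ++ v :: Q)) x := by
        rw [List.foldl_append, List.foldl_cons, List.foldl_nil]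
      have g2 : List.foldl f2 [] ((l₁ ++ Q) ++ [x]) = f2 (List.foldl f2 [] (l₁ ++ Q)) x := by
        rw [List.foldl_append, List.foldl_cons, List.foldl_nil]
      have hnext : f1 (List.foldl f1 [] (l₁ ++ v :: Q)) x <:+ rankingList G (l₁ ++ v :: l₂) := by
        have h2 : List.foldl f1 (List.foldl f1 [] ((l₁ ++ v :: Q) ++ [x])) t
            = List.foldl f1 [] (l₁ ++ v :: l₂) := by
          rw [← List.foldl_append]
          congr 1
          rw [← ht]; simp
        rw [hMfin, ← h2, g1]
        exact S13.foldl_suffix G [] _ _ _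
      rw [e1, e2, g1, g2]
      rcases ih hpre' with hEQ | hD | hS | hF
      · rcases S13.step_EQ x hxv hvl₁ hvl₂ HM hval hnext hEQ with h | h | h
        · exact Or.inl h
        · exact Or.inr (Or.inr (Or.inl h))
        · exact Or.inr (Or.inr (Or.inr h))
      · have hnbr : ∀ w ∈ l₁, G.Adj u w →
            isMatchedL (List.foldl f2 [] (l₁ ++ Q)) w = true ∨
            isMatchedL (List.foldl f2 [] (l₁ ++ Q)) u = true := by
          intro w hw hadjw
          exact S13.neighbor_lemma G (l₁ ++ l₂) (l₁ ++ Q) w u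
            (List.mem_append.mpr (Or.inl hw)) humem2 hadjw.symm
        rcases S13.step_DIV x hxv hxl₁ hvl₁ hvl₂ huv hnbr hD with h | h | h
        · exact Or.inr (Or.inl h)
        · exact Or.inr (Or.inr (Or.inl h))
        · exact Or.inr (Or.inr (Or.inr h))
      · exact Or.inr (Or.inr (Or.inl (S13.stuck_step x (List.mem_append.mpr (Or.inr hx)) hS)))
      · exact Or.inr (Or.inr (Or.inr (S13.fin_step x _ hF)))
  -- conclude
  have hfinal := phase2 l₂ List.prefix_rfl
  rw [← hMfin, ← hM2fin] at hfinal
  have hmatchedv : isMatchedL (rankingList G (l₁ ++ v :: l₂)) v = true := by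
    rcases HM with h | h
    · exact S13.matched_of_mem h (Or.inr rfl)
    · exact S13.matched_of_mem h (Or.inl rfl)
  have hmatchedu2 : isMatchedL (rankingList G (l₁ ++ l₂)) u = true := by
    rcases HB with h | h
    · exact S13.matched_of_mem h (Or.inl rfl)
    · exact S13.matched_of_mem h (Or.inr rfl)
  rcases hfinal with ⟨_, hv0⟩ | ⟨_, _, _, _, hM2, _, hu2, _⟩ | ⟨hu2, _⟩ | ⟨b₀, hb₀, hidx⟩
  · rw [hmatchedv] at hv0; exact absurd hv0 (by simp)
  · rw [hmatchedu2] at hu2; exact absurd hu2 (by simp)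
  · rw [hmatchedu2] at hu2; exact absurd hu2 (by simp)
  · have hbb : b = b₀ := S13.partner_unique G hval2 HB hb₀
    rw [S13.indexOf_v_eq hvl₁, hbb]
    exact hidx
end
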